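/- arXiv:1301.2000 — 6 statements merged into one kernel-verified Lean document; each statement's English description precedes it below -/
import Mathlib

section
/- Let A be a real p-Banach algebra with unit such that ‖a‖^(1/p) ≤ m·r(a) for all a ∈ A, where m > 0 is a constant and r denotes the spectral radius. Then for every nonzero ℝ-linear multiplicative map x : A → ℍ into the quaternions and every a ∈ A, one has |x(a)| ≤ ‖a‖^(1/p), where |·| is the usual norm on ℍ. -/
open scoped Quaternion

/-- The spectrum of an element of a unital real algebra:
Sp(a) = {s+it ∈ ℂ : (a − s·1)² + t²·1 is not invertible in A}. -/
def realSpectrum {A : Type*} [Ring A] [Algebra ℝ A] (a : A) : Set ℂ :=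
  {z : ℂ | ¬ IsUnit ((a - algebraMap ℝ A z.re) ^ 2 + algebraMap ℝ A (z.im ^ 2))}

/-- The spectral radius r(a) = sup{|λ| : λ ∈ Sp(a)}. -/
noncomputable def realSpectralRadius {A : Type*} [Ring A] [Algebra ℝ A] (a : A) : ℝ :=
  sSup {x : ℝ | ∃ z ∈ realSpectrum a, x = ‖z‖}

/-- |x(a)| ≤ ‖a‖^(1/p) for every nonzero ℝ-linear multiplicative x : A → ℍ. -/
theorem stmt4 {A : Type*} [Ring A] [Algebra ℝ A] [MetricSpace A] [CompleteSpace A]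
    {p : ℝ} (hp0 : 0 < p) (hp1 : p ≤ 1)
    (nrm : A → ℝ)
    (h_add : ∀ a b : A, nrm (a + b) ≤ nrm a + nrm b)
    (h_smul : ∀ (α : ℝ) (a : A), nrm (α • a) = |α| ^ p * nrm a)
    (h_mul : ∀ a b : A, nrm (a * b) ≤ nrm a * nrm b)
    (h_zero : ∀ a : A, nrm a = 0 → a = 0)
    (h_dist : ∀ a b : A, dist a b = nrm (a - b))
    {m : ℝ} (hm : 0 < m)
    (h_spec : ∀ a : A, nrm a ^ (1 / p) ≤ m * realSpectralRadius a) :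
    ∀ x : A →ₗ[ℝ] ℍ[ℝ], (∀ b c : A, x (b * c) = x b * x c) → x ≠ 0 →
      ∀ a : A, ‖x a‖ ≤ nrm a ^ (1 / p) := by
  intro x hx hxne a
  -- basic norm facts
  have hnn : ∀ b : A, 0 ≤ nrm b := by
    intro b; have := dist_nonneg (x := b) (y := 0); rwa [h_dist, sub_zero] at this
  have hn0 : nrm (0 : A) = 0 := by
    have := h_dist 0 0; rwa [dist_self, sub_zero, eq_comm] at this
  have hneg : ∀ b : A, nrm (-b) = nrm b := by
    intro b
    have := h_smul (-1) b
    simpa using this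
  have hsub : ∀ b c : A, nrm (b - c) ≤ nrm b + nrm c := by
    intro b c
    calc nrm (b - c) = nrm (b + -c) := by rw [sub_eq_add_neg]
    _ ≤ nrm b + nrm (-c) := h_add _ _
    _ = nrm b + nrm c := by rw [hneg]
  -- x is unital
  have hx1 : x 1 = 1 := by
    obtain ⟨a₀, ha₀⟩ : ∃ a₀ : A, x a₀ ≠ 0 := by
      by_contra h
      push_neg at h
      exact hxne (LinearMap.ext fun b => by simp [h b])
    have : x a₀ * x 1 = x a₀ * 1 := by rw [← hx, mul_one, mul_one]
    exact mul_left_cancel₀ ha₀ this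
  haveI : Nontrivial A := by
    refine ⟨1, 0, fun h => ?_⟩
    have : (1 : ℍ[ℝ]) = 0 := by rw [← hx1, h, map_zero]
    exact one_ne_zero this
  -- Neumann series: nrm c < 1 → 1 - c is a unit
  have hUnit : ∀ c : A, nrm c < 1 → IsUnit (1 - c) := by
    intro c hc
    set N₁ : ℝ := max 1 (nrm 1) with hN₁
    have hq0 : 0 ≤ nrm c := hnn c
    have hpowc : ∀ k : ℕ, nrm (c ^ k) ≤ N₁ * nrm c ^ k := by
      intro k
      induction k with
      | zero =>
        rw [pow_zero, pow_zero, mul_one]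
        exact le_max_right 1 (nrm 1)
      | succ k ih =>
        calc nrm (c ^ (k + 1)) = nrm (c ^ k * c) := by rw [pow_succ]
        _ ≤ nrm (c ^ k) * nrm c := h_mul _ _
        _ ≤ (N₁ * nrm c ^ k) * nrm c := mul_le_mul_of_nonneg_right ih hq0
        _ = N₁ * nrm c ^ (k + 1) := by ring
    set S : ℕ → A := fun n => ∑ k ∈ Finset.range n, c ^ k with hS
    have hcau : CauchySeq S := by
      refine cauchySeq_of_le_geometric (nrm c) N₁ hc fun n => ?_
      have : S n - S (n + 1) = -(c ^ n) := by
        rw [hS]; simp [Finset.sum_range_succ]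
      rw [h_dist, this, hneg]
      exact hpowc n
    obtain ⟨s, hs⟩ := cauchySeq_tendsto_of_complete hcau
    have hml : ∀ n, S n * (1 - c) = 1 - c ^ n := by
      intro n
      have h := geom_sum_mul c n
      rw [show (1 : A) - c = -(c - 1) from (neg_sub c 1).symm, mul_neg]
      rw [show S n = ∑ i ∈ Finset.range n, c ^ i from rfl, h, neg_sub]
    have hmr : ∀ n, (1 - c) * S n = 1 - c ^ n := by
      intro n
      have h := mul_geom_sum c n
      rw [show (1 : A) - c = -(c - 1) from (neg_sub c 1).symm, neg_mul]
      rw [show S n = ∑ i ∈ Finset.range n, c ^ i from rfl, h, neg_sub]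
    have hlim2 : Filter.Tendsto (fun n => 1 - c ^ n) Filter.atTop (nhds (1 : A)) := by
      rw [tendsto_iff_dist_tendsto_zero]
      apply squeeze_zero (fun n => dist_nonneg) (g := fun n => N₁ * nrm c ^ n)
      · intro n
        have : (1 : A) - c ^ n - 1 = -(c ^ n) := by abel
        rw [h_dist, this, hneg]
        exact hpowc n
      · simpa using (tendsto_pow_atTop_nhds_zero_of_lt_one hq0 hc).const_mul N₁
    have hdistS : Filter.Tendsto (fun n => dist (S n) s) Filter.atTop (nhds 0) :=
      tendsto_iff_dist_tendsto_zero.1 hs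
    have key : ∀ d : A, Filter.Tendsto (fun n => dist (S n * d) (s * d)) Filter.atTop (nhds 0)
        ∧ ∀ n, S n * d - s * d = (S n - s) * d := by
      intro d
      constructor
      · apply squeeze_zero (fun n => dist_nonneg) (g := fun n => dist (S n) s * nrm d)
        · intro n
          rw [h_dist, ← sub_mul, h_dist]
          exact h_mul _ _
        · simpa using hdistS.mul_const (nrm d)
      · intro n; rw [sub_mul]
    have hlimL : Filter.Tendsto (fun n => S n * (1 - c)) Filter.atTop (nhds (s * (1 - c))) := by
      rw [tendsto_iff_dist_tendsto_zero]
      exact (key (1 - c)).1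
    have hlimR : Filter.Tendsto (fun n => (1 - c) * S n) Filter.atTop (nhds ((1 - c) * s)) := by
      rw [tendsto_iff_dist_tendsto_zero]
      apply squeeze_zero (fun n => dist_nonneg) (g := fun n => nrm (1 - c) * dist (S n) s)
      · intro n
        rw [h_dist, ← mul_sub, h_dist]
        exact h_mul _ _
      · simpa using hdistS.const_mul (nrm (1 - c))
    have e1 : s * (1 - c) = 1 := by
      refine tendsto_nhds_unique ?_ hlim2
      simpa only [hml] using hlimL
    have e2 : (1 - c) * s = 1 := by
      refine tendsto_nhds_unique ?_ hlim2
      simpa only [hmr] using hlimR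
    exact ⟨⟨1 - c, s, e2, e1⟩, rfl⟩
  -- key pointwise bound
  have hKey : ∀ b : A, ‖x b‖ ^ p ≤ 4 * nrm b := by
    intro b
    by_contra hlt
    push_neg at hlt
    set q : ℍ[ℝ] := x b with hq
    have hqn0 : q ≠ 0 := by
      intro h0
      rw [h0, norm_zero, Real.zero_rpow hp0.ne'] at hlt
      have := hnn b; linarith
    set K : ℝ := ‖q‖ ^ p with hK
    have hqpos : (0:ℝ) < ‖q‖ := norm_pos_iff.2 hqn0
    have hKpos : 0 < K := Real.rpow_pos_of_pos hqpos p
    have hb4 : nrm b < K / 4 := by rw [hK]; linarith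
    set s : ℝ := q.re with hsdef
    set R : ℝ := Quaternion.normSq q with hR
    have hRpos : 0 < R := lt_of_le_of_ne (Quaternion.normSq_nonneg) (Ne.symm (Quaternion.normSq_ne_zero.2 hqn0))
    have hRKK : R = ‖q‖ * ‖q‖ := Quaternion.normSq_eq_norm_mul_self q
    have hRp : R ^ p = K * K := by
      rw [hRKK, Real.mul_rpow (norm_nonneg q) (norm_nonneg q)]
    have hsq : |s| ≤ ‖q‖ := by
      have h2 : s ^ 2 ≤ ‖q‖ * ‖q‖ := by
        rw [← hRKK, hR, Quaternion.normSq_def']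
        nlinarith [sq_nonneg q.imI, sq_nonneg q.imJ, sq_nonneg q.imK]
      nlinarith [abs_nonneg s, norm_nonneg q, sq_abs s]
    have h2sp : |2 * s| ^ p ≤ 2 * K := by
      have h1 : |2 * s| ≤ 2 * ‖q‖ := by rw [abs_mul]; simp; linarith [hsq]
      have h2 : |2 * s| ^ p ≤ (2 * ‖q‖) ^ p :=
        Real.rpow_le_rpow (abs_nonneg _) h1 hp0.le
      have h3 : (2 * ‖q‖) ^ p = 2 ^ p * K :=
        Real.mul_rpow (by norm_num) (norm_nonneg q)
      have h4 : (2:ℝ) ^ p ≤ 2 := by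
        calc (2:ℝ) ^ p ≤ (2:ℝ) ^ (1:ℝ) :=
          Real.rpow_le_rpow_of_exponent_le one_le_two hp1
        _ = 2 := Real.rpow_one 2
      calc |2 * s| ^ p ≤ 2 ^ p * K := by rw [← h3]; exact h2
      _ ≤ 2 * K := mul_le_mul_of_nonneg_right h4 hKpos.le
    set c : A := R⁻¹ • ((2 * s) • b - b * b) with hc
    have hnc : nrm c < 1 := by
      have h1 : nrm c = (R ^ p)⁻¹ * nrm ((2 * s) • b - b * b) := by
        rw [hc, h_smul, abs_of_pos (inv_pos.2 hRpos), Real.inv_rpow hRpos.le]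
      have h2 : nrm ((2 * s) • b - b * b) ≤ 2 * K * nrm b + nrm b * nrm b := by
        calc nrm ((2 * s) • b - b * b) ≤ nrm ((2 * s) • b) + nrm (b * b) := hsub _ _
        _ ≤ |2 * s| ^ p * nrm b + nrm b * nrm b := by
            gcongr
            · rw [h_smul]
            · exact h_mul b b
        _ ≤ 2 * K * nrm b + nrm b * nrm b := by
            gcongr
            exact hnn b
      rw [h1, hRp]
      have hKK : (0:ℝ) < K * K := by positivity
      rw [inv_mul_lt_iff₀ hKK]
      have hbnn := hnn b
      nlinarith
    have hu : IsUnit (1 - c) := hUnit c hnc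
    -- b' = R • (1 - c)
    have hb' : b * b - (2 * s) • b + R • (1 : A) = R • (1 - c) := by
      rw [smul_sub, hc, smul_smul, mul_inv_cancel₀ hRpos.ne', one_smul]
      abel
    -- x of b' is zero
    have hxb' : x (b * b - (2 * s) • b + R • (1 : A)) = 0 := by
      have : x (b * b - (2 * s) • b + R • (1 : A))
          = q * q - (2 * s) • q + R • (1 : ℍ[ℝ]) := by
        simp [map_add, map_sub, map_smul, hx, hx1, hq]
      rw [this, hsdef, hR]
      ext <;> simp [Quaternion.normSq_def'] <;> ring
    -- but b' is a unit
    have hub' : IsUnit (b * b - (2 * s) • b + R • (1 : A)) := by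
      rw [hb']
      obtain ⟨u, hu'⟩ := hu
      refine ⟨⟨R • (1 - c), R⁻¹ • (↑u⁻¹ : A), ?_, ?_⟩, rfl⟩
      · rw [smul_mul_smul_comm, mul_inv_cancel₀ hRpos.ne', ← hu', u.mul_inv, one_smul]
      · rw [smul_mul_smul_comm, inv_mul_cancel₀ hRpos.ne', ← hu', u.inv_mul, one_smul]
    obtain ⟨u, hu'⟩ := hub'
    have : (0 : ℍ[ℝ]) * x (↑u⁻¹ : A) = 1 := by
      rw [← hxb', ← hx, ← hu', u.mul_inv, hx1]
    simp at this
  -- iterate the bound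
  have hxnorm : ‖x a‖ ^ p ≤ nrm a := by
    rcases eq_or_lt_of_le (hnn a) with h0 | hpos
    · have ha0 : a = 0 := h_zero a h0.symm
      rw [ha0, map_zero, norm_zero, Real.zero_rpow hp0.ne', hn0]
    · by_contra hgt
      push_neg at hgt
      set r : ℝ := ‖x a‖ ^ p / nrm a with hr
      have hr1 : 1 < r := (one_lt_div hpos).2 hgt
      obtain ⟨n, hn⟩ := pow_unbounded_of_one_lt (4 : ℝ) hr1
      have hn' : 4 < r ^ (n + 1) :=
        lt_of_lt_of_le hn (pow_le_pow_right₀ hr1.le (Nat.le_succ n))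
      set N := n + 1 with hN
      -- x (a^N) = (x a)^N
      have hxpow : ∀ k : ℕ, x (a ^ (k + 1)) = (x a) ^ (k + 1) := by
        intro k
        induction k with
        | zero => simp
        | succ k ih => rw [pow_succ, hx, ih, ← pow_succ]
      have hnpow : ∀ k : ℕ, nrm (a ^ (k + 1)) ≤ nrm a ^ (k + 1) := by
        intro k
        induction k with
        | zero => simp
        | succ k ih =>
          calc nrm (a ^ (k + 2)) = nrm (a ^ (k + 1) * a) := by rw [pow_succ]
          _ ≤ nrm (a ^ (k + 1)) * nrm a := h_mul _ _
          _ ≤ nrm a ^ (k + 1) * nrm a := mul_le_mul_of_nonneg_right ih (hnn a)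
          _ = nrm a ^ (k + 2) := by ring
      have hb := hKey (a ^ N)
      rw [hN, hxpow n, norm_pow] at hb
      have he : (‖x a‖ ^ (n + 1) : ℝ) ^ p = (‖x a‖ ^ p) ^ (n + 1) := by
        rw [← Real.rpow_natCast ‖x a‖ (n + 1), ← Real.rpow_natCast (‖x a‖ ^ p) (n + 1),
          ← Real.rpow_mul (norm_nonneg _), ← Real.rpow_mul (norm_nonneg _), mul_comm]
      rw [he] at hb
      have hb2 : (‖x a‖ ^ p) ^ (n + 1) ≤ 4 * nrm a ^ (n + 1) :=
        le_trans hb (by have := hnpow n; linarith)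
      have : r ^ (n + 1) ≤ 4 := by
        rw [hr, div_pow, div_le_iff₀ (by positivity)]
        calc (‖x a‖ ^ p) ^ (n + 1) ≤ 4 * nrm a ^ (n + 1) := hb2
        _ = 4 * nrm a ^ (n + 1) := rfl
      linarith
  -- conclude
  have h1 : ‖x a‖ = (‖x a‖ ^ p) ^ (1 / p) := by
    rw [← Real.rpow_mul (norm_nonneg _), mul_one_div_cancel hp0.ne', Real.rpow_one]
  rw [h1]
  exact Real.rpow_le_rpow (Real.rpow_nonneg (norm_nonneg _) p) hxnorm (by positivity)
end

section
/- Let A be a real p-Banach algebra with unit such that ‖a‖^(1/p) ≤ m·r(a) for all a ∈ A, where m > 0 is a constant and r denotes the spectral radius. Let X(A) be the set of nonzero ℝ-linear multiplicative maps x : A → ℍ, equipped with the topology of pointwise convergence (the subspace topology inherited from the product ∏_{a ∈ A} ℍ). Then X(A) is a compact Hausdorff space. -/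
open scoped Quaternion

theorem aux_unit {A : Type*} [Ring A] [Algebra ℝ A] [MetricSpace A] [CompleteSpace A]
    {p : ℝ} (hp0 : 0 < p)
    (nrm : A → ℝ)
    (h_add : ∀ a b : A, nrm (a + b) ≤ nrm a + nrm b)
    (h_smul : ∀ (α : ℝ) (a : A), nrm (α • a) = |α| ^ p * nrm a)
    (h_mul : ∀ a b : A, nrm (a * b) ≤ nrm a * nrm b)
    (h_zero : ∀ a : A, nrm a = 0 → a = 0)
    (h_dist : ∀ a b : A, dist a b = nrm (a - b))
    {c : A} (hc : nrm c < 1) : IsUnit (1 - c) := by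
  have hnonneg : ∀ a : A, 0 ≤ nrm a := by
    intro a
    have := dist_nonneg (x := a) (y := 0)
    rwa [h_dist, sub_zero] at this
  have hneg : ∀ a : A, nrm (-a) = nrm a := by
    intro a
    rw [← neg_one_smul ℝ a, h_smul]
    simp
  by_cases h1 : nrm (1 : A) = 0
  · have h10 : (1 : A) = 0 := h_zero _ h1
    have hall : ∀ y : A, y = 0 := fun y => by rw [← mul_one y, h10, mul_zero]
    exact ⟨⟨1 - c, 1, by rw [hall ((1 - c) * 1), hall 1], by rw [hall (1 * (1 - c)), hall 1]⟩, rfl⟩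
  have hB : 0 < nrm (1 : A) := lt_of_le_of_ne (hnonneg 1) (Ne.symm h1)
  set B := nrm (1 : A) with hBdef
  set q := nrm c with hqdef
  have hq0 : 0 ≤ q := hnonneg c
  have key : ∀ n : ℕ, nrm (c ^ n) ≤ B * q ^ n := by
    intro n
    induction n with
    | zero => simp [hBdef]
    | succ n ih =>
      calc nrm (c ^ (n + 1)) = nrm (c ^ n * c) := by rw [pow_succ]
        _ ≤ nrm (c ^ n) * q := h_mul _ _
        _ ≤ (B * q ^ n) * q := mul_le_mul_of_nonneg_right ih hq0
        _ = B * q ^ (n + 1) := by ring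
  set S : ℕ → A := fun n => ∑ i ∈ Finset.range n, c ^ i with hSdef
  have hcauchy : CauchySeq S := by
    apply cauchySeq_of_le_geometric q B hc
    intro n
    rw [h_dist]
    have : S n - S (n + 1) = -(c ^ n) := by
      rw [hSdef]; simp [Finset.sum_range_succ]
    rw [this, hneg]
    exact key n
  obtain ⟨s, hs⟩ := cauchySeq_tendsto_of_complete hcauchy
  have htel : ∀ n, S n * (1 - c) = 1 - c ^ n := by
    intro n
    rw [← neg_sub c 1, mul_neg, geom_sum_mul, neg_sub]
  have htel' : ∀ n, (1 - c) * S n = 1 - c ^ n := by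
    intro n
    rw [← neg_sub c 1, neg_mul, mul_geom_sum, neg_sub]
  have hdistS : Filter.Tendsto (fun n => dist s (S n)) Filter.atTop (nhds 0) := by
    simpa [dist_comm] using tendsto_iff_dist_tendsto_zero.mp hs
  have hpow : Filter.Tendsto (fun n : ℕ => B * q ^ n) Filter.atTop (nhds 0) := by
    simpa using (tendsto_pow_atTop_nhds_zero_of_lt_one hq0 hc).const_mul B
  have main : ∀ (u v : A), (∀ n, dist u v ≤ dist s (S n) * nrm (1 - c) + B * q ^ n) → u = v := by
    intro u v hb
    have h2 : Filter.Tendsto (fun n => dist s (S n) * nrm (1 - c) + B * q ^ n)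
        Filter.atTop (nhds 0) := by
      simpa using (hdistS.mul_const (nrm (1 - c))).add hpow
    have hle : dist u v ≤ 0 := le_of_tendsto_of_tendsto' tendsto_const_nhds h2 hb
    exact dist_le_zero.mp hle
  have hright : s * (1 - c) = 1 := by
    apply main
    intro n
    calc dist (s * (1 - c)) 1
        ≤ dist (s * (1 - c)) (S n * (1 - c)) + dist (S n * (1 - c)) 1 := dist_triangle _ _ _
      _ = nrm ((s - S n) * (1 - c)) + nrm (c ^ n) := by
          rw [h_dist, h_dist, ← sub_mul, htel n, sub_sub_cancel_left, hneg]
      _ ≤ dist s (S n) * nrm (1 - c) + B * q ^ n := by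
          refine add_le_add ?_ (key n)
          rw [h_dist]
          exact h_mul _ _
  have hleft : (1 - c) * s = 1 := by
    apply main
    intro n
    calc dist ((1 - c) * s) 1
        ≤ dist ((1 - c) * s) ((1 - c) * S n) + dist ((1 - c) * S n) 1 := dist_triangle _ _ _
      _ = nrm ((1 - c) * (s - S n)) + nrm (c ^ n) := by
          rw [h_dist, h_dist, ← mul_sub, htel' n, sub_sub_cancel_left, hneg]
      _ ≤ dist s (S n) * nrm (1 - c) + B * q ^ n := by
          refine add_le_add ?_ (key n)
          rw [h_dist]
          calc nrm ((1 - c) * (s - S n)) ≤ nrm (1 - c) * nrm (s - S n) := h_mul _ _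
            _ = nrm (s - S n) * nrm (1 - c) := mul_comm _ _
  exact ⟨⟨1 - c, s, hleft, hright⟩, rfl⟩

theorem quat_ident (q : ℍ[ℝ]) :
    (q - q.re • (1:ℍ[ℝ]))^2 + (Quaternion.normSq q - q.re * q.re) • (1:ℍ[ℝ]) = 0 := by
  ext <;> simp [Quaternion.normSq_def', pow_two, Quaternion.re_mul, Quaternion.imI_mul,
    Quaternion.imJ_mul, Quaternion.imK_mul] <;> ring

theorem aux_bound {A : Type*} [Ring A] [Algebra ℝ A] [MetricSpace A] [CompleteSpace A]
    {p : ℝ} (hp0 : 0 < p)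
    (nrm : A → ℝ)
    (h_add : ∀ a b : A, nrm (a + b) ≤ nrm a + nrm b)
    (h_smul : ∀ (α : ℝ) (a : A), nrm (α • a) = |α| ^ p * nrm a)
    (h_mul : ∀ a b : A, nrm (a * b) ≤ nrm a * nrm b)
    (h_zero : ∀ a : A, nrm a = 0 → a = 0)
    (h_dist : ∀ a b : A, dist a b = nrm (a - b))
    (x : A → ℍ[ℝ])
    (hadd : ∀ a b : A, x (a + b) = x a + x b)
    (hsmul : ∀ (c : ℝ) (a : A), x (c • a) = c • x a)
    (hmulx : ∀ a b : A, x (a * b) = x a * x b)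
    (hone : x 1 = 1) (a : A) :
    ‖x a‖ ≤ max 1 ((2 ^ p * nrm a + nrm a * nrm a + 1) ^ (1/p)) := by
  have hnonneg : ∀ a : A, 0 ≤ nrm a := by
    intro a
    have := dist_nonneg (x := a) (y := 0)
    rwa [h_dist, sub_zero] at this
  have hna : 0 ≤ nrm a := hnonneg a
  by_contra hgt
  push_neg at hgt
  set q : ℍ[ℝ] := x a with hq
  have hq1 : 1 < ‖q‖ := lt_of_le_of_lt (le_max_left _ _) hgt
  set K : ℝ := 2 ^ p * nrm a + nrm a * nrm a with hK
  have hK0 : 0 ≤ K := by positivity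
  set h : ℝ := ‖q‖ ^ p with hh
  have hKlt : K + 1 < h := by
    have h1 : (K + 1) ^ (1/p) < ‖q‖ := lt_of_le_of_lt (le_max_right _ _) hgt
    have h2 := Real.rpow_lt_rpow (by positivity) h1 hp0
    rwa [← Real.rpow_mul (by positivity), one_div_mul_cancel hp0.ne', Real.rpow_one] at h2
  have hh1 : 1 < h := by linarith
  set s : ℝ := q.re with hs
  set N : ℝ := Quaternion.normSq q with hN
  have hNnorm : N = ‖q‖ * ‖q‖ := Quaternion.normSq_eq_norm_mul_self q
  have hNpos : 0 < N := by rw [hNnorm]; positivity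
  have habs : |s| ≤ ‖q‖ := by
    apply abs_le_of_sq_le_sq _ (norm_nonneg q)
    have : s * s ≤ N := by
      rw [hN, Quaternion.normSq_def']
      nlinarith [sq_nonneg q.imI, sq_nonneg q.imJ, sq_nonneg q.imK]
    calc s ^ 2 = s * s := sq s
      _ ≤ N := this
      _ = ‖q‖ ^ 2 := by rw [hNnorm, sq]
  -- x of the quadratic is zero
  have hx0 : x 0 = 0 := by simpa using hsmul 0 0
  have hxneg : ∀ v, x (-v) = -x v := fun v => by
    simpa using hsmul (-1) v
  have hxsub : ∀ u v, x (u - v) = x u - x v := fun u v => by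
    rw [sub_eq_add_neg, hadd, hxneg, sub_eq_add_neg]
  set b : A := (a - s • 1) ^ 2 + (N - s * s) • 1 with hb
  have hxb : x b = 0 := by
    have h1 : x (a - s • 1) = q - s • (1:ℍ[ℝ]) := by
      rw [hxsub, hsmul, hone, hq]
    have : x b = (q - s • (1:ℍ[ℝ])) ^ 2 + (N - s * s) • (1:ℍ[ℝ]) := by
      rw [hb, hadd, sq, sq, hmulx, h1, hsmul, hone]
    rw [this]
    exact quat_ident q
  -- b is not a unit
  have hbnotunit : ¬ IsUnit b := by
    rintro ⟨u, hu⟩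
    have h2 : x b * x ↑u⁻¹ = 1 := by
      rw [← hmulx, ← hu, Units.mul_inv, hone]
    rw [hxb, zero_mul] at h2
    exact one_ne_zero h2.symm
  -- but b is a unit by the Neumann series
  set c : A := N⁻¹ • ((2 * s) • a - a * a) with hc
  have hsq : (a - s • (1:A)) ^ 2 = a * a - (2 * s) • a + (s * s) • (1:A) := by
    simp only [sq, mul_sub, sub_mul, mul_smul_comm, smul_mul_assoc, mul_one, one_mul, smul_smul]
    module
  have hb2 : b = a * a - (2 * s) • a + N • (1:A) := by
    rw [hb, hsq]; module
  have hcb : b = (N • (1:A)) * (1 - c) := by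
    rw [smul_mul_assoc, one_mul, hc, smul_sub, smul_smul, mul_inv_cancel₀ hNpos.ne',
      one_smul, hb2]
    module
  have hNp : N ^ p = h * h := by
    rw [hNnorm, Real.mul_rpow (norm_nonneg q) (norm_nonneg q), hh]
  have hcnrm : nrm c < 1 := by
    have hsubn : nrm ((2 * s) • a - a * a) ≤ 2 ^ p * h * nrm a + nrm a * nrm a := by
      have e1 : nrm ((2 * s) • a - a * a) ≤ nrm ((2 * s) • a) + nrm (a * a) := by
        rw [sub_eq_add_neg]
        refine (h_add _ _).trans (add_le_add_right ?_ _)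
        rw [← neg_one_smul ℝ (a * a), h_smul]
        simpa using h_mul a a
      have e2 : nrm ((2 * s) • a) ≤ 2 ^ p * h * nrm a := by
        rw [h_smul]
        apply mul_le_mul_of_nonneg_right _ hna
        calc |2 * s| ^ p ≤ (2 * ‖q‖) ^ p := by
              apply Real.rpow_le_rpow (abs_nonneg _) _ hp0.le
              rw [abs_mul]
              calc |(2:ℝ)| * |s| = 2 * |s| := by norm_num
                _ ≤ 2 * ‖q‖ := by linarith
          _ = 2 ^ p * h := by
              rw [Real.mul_rpow (by norm_num) (norm_nonneg q), hh]
      have e3 : nrm (a * a) ≤ nrm a * nrm a := h_mul a a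
      linarith
    have hcn : nrm c ≤ (h * h)⁻¹ * (2 ^ p * h * nrm a + nrm a * nrm a) := by
      rw [hc, h_smul, abs_inv, abs_of_pos hNpos, Real.inv_rpow hNpos.le, hNp]
      exact mul_le_mul_of_nonneg_left hsubn (by positivity)
    have hlt : (h * h)⁻¹ * (2 ^ p * h * nrm a + nrm a * nrm a) < 1 := by
      rw [inv_mul_eq_div, div_lt_one (by positivity)]
      nlinarith [mul_lt_mul_of_pos_left hKlt (show (0:ℝ) < h by linarith),
        le_mul_of_one_le_left (mul_nonneg hna hna) hh1.le]
    linarith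
  have hunit1c : IsUnit (1 - c) := aux_unit hp0 nrm h_add h_smul h_mul h_zero h_dist hcnrm
  have hNunit : IsUnit (N • (1:A)) := by
    refine ⟨⟨N • 1, N⁻¹ • 1, ?_, ?_⟩, rfl⟩ <;>
      rw [smul_mul_smul_comm, mul_one] <;>
      simp [mul_inv_cancel₀ hNpos.ne', inv_mul_cancel₀ hNpos.ne']
  exact hbnotunit (hcb ▸ hNunit.mul hunit1c)
/-- X(A), the set of nonzero ℝ-linear multiplicative maps A → ℍ with the topology of
pointwise convergence, is a compact Hausdorff space. -/
theorem stmt7 {A : Type*} [Ring A] [Algebra ℝ A] [MetricSpace A] [CompleteSpace A]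
    {p : ℝ} (hp0 : 0 < p) (hp1 : p ≤ 1)
    (nrm : A → ℝ)
    (h_add : ∀ a b : A, nrm (a + b) ≤ nrm a + nrm b)
    (h_smul : ∀ (α : ℝ) (a : A), nrm (α • a) = |α| ^ p * nrm a)
    (h_mul : ∀ a b : A, nrm (a * b) ≤ nrm a * nrm b)
    (h_zero : ∀ a : A, nrm a = 0 → a = 0)
    (h_dist : ∀ a b : A, dist a b = nrm (a - b))
    {m : ℝ} (hm : 0 < m)
    (h_spec : ∀ a : A, nrm a ^ (1 / p) ≤ m * realSpectralRadius a) :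
    CompactSpace {x : A → ℍ[ℝ] // (∀ a b : A, x (a + b) = x a + x b) ∧
        (∀ (c : ℝ) (a : A), x (c • a) = c • x a) ∧
        (∀ a b : A, x (a * b) = x a * x b) ∧ x ≠ 0} ∧
    T2Space {x : A → ℍ[ℝ] // (∀ a b : A, x (a + b) = x a + x b) ∧
        (∀ (c : ℝ) (a : A), x (c • a) = c • x a) ∧
        (∀ a b : A, x (a * b) = x a * x b) ∧ x ≠ 0} := by
  refine ⟨?_, inferInstance⟩
  set S : Set (A → ℍ[ℝ]) := {x | (∀ a b : A, x (a + b) = x a + x b) ∧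
      (∀ (c : ℝ) (a : A), x (c • a) = c • x a) ∧
      (∀ a b : A, x (a * b) = x a * x b) ∧ x ≠ 0} with hS
  have hScomp : IsCompact S := by
    have hSeq : S = {x : A → ℍ[ℝ] | (∀ a b : A, x (a + b) = x a + x b) ∧
        (∀ (c : ℝ) (a : A), x (c • a) = c • x a) ∧
        (∀ a b : A, x (a * b) = x a * x b) ∧ x 1 = 1} := by
      ext x
      constructor
      · rintro ⟨ha, hs, hm', hne⟩
        refine ⟨ha, hs, hm', ?_⟩
        have hex : ∃ a, x a ≠ 0 := by
          by_contra hcon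
          push_neg at hcon
          exact hne (funext hcon)
        obtain ⟨a, haxne⟩ := hex
        have hx1ne : x 1 ≠ 0 := by
          intro h0
          exact haxne (by rw [← mul_one a, hm', h0, mul_zero])
        have hid : x 1 * x 1 = x 1 := by rw [← hm', one_mul]
        exact mul_right_cancel₀ hx1ne (by rw [one_mul]; exact hid)
      · rintro ⟨ha, hs, hm', h1⟩
        refine ⟨ha, hs, hm', ?_⟩
        intro h0
        rw [h0] at h1
        exact one_ne_zero (α := ℍ[ℝ]) h1.symm
    rw [hSeq]
    have hclosed : IsClosed {x : A → ℍ[ℝ] | (∀ a b : A, x (a + b) = x a + x b) ∧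
        (∀ (c : ℝ) (a : A), x (c • a) = c • x a) ∧
        (∀ a b : A, x (a * b) = x a * x b) ∧ x 1 = 1} := by
      have c1 : IsClosed {x : A → ℍ[ℝ] | ∀ a b : A, x (a + b) = x a + x b} := by
        have : {x : A → ℍ[ℝ] | ∀ a b : A, x (a + b) = x a + x b} =
            ⋂ (a : A), ⋂ (b : A), {x : A → ℍ[ℝ] | x (a + b) = x a + x b} := by
          ext y; simp
        rw [this]
        exact isClosed_iInter fun a => isClosed_iInter fun b =>
          isClosed_eq (continuous_apply _) ((continuous_apply a).add (continuous_apply b))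
      have c2 : IsClosed {x : A → ℍ[ℝ] | ∀ (c : ℝ) (a : A), x (c • a) = c • x a} := by
        have : {x : A → ℍ[ℝ] | ∀ (c : ℝ) (a : A), x (c • a) = c • x a} =
            ⋂ (c : ℝ), ⋂ (a : A), {x : A → ℍ[ℝ] | x (c • a) = c • x a} := by
          ext y; simp
        rw [this]
        exact isClosed_iInter fun c => isClosed_iInter fun a =>
          isClosed_eq (continuous_apply _) ((continuous_apply a).const_smul c)
      have c3 : IsClosed {x : A → ℍ[ℝ] | ∀ a b : A, x (a * b) = x a * x b} := by
        have : {x : A → ℍ[ℝ] | ∀ a b : A, x (a * b) = x a * x b} =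
            ⋂ (a : A), ⋂ (b : A), {x : A → ℍ[ℝ] | x (a * b) = x a * x b} := by
          ext y; simp
        rw [this]
        exact isClosed_iInter fun a => isClosed_iInter fun b =>
          isClosed_eq (continuous_apply _) ((continuous_apply a).mul (continuous_apply b))
      have c4 : IsClosed {x : A → ℍ[ℝ] | x 1 = 1} :=
        isClosed_eq (continuous_apply _) continuous_const
      exact c1.inter (c2.inter (c3.inter c4))
    refine IsCompact.of_isClosed_subset (isCompact_univ_pi fun a =>
      isCompact_closedBall (0 : ℍ[ℝ]) (max 1 ((2 ^ p * nrm a + nrm a * nrm a + 1) ^ (1/p))))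
      hclosed ?_
    rintro x ⟨ha, hs, hm', h1⟩ a -
    rw [mem_closedBall_zero_iff]
    exact aux_bound hp0 nrm h_add h_smul h_mul h_zero h_dist x ha hs hm' h1 a
  exact isCompact_iff_compactSpace.mp hScomp
end

section
/- Let A be a real p-Banach algebra with unit such that ‖a‖^(1/p) ≤ m·r(a) for all a ∈ A, where m > 0 is a constant and r denotes the spectral radius. Then the spectral radius satisfies r(ab) ≤ m²·r(a)·r(b) for all a, b ∈ A. -/
set_option linter.unusedSectionVars false
set_option maxHeartbeats 1000000

open scoped Quaternion

namespace Stmt10Aux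

open Polynomial

lemma poly_fact (z : ℂ) : ((X : Polynomial ℂ) - C (z.re:ℂ)) ^ 2 + C ((z.im:ℂ) ^ 2)
    = (X - C z) * (X - C (starRingEnd ℂ z)) := by
  have ha : z + starRingEnd ℂ z = 2 * (z.re:ℂ) := by
    rw [Complex.add_conj]; push_cast; ring
  have hb : z * starRingEnd ℂ z = (z.re:ℂ)^2 + (z.im:ℂ)^2 := by
    rw [Complex.mul_conj, Complex.normSq_apply]; push_cast; ring
  have h1 : C z + C (starRingEnd ℂ z) = 2 * C (z.re:ℂ) := by
    rw [← C_add, ha, C_mul, map_ofNat C 2]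
  have h2 : C z * C (starRingEnd ℂ z) = C (z.re:ℂ)^2 + C (z.im:ℂ)^2 := by
    have := congrArg (C : ℂ → Polynomial ℂ) hb
    simpa using this
  simp only [map_pow]
  linear_combination (X : Polynomial ℂ) * h1 - h2

lemma poly_dvd (z : ℂ) (n : ℕ) :
    ((X : Polynomial ℝ) - C z.re) ^ 2 + C (z.im ^ 2) ∣
    ((X : Polynomial ℝ) ^ n - C ((z^n).re)) ^ 2 + C ((z^n).im ^ 2) := by
  have hdeg : ∀ s : ℝ, (((X : Polynomial ℝ) - C s) ^ 2).degree = 2 := by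
    intro s
    rw [degree_pow, degree_X_sub_C]
    rfl
  have hmonic : (((X : Polynomial ℝ) - C z.re) ^ 2 + C (z.im ^ 2)).Monic := by
    apply Polynomial.Monic.add_of_left ((monic_X_sub_C z.re).pow 2)
    rw [hdeg]
    exact lt_of_le_of_lt degree_C_le (by norm_num)
  rw [← Polynomial.map_dvd_map (algebraMap ℝ ℂ) (algebraMap ℝ ℂ).injective hmonic]
  have e1 : (((X : Polynomial ℝ) - C z.re) ^ 2 + C (z.im ^ 2)).map (algebraMap ℝ ℂ)
      = (X - C z) * (X - C (starRingEnd ℂ z)) := by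
    rw [← poly_fact z]
    simp [Polynomial.map_add, Polynomial.map_pow, Polynomial.map_sub,
      Polynomial.map_X, Polynomial.map_C]
  have e2 : ((((X : Polynomial ℝ) ^ n - C ((z^n).re)) ^ 2 + C ((z^n).im ^ 2)).map (algebraMap ℝ ℂ))
      = (X^n - C (z^n)) * (X^n - C (starRingEnd ℂ (z^n))) := by
    have comp := congrArg (fun q => q.comp ((X : Polynomial ℂ)^n)) (poly_fact (z^n))
    simp only [add_comp, pow_comp, sub_comp, X_comp, C_comp, mul_comp] at comp
    rw [← comp]
    simp [Polynomial.map_add, Polynomial.map_pow, Polynomial.map_sub,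
      Polynomial.map_X, Polynomial.map_C]
  rw [e1, e2]
  apply mul_dvd_mul
  · simpa using sub_dvd_pow_sub_pow (X : Polynomial ℂ) (C z) n
  · rw [map_pow]
    simpa using sub_dvd_pow_sub_pow (X : Polynomial ℂ) (C (starRingEnd ℂ z)) n

/-- Spectral mapping: z ∈ Sp(c) implies z^n ∈ Sp(cⁿ). -/
lemma spec_pow {A : Type*} [Ring A] [Algebra ℝ A] (c : A) (z : ℂ) (n : ℕ)
    (hz : z ∈ realSpectrum c) : z ^ n ∈ realSpectrum (c ^ n) := by
  obtain ⟨g, hg⟩ := poly_dvd z n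
  intro hU
  apply hz
  show IsUnit _
  simp only [map_pow] at hU ⊢
  have hev := congrArg (fun q => Polynomial.aeval c q) hg
  simp only [map_add, map_sub, map_pow, map_mul, Polynomial.aeval_X, Polynomial.aeval_C] at hev
  have hcomm : Commute (Polynomial.aeval c (((X : Polynomial ℝ) - C z.re) ^ 2 + C (z.im ^ 2)))
      (Polynomial.aeval c g) := by
    show _ * _ = _ * _
    rw [← map_mul, mul_comm, map_mul]
  simp only [map_add, map_sub, map_pow, map_mul, Polynomial.aeval_X, Polynomial.aeval_C] at hcomm
  rw [hev] at hU
  exact ((Commute.isUnit_mul_iff hcomm).mp hU).1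

section

variable {A : Type*} [Ring A] [Algebra ℝ A] [MetricSpace A] [CompleteSpace A]
    {p : ℝ} (hp0 : 0 < p) (hp1 : p ≤ 1)
    (nrm : A → ℝ)
    (h_add : ∀ a b : A, nrm (a + b) ≤ nrm a + nrm b)
    (h_smul : ∀ (α : ℝ) (a : A), nrm (α • a) = |α| ^ p * nrm a)
    (h_mul : ∀ a b : A, nrm (a * b) ≤ nrm a * nrm b)
    (h_dist : ∀ a b : A, dist a b = nrm (a - b))

include h_dist in
lemma nrm_nonneg (a : A) : 0 ≤ nrm a := by
  have := dist_nonneg (x := a) (y := 0)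
  rwa [h_dist, sub_zero] at this

include h_smul in
lemma nrm_neg (a : A) : nrm (-a) = nrm a := by
  have := h_smul (-1) a
  simpa [Real.one_rpow] using this

include h_mul h_dist in
lemma nrm_pow (x : A) : ∀ n : ℕ, 1 ≤ n → nrm (x ^ n) ≤ nrm x ^ n := by
  intro n hn
  induction n with
  | zero => omega
  | succ k ih =>
    rcases Nat.eq_or_lt_of_le hn with h | h
    · simp [← h]
    · have hk : 1 ≤ k := by omega
      calc nrm (x ^ (k+1)) = nrm (x ^ k * x) := by rw [pow_succ]
        _ ≤ nrm (x ^ k) * nrm x := h_mul _ _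
        _ ≤ nrm x ^ k * nrm x :=
            mul_le_mul_of_nonneg_right (ih hk) (nrm_nonneg nrm h_dist x)
        _ = nrm x ^ (k+1) := by ring

include hp0 h_add h_smul h_mul h_dist in
lemma isUnit_one_sub (x : A) (hx : nrm x < 1) : IsUnit (1 - x) := by
  have hnn : ∀ a : A, 0 ≤ nrm a := nrm_nonneg nrm h_dist
  have hneg : ∀ a : A, nrm (-a) = nrm a := nrm_neg nrm h_smul
  have hpow := nrm_pow nrm h_mul h_dist x
  set s : ℕ → A := fun n => ∑ i ∈ Finset.range n, x ^ i with hs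
  have hcauchy : CauchySeq s := by
    apply cauchySeq_of_le_geometric (nrm x) (max (nrm 1) 1) hx
    intro n
    have hd : dist (s n) (s (n+1)) = nrm (x ^ n) := by
      rw [h_dist, hs]
      simp [Finset.sum_range_succ, hneg]
    rw [hd]
    rcases Nat.eq_zero_or_pos n with h | h
    · subst h; simpa using le_max_left (nrm 1) 1
    · calc nrm (x ^ n) ≤ nrm x ^ n := hpow n h
        _ = 1 * nrm x ^ n := (one_mul _).symm
        _ ≤ max (nrm 1) 1 * nrm x ^ n :=
            mul_le_mul_of_nonneg_right (le_max_right _ _) (pow_nonneg (hnn x) n)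
  obtain ⟨y, hy⟩ := cauchySeq_tendsto_of_complete hcauchy
  have hdist0 : Filter.Tendsto (fun n => dist (s n) y) Filter.atTop (nhds 0) :=
    tendsto_iff_dist_tendsto_zero.mp hy
  have lim1 : Filter.Tendsto (fun n : ℕ => (1 : A) - x ^ n) Filter.atTop (nhds 1) := by
    rw [tendsto_iff_dist_tendsto_zero]
    apply squeeze_zero' (Filter.Eventually.of_forall fun n => dist_nonneg)
    · filter_upwards [Filter.eventually_ge_atTop 1] with n hn
      calc dist (1 - x ^ n) 1 = nrm (x ^ n) := by
            rw [h_dist]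
            rw [show (1:A) - x ^ n - 1 = -(x ^ n) by abel, hneg]
        _ ≤ nrm x ^ n := hpow n hn
    · exact tendsto_pow_atTop_nhds_zero_of_lt_one (hnn x) hx
  have key : ∀ c : A, Filter.Tendsto (fun n => c * s n) Filter.atTop (nhds (c * y)) := by
    intro c
    rw [tendsto_iff_dist_tendsto_zero]
    apply squeeze_zero' (Filter.Eventually.of_forall fun n => dist_nonneg)
    · apply Filter.Eventually.of_forall
      intro n
      calc dist (c * s n) (c * y) = nrm (c * (s n - y)) := by rw [h_dist, mul_sub]
        _ ≤ nrm c * nrm (s n - y) := h_mul _ _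
        _ = nrm c * dist (s n) y := by rw [h_dist]
    · simpa using (tendsto_const_nhds (x := nrm c)).mul hdist0
  have key' : ∀ c : A, Filter.Tendsto (fun n => s n * c) Filter.atTop (nhds (y * c)) := by
    intro c
    rw [tendsto_iff_dist_tendsto_zero]
    apply squeeze_zero' (Filter.Eventually.of_forall fun n => dist_nonneg)
    · apply Filter.Eventually.of_forall
      intro n
      calc dist (s n * c) (y * c) = nrm ((s n - y) * c) := by rw [h_dist, sub_mul]
        _ ≤ nrm (s n - y) * nrm c := h_mul _ _
        _ = dist (s n) y * nrm c := by rw [h_dist]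
    · simpa using hdist0.mul (tendsto_const_nhds (x := nrm c))
  have hgeom : ∀ n, (1 - x) * s n = 1 - x ^ n := by
    intro n
    have h := congrArg Neg.neg (mul_geom_sum x n)
    rw [← neg_mul, neg_sub x 1, neg_sub] at h
    exact h
  have hgeom' : ∀ n, s n * (1 - x) = 1 - x ^ n := by
    intro n
    have h := congrArg Neg.neg (geom_sum_mul x n)
    rw [← mul_neg, neg_sub x 1, neg_sub] at h
    exact h
  have e1 : (1 - x) * y = 1 := by
    apply tendsto_nhds_unique (key (1 - x))
    exact (Filter.Tendsto.congr (fun n => (hgeom n).symm) lim1)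
  have e2 : y * (1 - x) = 1 := by
    apply tendsto_nhds_unique (key' (1 - x))
    exact (Filter.Tendsto.congr (fun n => (hgeom' n).symm) lim1)
  exact ⟨⟨1 - x, y, e1, e2⟩, rfl⟩

include hp0 hp1 h_add h_smul h_mul h_dist in
lemma spec_bound1 (c : A) (z : ℂ) (hz : z ∈ realSpectrum c) :
    ‖z‖ ^ p ≤ 3 * nrm c := by
  have hnn : ∀ a : A, 0 ≤ nrm a := nrm_nonneg nrm h_dist
  have hneg : ∀ a : A, nrm (-a) = nrm a := nrm_neg nrm h_smul
  rcases eq_or_ne z 0 with rfl | hz0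
  · rw [norm_zero, Real.zero_rpow hp0.ne']
    exact mul_nonneg (by norm_num) (hnn c)
  · set N := nrm c with hN
    set r : ℝ := z.re ^ 2 + z.im ^ 2 with hr
    have hrpos : 0 < r := by
      have := Complex.normSq_pos.mpr hz0
      rwa [Complex.normSq_apply, ← pow_two, ← pow_two] at this
    set w : A := (2 * z.re) • c - c * c with hw
    set v : A := r⁻¹ • w with hv
    have hfac : (c - algebraMap ℝ A z.re) ^ 2 + algebraMap ℝ A (z.im ^ 2) = r • (1 - v) := by
      rw [hv, smul_sub, smul_smul, mul_inv_cancel₀ hrpos.ne', one_smul, hw, hr]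
      rw [pow_two, Algebra.algebraMap_eq_smul_one, Algebra.algebraMap_eq_smul_one]
      rw [sub_mul, mul_sub, mul_sub, smul_mul_assoc, mul_smul_comm, smul_mul_assoc]
      simp only [one_mul, mul_one, smul_smul]
      module
    have hv1 : 1 ≤ nrm v := by
      by_contra hlt
      push_neg at hlt
      apply hz
      show IsUnit _
      rw [hfac, Algebra.smul_def]
      exact ((isUnit_iff_ne_zero.mpr hrpos.ne').map (algebraMap ℝ A)).mul
        (isUnit_one_sub hp0 nrm h_add h_smul h_mul h_dist v hlt)
    -- now extract the numeric inequality
    have hvle : nrm v ≤ (r ^ p)⁻¹ * (|2 * z.re| ^ p * N + N * N) := by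
      have h1 : nrm w ≤ |2 * z.re| ^ p * N + N * N := by
        calc nrm w ≤ nrm ((2 * z.re) • c) + nrm (-(c * c)) := by
              rw [hw, sub_eq_add_neg]; exact h_add _ _
          _ = |2 * z.re| ^ p * N + nrm (c * c) := by rw [h_smul, hneg]
          _ ≤ |2 * z.re| ^ p * N + N * N := by
              exact add_le_add_right (h_mul c c) _
      calc nrm v = |r⁻¹| ^ p * nrm w := h_smul _ _
        _ = (r ^ p)⁻¹ * nrm w := by
            rw [abs_of_pos (inv_pos.mpr hrpos), Real.inv_rpow hrpos.le]
        _ ≤ (r ^ p)⁻¹ * (|2 * z.re| ^ p * N + N * N) := by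
            apply mul_le_mul_of_nonneg_left h1
            positivity
    have hrp : 0 < r ^ p := Real.rpow_pos_of_pos hrpos p
    have hmain : r ^ p ≤ |2 * z.re| ^ p * N + N * N := by
      have := le_trans hv1 hvle
      calc r ^ p = r ^ p * 1 := (mul_one _).symm
        _ ≤ r ^ p * ((r ^ p)⁻¹ * (|2 * z.re| ^ p * N + N * N)) :=
            mul_le_mul_of_nonneg_left this hrp.le
        _ = |2 * z.re| ^ p * N + N * N := by
            rw [← mul_assoc, mul_inv_cancel₀ hrp.ne', one_mul]
    set R : ℝ := ‖z‖ ^ p with hR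
    have habs : 0 < ‖z‖ := by
      simpa using hz0
    have hRpos : 0 < R := Real.rpow_pos_of_pos habs p
    have hNnn : 0 ≤ N := hnn c
    have hrR : r ^ p = R ^ 2 := by
      have h1 : r = ‖z‖ ^ (2:ℕ) := by
        rw [Complex.sq_norm, Complex.normSq_apply, hr]; ring
      rw [h1, ← Real.rpow_natCast ‖z‖ 2, ← Real.rpow_mul habs.le,
        mul_comm, Real.rpow_mul habs.le, hR, Real.rpow_natCast]
    have hsR : |2 * z.re| ^ p ≤ 2 * R := by
      calc |2 * z.re| ^ p ≤ (2 * ‖z‖) ^ p := by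
            apply Real.rpow_le_rpow (abs_nonneg _) _ hp0.le
            rw [abs_mul]
            simp only [Nat.abs_ofNat]
            exact mul_le_mul_of_nonneg_left (Complex.abs_re_le_norm z) (by norm_num)
        _ = 2 ^ p * R := by
            rw [Real.mul_rpow (by norm_num) habs.le, hR]
        _ ≤ 2 * R := by
            apply mul_le_mul_of_nonneg_right _ hRpos.le
            calc (2:ℝ) ^ p ≤ 2 ^ (1:ℝ) :=
                Real.rpow_le_rpow_of_exponent_le one_le_two hp1
              _ = 2 := Real.rpow_one 2
    have hineq : R ^ 2 ≤ 2 * R * N + N * N := by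
      rw [← hrR]
      calc r ^ p ≤ |2 * z.re| ^ p * N + N * N := hmain
        _ ≤ 2 * R * N + N * N := by
            exact add_le_add_left (mul_le_mul_of_nonneg_right hsR hNnn) _
    -- conclude R ≤ 3 N
    nlinarith [hRpos, hNnn, hineq, sq_nonneg (R - N), sq_nonneg (R - 3 * N), mul_pos hRpos hRpos]

include hp0 hp1 h_add h_smul h_mul h_dist in
lemma spec_bound2 (c : A) (z : ℂ) (hz : z ∈ realSpectrum c) :
    ‖z‖ ≤ nrm c ^ (1/p) := by
  have hnn : ∀ a : A, 0 ≤ nrm a := nrm_nonneg nrm h_dist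
  set N := nrm c with hN
  set B : ℝ := ‖z‖ ^ p with hB
  have hBnn : 0 ≤ B := Real.rpow_nonneg (norm_nonneg _) p
  have hNnn : 0 ≤ N := hnn c
  have hpowB : ∀ x : ℝ, 0 ≤ x → ∀ n : ℕ, (x ^ n) ^ p = (x ^ p) ^ n := by
    intro x hx n
    rw [← Real.rpow_natCast x n, ← Real.rpow_mul hx, mul_comm, Real.rpow_mul hx,
      Real.rpow_natCast]
  have hkey : ∀ n : ℕ, 1 ≤ n → B ^ n ≤ 3 * N ^ n := by
    intro n hn
    have h1 := spec_bound1 hp0 hp1 nrm h_add h_smul h_mul h_dist (c ^ n) (z ^ n)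
      (spec_pow c z n hz)
    rw [norm_pow, hpowB _ (norm_nonneg _) n, ← hB] at h1
    calc B ^ n ≤ 3 * nrm (c ^ n) := h1
      _ ≤ 3 * N ^ n := by
          exact mul_le_mul_of_nonneg_left (nrm_pow nrm h_mul h_dist c n hn) (by norm_num)
  have hBN : B ≤ N := by
    by_contra hcon
    push_neg at hcon
    rcases eq_or_lt_of_le hNnn with h0 | h0
    · have h1 := hkey 1 le_rfl
      rw [← h0] at h1 hcon
      simp at h1
      linarith
    · have hgt : 1 < B / N := (one_lt_div h0).mpr hcon
      obtain ⟨n, hn⟩ := pow_unbounded_of_one_lt (3:ℝ) hgt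
      rcases Nat.eq_zero_or_pos n with rfl | hn1
      · norm_num at hn
      have h2 : 3 * N ^ n < (B / N) ^ n * N ^ n :=
        mul_lt_mul_of_pos_right hn (pow_pos h0 n)
      rw [div_pow, div_mul_cancel₀] at h2
      · exact absurd (lt_of_le_of_lt (hkey n hn1) h2) (lt_irrefl _)
      · exact (pow_pos h0 n).ne'
  calc ‖z‖ = B ^ (1/p) := by
        rw [hB, ← Real.rpow_mul (norm_nonneg _), mul_one_div,
          div_self hp0.ne', Real.rpow_one]
    _ ≤ N ^ (1/p) := Real.rpow_le_rpow hBnn hBN (by positivity)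

end

end Stmt10Aux

/-- The spectral radius satisfies r(ab) ≤ m²·r(a)·r(b). -/
theorem stmt10 {A : Type*} [Ring A] [Algebra ℝ A] [MetricSpace A] [CompleteSpace A]
    {p : ℝ} (hp0 : 0 < p) (hp1 : p ≤ 1)
    (nrm : A → ℝ)
    (h_add : ∀ a b : A, nrm (a + b) ≤ nrm a + nrm b)
    (h_smul : ∀ (α : ℝ) (a : A), nrm (α • a) = |α| ^ p * nrm a)
    (h_mul : ∀ a b : A, nrm (a * b) ≤ nrm a * nrm b)
    (h_zero : ∀ a : A, nrm a = 0 → a = 0)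
    (h_dist : ∀ a b : A, dist a b = nrm (a - b))
    {m : ℝ} (hm : 0 < m)
    (h_spec : ∀ a : A, nrm a ^ (1 / p) ≤ m * realSpectralRadius a) :
    ∀ a b : A, realSpectralRadius (a * b) ≤ m ^ 2 * realSpectralRadius a * realSpectralRadius b := by
  intro a b
  have hnn : ∀ x : A, 0 ≤ nrm x := Stmt10Aux.nrm_nonneg nrm h_dist
  have hrad_nonneg : ∀ x : A, 0 ≤ realSpectralRadius x := by
    intro x
    have h1 := h_spec x
    have h2 : (0:ℝ) ≤ nrm x ^ (1/p) := Real.rpow_nonneg (hnn x) _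
    nlinarith
  have hRHS : 0 ≤ m ^ 2 * realSpectralRadius a * realSpectralRadius b := by
    have := hrad_nonneg a
    have := hrad_nonneg b
    positivity
  apply Real.sSup_le _ hRHS
  rintro x ⟨z, hz, rfl⟩
  have h1 : ‖z‖ ≤ nrm (a * b) ^ (1/p) :=
    Stmt10Aux.spec_bound2 hp0 hp1 nrm h_add h_smul h_mul h_dist (a * b) z hz
  have h2 : nrm (a * b) ^ (1/p) ≤ (nrm a * nrm b) ^ (1/p) :=
    Real.rpow_le_rpow (hnn _) (h_mul a b) (by positivity)
  have h3 : (nrm a * nrm b) ^ (1/p) = nrm a ^ (1/p) * nrm b ^ (1/p) :=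
    Real.mul_rpow (hnn a) (hnn b)
  have h4 : nrm a ^ (1/p) * nrm b ^ (1/p) ≤ (m * realSpectralRadius a) * (m * realSpectralRadius b) := by
    apply mul_le_mul (h_spec a) (h_spec b) (Real.rpow_nonneg (hnn b) _)
    have := hrad_nonneg a
    positivity
  calc ‖z‖ ≤ nrm (a * b) ^ (1/p) := h1
    _ ≤ (nrm a * nrm b) ^ (1/p) := h2
    _ = nrm a ^ (1/p) * nrm b ^ (1/p) := h3
    _ ≤ (m * realSpectralRadius a) * (m * realSpectralRadius b) := h4
    _ = m ^ 2 * realSpectralRadius a * realSpectralRadius b := by ring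
end

section
/- Let (A, ‖·‖) be a complex p-normed algebra such that ‖a‖² ≤ m·‖a²‖ for some constant m > 0 and all a ∈ A, and let |·| be the support seminorm of ‖·‖. Then |a|² ≤ m^(2/p)·|a²| for all a ∈ A. -/
/-- The support seminorm of a p-homogeneous norm ‖·‖:
|a| = inf { ∑ᵢ ‖aᵢ‖^(1/p) : a = a₁ + ⋯ + aₙ, n ≥ 1 }. -/
noncomputable def suppSeminorm {A : Type*} [AddCommGroup A] (p : ℝ) (nrm : A → ℝ)
    (a : A) : ℝ :=
  sInf {s : ℝ | ∃ l : List A, l ≠ [] ∧ l.sum = a ∧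
    s = (l.map fun x => nrm x ^ (1 / p)).sum}


open Filter Finset

lemma auxL0 {t C : ℝ} (n : ℕ) (ht : 0 ≤ t) (hC : 0 < C)
    (h : ∀ k : ℕ, 1 ≤ k → t ^ 2 ^ k ≤ C * ((2 : ℝ) ^ k + 1) ^ n) : t ≤ 1 := by
  by_contra hlt
  push_neg at hlt
  have ht0 : 0 < t := lt_trans one_pos hlt
  have hlo := isLittleO_pow_const_const_pow_of_one_lt (R := ℝ) n hlt
  rw [Asymptotics.isLittleO_iff] at hlo
  have hc : (0 : ℝ) < 1 / (C * 2 ^ n + 1) := by positivity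
  have hev := hlo hc
  rw [Filter.eventually_atTop] at hev
  obtain ⟨N₀, hN₀⟩ := hev
  set k := N₀ + 1 with hk
  have hNk : N₀ ≤ 2 ^ k := by
    calc N₀ ≤ 2 ^ N₀ := (Nat.lt_two_pow_self (n := N₀)).le
    _ ≤ 2 ^ k := Nat.pow_le_pow_right (by norm_num) (by omega)
  have hb := hN₀ (2 ^ k) hNk
  simp only [Real.norm_eq_abs] at hb
  have htpos : (0 : ℝ) < t ^ 2 ^ k := pow_pos ht0 _
  have h1 : ((2 ^ k : ℕ) : ℝ) ^ n ≤ 1 / (C * 2 ^ n + 1) * t ^ 2 ^ k := by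
    calc ((2 ^ k : ℕ) : ℝ) ^ n = |((2 ^ k : ℕ) : ℝ) ^ n| := by
          rw [abs_of_nonneg (by positivity)]
    _ ≤ 1 / (C * 2 ^ n + 1) * |t ^ 2 ^ k| := hb
    _ = 1 / (C * 2 ^ n + 1) * t ^ 2 ^ k := by rw [abs_of_pos htpos]
  have h2 : t ^ 2 ^ k ≤ C * ((2 : ℝ) ^ k + 1) ^ n := h k (by omega)
  have h3 : ((2 : ℝ) ^ k + 1) ^ n ≤ (2 : ℝ) ^ n * ((2 ^ k : ℕ) : ℝ) ^ n := by
    rw [← mul_pow]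
    apply pow_le_pow_left₀ (by positivity)
    push_cast
    have h2k : (1:ℝ) ≤ 2 ^ k := one_le_pow₀ (by norm_num)
    linarith
  have h4 : t ^ 2 ^ k ≤ C * 2 ^ n * (1 / (C * 2 ^ n + 1)) * t ^ 2 ^ k := by
    calc t ^ 2 ^ k ≤ C * ((2 : ℝ) ^ k + 1) ^ n := h2
    _ ≤ C * ((2 : ℝ) ^ n * ((2 ^ k : ℕ) : ℝ) ^ n) := by
        apply mul_le_mul_of_nonneg_left h3 hC.le
    _ ≤ C * ((2 : ℝ) ^ n * (1 / (C * 2 ^ n + 1) * t ^ 2 ^ k)) := by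
        apply mul_le_mul_of_nonneg_left _ hC.le
        exact mul_le_mul_of_nonneg_left h1 (by positivity)
    _ = C * 2 ^ n * (1 / (C * 2 ^ n + 1)) * t ^ 2 ^ k := by ring
  have h5 : C * 2 ^ n * (1 / (C * 2 ^ n + 1)) < 1 := by
    rw [mul_one_div, div_lt_one (by positivity)]
    linarith
  nlinarith

lemma powRpowSwap {u : ℝ} (hu : 0 ≤ u) (q : ℝ) (n : ℕ) : (u ^ n) ^ q = (u ^ q) ^ n := by
  rw [← Real.rpow_natCast u n, ← Real.rpow_mul hu, mul_comm,
    Real.rpow_mul hu, Real.rpow_natCast]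

lemma auxTail {w p : ℝ} (hw : 0 ≤ w) (hp : 0 < p) :
    ∃ T₀ : ℕ, 1 ≤ T₀ ∧ ∀ T : ℕ, T₀ ≤ T →
      (∑ j ∈ Finset.Ioc T (2 * T), w ^ j / ((j.factorial : ℝ)) ^ p) ≤ 1 := by
  -- u j := (4w)^j / (j!)^p is eventually decreasing, hence bounded by C
  set u : ℕ → ℝ := fun j => (4 * w) ^ j / ((j.factorial : ℝ)) ^ p with hu
  have hupos : ∀ j, 0 ≤ u j := by
    intro j
    apply div_nonneg (by positivity)
    positivity
  obtain ⟨J, hJ⟩ := exists_nat_ge ((4 * w) ^ (1 / p))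
  have hJge : ∀ j : ℕ, J ≤ j → 4 * w ≤ (j : ℝ) ^ p := by
    intro j hj
    have h1 : (4 * w) ^ (1 / p) ≤ (j : ℝ) := le_trans hJ (by exact_mod_cast hj)
    have h2 : ((4 * w) ^ (1 / p)) ^ p ≤ (j : ℝ) ^ p :=
      Real.rpow_le_rpow (Real.rpow_nonneg (by positivity) _) h1 hp.le
    rwa [← Real.rpow_mul (by positivity), one_div_mul_cancel hp.ne', Real.rpow_one] at h2
  set C : ℝ := 1 + ∑ i ∈ Finset.range (J + 1), u i with hC
  have hCpos : 0 < C := by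
    have : 0 ≤ ∑ i ∈ Finset.range (J + 1), u i := Finset.sum_nonneg fun i _ => hupos i
    linarith
  have hub : ∀ j, u j ≤ C := by
    intro j
    induction j with
    | zero =>
      have : u 0 = 1 := by simp [hu]
      rw [this, hC]
      have h1 : u 0 ≤ ∑ i ∈ Finset.range (J + 1), u i :=
        Finset.single_le_sum (fun i _ => hupos i) (Finset.mem_range.mpr (by omega))
      simp [hu] at h1
      linarith
    | succ j ih =>
      by_cases hjJ : j + 1 ≤ J
      · have h1 : u (j+1) ≤ ∑ i ∈ Finset.range (J + 1), u i :=
          Finset.single_le_sum (fun i _ => hupos i) (Finset.mem_range.mpr (by omega))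
        rw [hC]; linarith
      · -- j + 1 > J : u (j+1) = u j * (4w)/(j+1)^p ≤ u j
        have hfac : ((j+1).factorial : ℝ) = ((j:ℝ) + 1) * (j.factorial : ℝ) := by
          rw [Nat.factorial_succ]; push_cast; ring
        have hfacp : (((j+1).factorial : ℝ)) ^ p = ((j:ℝ)+1) ^ p * ((j.factorial : ℝ)) ^ p := by
          rw [hfac, Real.mul_rpow (by positivity) (by positivity)]
        have hsplit : u (j + 1) = u j * ((4 * w) / ((j:ℝ)+1) ^ p) := by
          simp only [hu]
          rw [pow_succ, hfacp, div_mul_div_comm]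
          ring_nf
        have hge : 4 * w ≤ ((j:ℝ) + 1) ^ p := by
          have := hJge (j + 1) (by omega)
          push_cast at this ⊢
          exact this
        have hle1 : (4 * w) / ((j:ℝ)+1) ^ p ≤ 1 := by
          rw [div_le_one (by positivity)]
          exact hge
        calc u (j+1) = u j * ((4 * w) / ((j:ℝ)+1) ^ p) := hsplit
        _ ≤ u j * 1 := mul_le_mul_of_nonneg_left hle1 (hupos j)
        _ = u j := mul_one _
        _ ≤ C := ih
  -- term bound : w^j/(j!)^p = u j / 4^j ≤ C/4^j ≤ C/2^j
  have hterm : ∀ j : ℕ, w ^ j / ((j.factorial : ℝ)) ^ p ≤ C / 4 ^ j := by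
    intro j
    have h1 : w ^ j / ((j.factorial : ℝ)) ^ p = u j / 4 ^ j := by
      rw [hu]
      simp only
      rw [mul_pow]
      field_simp
    rw [h1]
    apply div_le_div_of_nonneg_right ?_ (by positivity) |>.trans_eq rfl
    · exact hub j
  -- choose T₀ with C ≤ 2^T₀  and T·(1/4)^T ≤ etc
  obtain ⟨T₀', hT₀'⟩ := pow_unbounded_of_one_lt C (show (1:ℝ) < 2 by norm_num)
  refine ⟨T₀' + 1, by omega, ?_⟩
  intro T hT
  have hsum : (∑ j ∈ Finset.Ioc T (2 * T), w ^ j / ((j.factorial : ℝ)) ^ p)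
      ≤ ∑ j ∈ Finset.Ioc T (2 * T), C / 4 ^ j :=
    Finset.sum_le_sum fun j _ => hterm j
  have hsum2 : (∑ j ∈ Finset.Ioc T (2 * T), C / 4 ^ j) ≤ T * (C / 4 ^ (T + 1)) := by
    have hcard : (Finset.Ioc T (2 * T)).card = T := by
      rw [Nat.card_Ioc]; omega
    calc (∑ j ∈ Finset.Ioc T (2 * T), C / 4 ^ j)
        ≤ ∑ _j ∈ Finset.Ioc T (2 * T), C / 4 ^ (T + 1) := by
          apply Finset.sum_le_sum
          intro j hj
          rw [Finset.mem_Ioc] at hj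
          apply div_le_div_of_nonneg_left hCpos.le (by positivity)
          apply pow_le_pow_right₀ (by norm_num) (by omega)
    _ = T * (C / 4 ^ (T + 1)) := by
          rw [Finset.sum_const, hcard, nsmul_eq_mul]
  have hTle : (T : ℝ) ≤ 2 ^ T := by
    exact_mod_cast (Nat.lt_two_pow_self (n := T)).le
  have hC2 : C ≤ 2 ^ T := by
    calc C ≤ 2 ^ T₀' := hT₀'.le
    _ ≤ 2 ^ T := by apply pow_le_pow_right₀ (by norm_num); omega
  have hfinal : (T : ℝ) * (C / 4 ^ (T + 1)) ≤ 1 := by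
    have h4T : (0:ℝ) < 4 ^ (T+1) := by positivity
    rw [mul_div_assoc', div_le_one h4T]
    have hTC : (T:ℝ) * C ≤ 2 ^ T * 2 ^ T :=
      mul_le_mul hTle hC2 hCpos.le (by positivity)
    have h44 : (2:ℝ) ^ T * 2 ^ T = 4 ^ T := by
      rw [← mul_pow]; norm_num
    have h4s : (4:ℝ) ^ T ≤ 4 ^ (T+1) := by
      apply pow_le_pow_right₀ (by norm_num); omega
    calc (T:ℝ) * C ≤ 2 ^ T * 2 ^ T := hTC
    _ = 4 ^ T := h44
    _ ≤ 4 ^ (T+1) := h4s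
  linarith


open Filter Finset

section AuxAlg

variable {A : Type*} [Ring A] [Algebra ℂ A] {p m : ℝ}

lemma aux_nrm0 (hp0 : 0 < p) (nrm : A → ℝ)
    (h_smul : ∀ (z : ℂ) (a : A), nrm (z • a) = ‖z‖ ^ p * nrm a) :
    nrm 0 = 0 := by
  have h := h_smul 0 0
  rw [zero_smul] at h
  rw [h, norm_zero, Real.zero_rpow hp0.ne', zero_mul]

lemma aux_nrm_neg (hp0 : 0 < p) (nrm : A → ℝ)
    (h_smul : ∀ (z : ℂ) (a : A), nrm (z • a) = ‖z‖ ^ p * nrm a) :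
    ∀ z : A, nrm (-z) = nrm z := by
  intro z
  have h := h_smul (-1) z
  rw [neg_one_smul] at h
  have habs : ‖(-1:ℂ)‖ = 1 := by simp
  rw [h, habs, Real.one_rpow, one_mul]

lemma aux_nrm_nonneg (hp0 : 0 < p) (nrm : A → ℝ)
    (h_add : ∀ a b : A, nrm (a + b) ≤ nrm a + nrm b)
    (h_smul : ∀ (z : ℂ) (a : A), nrm (z • a) = ‖z‖ ^ p * nrm a) :
    ∀ z : A, 0 ≤ nrm z := by
  intro z
  have h := h_add z (-z)
  rw [add_neg_cancel, aux_nrm0 hp0 nrm h_smul, aux_nrm_neg hp0 nrm h_smul] at h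
  linarith

lemma aux_powle (nrm : A → ℝ) (hnn : ∀ z : A, 0 ≤ nrm z)
    (h_mul : ∀ a b : A, nrm (a * b) ≤ nrm a * nrm b) :
    ∀ (z : A) (N : ℕ), 1 ≤ N → nrm (z ^ N) ≤ nrm z ^ N := by
  intro z N hN
  induction N with
  | zero => omega
  | succ N ih =>
    rcases Nat.eq_or_lt_of_le hN with h1 | h1
    · simp [← h1]
    · have hN1 : 1 ≤ N := by omega
      calc nrm (z ^ (N + 1)) = nrm (z ^ N * z) := by rw [pow_succ]
      _ ≤ nrm (z ^ N) * nrm z := h_mul _ _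
      _ ≤ nrm z ^ N * nrm z := by
          exact mul_le_mul_of_nonneg_right (ih hN1) (hnn z)
      _ = nrm z ^ (N + 1) := by rw [pow_succ]

end AuxAlg

section ChainRot

variable {A : Type*} [Ring A] [Algebra ℂ A] {m : ℝ}

lemma aux_chain (nrm : A → ℝ) (hm : 0 < m)
    (hnn : ∀ z : A, 0 ≤ nrm z)
    (h_sq : ∀ a : A, nrm a ^ 2 ≤ m * nrm (a ^ 2)) :
    ∀ (z : A) (k : ℕ), nrm z ^ 2 ^ k ≤ m ^ (2 ^ k - 1) * nrm (z ^ 2 ^ k) := by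
  intro z k
  induction k with
  | zero => simp
  | succ k ih =>
    have h2k : 1 ≤ 2 ^ k := Nat.one_le_two_pow
    have e1 : (2 : ℕ) ^ (k + 1) = 2 ^ k * 2 := by rw [pow_succ]
    have e2 : nrm z ^ 2 ^ (k + 1) = (nrm z ^ 2 ^ k) ^ 2 := by
      rw [e1, pow_mul]
    have e3 : z ^ 2 ^ (k + 1) = (z ^ 2 ^ k) ^ 2 := by
      rw [e1, pow_mul]
    have step1 : (nrm z ^ 2 ^ k) ^ 2 ≤ (m ^ (2 ^ k - 1) * nrm (z ^ 2 ^ k)) ^ 2 := by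
      apply pow_le_pow_left₀ (pow_nonneg (hnn z) _) ih
    have step2 : (m ^ (2 ^ k - 1) * nrm (z ^ 2 ^ k)) ^ 2
        = m ^ (2 * (2 ^ k - 1)) * nrm (z ^ 2 ^ k) ^ 2 := by
      rw [mul_pow, ← pow_mul, mul_comm (2 ^ k - 1) 2]
    have step3 : nrm (z ^ 2 ^ k) ^ 2 ≤ m * nrm ((z ^ 2 ^ k) ^ 2) := h_sq _
    have step4 : m ^ (2 * (2 ^ k - 1)) * nrm (z ^ 2 ^ k) ^ 2
        ≤ m ^ (2 * (2 ^ k - 1)) * (m * nrm ((z ^ 2 ^ k) ^ 2)) := by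
      apply mul_le_mul_of_nonneg_left step3 (by positivity)
    have eexp : m ^ (2 * (2 ^ k - 1)) * m = m ^ (2 ^ (k + 1) - 1) := by
      rw [← pow_succ]
      congr 1
      omega
    calc nrm z ^ 2 ^ (k + 1) = (nrm z ^ 2 ^ k) ^ 2 := e2
    _ ≤ (m ^ (2 ^ k - 1) * nrm (z ^ 2 ^ k)) ^ 2 := step1
    _ = m ^ (2 * (2 ^ k - 1)) * nrm (z ^ 2 ^ k) ^ 2 := step2
    _ ≤ m ^ (2 * (2 ^ k - 1)) * (m * nrm ((z ^ 2 ^ k) ^ 2)) := step4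
    _ = m ^ (2 ^ (k + 1) - 1) * nrm ((z ^ 2 ^ k) ^ 2) := by rw [← mul_assoc, eexp]
    _ = m ^ (2 ^ (k + 1) - 1) * nrm (z ^ 2 ^ (k + 1)) := by rw [← e3]

lemma aux_word : ∀ (u v : A) (n : ℕ), (u * v) ^ (n + 1) = u * (v * u) ^ n * v := by
  intro u v n
  induction n with
  | zero => simp
  | succ n ih =>
    calc (u * v) ^ (n + 2) = (u * v) ^ (n + 1) * (u * v) := by rw [pow_succ]
    _ = u * (v * u) ^ n * v * (u * v) := by rw [ih]
    _ = u * ((v * u) ^ n * (v * u)) * v := by noncomm_ring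
    _ = u * (v * u) ^ (n + 1) * v := by rw [← pow_succ]

lemma aux_rot (nrm : A → ℝ) (hm : 0 < m) (hm1 : 1 ≤ m)
    (hnn : ∀ z : A, 0 ≤ nrm z)
    (h_mul : ∀ a b : A, nrm (a * b) ≤ nrm a * nrm b)
    (h_zero : ∀ a : A, nrm a = 0 → a = 0)
    (hnrm0 : nrm (0 : A) = 0)
    (h_sq : ∀ a : A, nrm a ^ 2 ≤ m * nrm (a ^ 2)) :
    ∀ x y : A, nrm (x * y) ≤ m * nrm (y * x) := by
  intro x y
  by_cases hyx : nrm (y * x) = 0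
  · have hyx0 : y * x = 0 := h_zero _ hyx
    have hsq0 : (x * y) ^ 2 = 0 := by
      calc (x * y) ^ 2 = x * (y * x) * y := by rw [pow_two]; noncomm_ring
      _ = 0 := by rw [hyx0, mul_zero, zero_mul]
    have h1 : nrm (x * y) ^ 2 ≤ 0 := by
      have := h_sq (x * y)
      rw [hsq0, hnrm0, mul_zero] at this
      exact this
    have h2 : nrm (x * y) = 0 := by nlinarith [hnn (x * y)]
    rw [h2, hyx, mul_zero]
  · have hyxpos : 0 < nrm (y * x) := lt_of_le_of_ne (hnn _) (Ne.symm hyx)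
    set t : ℝ := nrm (x * y) / (m * nrm (y * x)) with ht
    have hden : 0 < m * nrm (y * x) := by positivity
    have htn : 0 ≤ t := div_nonneg (hnn _) hden.le
    set C : ℝ := max 1 (nrm x * nrm y / (m * nrm (y * x))) with hC
    have hCpos : 0 < C := lt_of_lt_of_le one_pos (le_max_left _ _)
    have hkey : ∀ k : ℕ, 1 ≤ k → t ^ 2 ^ k ≤ C * ((2:ℝ) ^ k + 1) ^ 0 := by
      intro k hk
      have h2k : 1 ≤ 2 ^ k := Nat.one_le_two_pow
      have h2k2 : 2 ≤ 2 ^ k := by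
        calc 2 = 2 ^ 1 := by norm_num
        _ ≤ 2 ^ k := Nat.pow_le_pow_right (by norm_num) hk
      have hword : (x * y) ^ 2 ^ k = x * (y * x) ^ (2 ^ k - 1) * y := by
        have h : 2 ^ k = (2 ^ k - 1) + 1 := by omega
        conv_lhs => rw [h]
        rw [aux_word]
      have hnword : nrm ((x * y) ^ 2 ^ k) ≤ nrm x * nrm y * nrm (y * x) ^ (2 ^ k - 1) := by
        rw [hword]
        calc nrm (x * (y * x) ^ (2 ^ k - 1) * y)
            ≤ nrm (x * (y * x) ^ (2 ^ k - 1)) * nrm y := h_mul _ _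
        _ ≤ nrm x * nrm ((y * x) ^ (2 ^ k - 1)) * nrm y := by
            apply mul_le_mul_of_nonneg_right (h_mul _ _) (hnn _)
        _ ≤ nrm x * nrm (y * x) ^ (2 ^ k - 1) * nrm y := by
            apply mul_le_mul_of_nonneg_right _ (hnn _)
            apply mul_le_mul_of_nonneg_left _ (hnn _)
            exact aux_powle nrm hnn h_mul _ _ (by omega)
        _ = nrm x * nrm y * nrm (y * x) ^ (2 ^ k - 1) := by ring
      have hchain := aux_chain nrm hm hnn h_sq (x * y) k
      have hcomb : nrm (x * y) ^ 2 ^ k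
          ≤ m ^ (2 ^ k - 1) * (nrm x * nrm y * nrm (y * x) ^ (2 ^ k - 1)) := by
        calc nrm (x * y) ^ 2 ^ k ≤ m ^ (2 ^ k - 1) * nrm ((x * y) ^ 2 ^ k) := hchain
        _ ≤ m ^ (2 ^ k - 1) * (nrm x * nrm y * nrm (y * x) ^ (2 ^ k - 1)) := by
            apply mul_le_mul_of_nonneg_left hnword (by positivity)
      -- t ^ 2^k = nrm(xy)^2^k / (m*nrm(yx))^2^k
      have hexp : t ^ 2 ^ k = nrm (x * y) ^ 2 ^ k / (m * nrm (y * x)) ^ 2 ^ k := by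
        rw [ht, div_pow]
      rw [hexp, pow_zero, mul_one]
      rw [div_le_iff₀ (by positivity)]
      have hsplit : (m * nrm (y * x)) ^ 2 ^ k
          = (m * nrm (y * x)) ^ (2 ^ k - 1) * (m * nrm (y * x)) := by
        rw [← pow_succ]
        congr 1
        omega
      have hCge : nrm x * nrm y ≤ C * (m * nrm (y * x)) := by
        have h' : nrm x * nrm y / (m * nrm (y * x)) ≤ C := le_max_right _ _
        calc nrm x * nrm y = nrm x * nrm y / (m * nrm (y * x)) * (m * nrm (y * x)) := by
              field_simp
        _ ≤ C * (m * nrm (y * x)) := by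
              apply mul_le_mul_of_nonneg_right h' hden.le
      calc nrm (x * y) ^ 2 ^ k
          ≤ m ^ (2 ^ k - 1) * (nrm x * nrm y * nrm (y * x) ^ (2 ^ k - 1)) := hcomb
      _ = nrm x * nrm y * (m * nrm (y * x)) ^ (2 ^ k - 1) := by
          rw [mul_pow]; ring
      _ ≤ C * (m * nrm (y * x)) * (m * nrm (y * x)) ^ (2 ^ k - 1) := by
          apply mul_le_mul_of_nonneg_right hCge (by positivity)
      _ = C * (m * nrm (y * x)) ^ 2 ^ k := by
          rw [hsplit]; ring
    have ht1 : t ≤ 1 := auxL0 0 htn hCpos hkey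
    rw [ht, div_le_one hden] at ht1
    linarith
  
end ChainRot

section Multin

variable {A : Type*} [Ring A] [Algebra ℂ A] {p m : ℝ}

lemma aux_nrm_finsum (nrm : A → ℝ) (hnrm0 : nrm (0 : A) = 0)
    (h_add : ∀ a b : A, nrm (a + b) ≤ nrm a + nrm b) :
    ∀ (s : Finset ℕ) (f : ℕ → A), nrm (∑ i ∈ s, f i) ≤ ∑ i ∈ s, nrm (f i) := by
  intro s f
  induction s using Finset.cons_induction with
  | empty => simp [hnrm0]
  | cons a s ha ih =>
    rw [Finset.sum_cons, Finset.sum_cons]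
    exact le_trans (h_add _ _) (by linarith)

lemma aux_nat_mul (nrm : A → ℝ)
    (h_smul : ∀ (z : ℂ) (a : A), nrm (z • a) = ‖z‖ ^ p * nrm a) :
    ∀ (u : A) (n : ℕ), nrm (u * (n : A)) = (n : ℝ) ^ p * nrm u := by
  intro u n
  have h1 : (n : A) = algebraMap ℂ A (n : ℂ) := by
    rw [map_natCast]
  have h2 : u * (n : A) = (n : ℂ) • u := by
    rw [h1, ← Algebra.commutes, Algebra.smul_def]
  rw [h2, h_smul, Complex.norm_natCast]

lemma aux_rpow_inv (hp0 : 0 < p) {x : ℝ} (hx : 0 ≤ x) : (x ^ (1 / p)) ^ p = x := by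
  rw [← Real.rpow_mul hx, one_div_mul_cancel hp0.ne', Real.rpow_one]

lemma aux_multin (hp0 : 0 < p) (nrm : A → ℝ)
    (hnn : ∀ z : A, 0 ≤ nrm z) (hnrm0 : nrm (0 : A) = 0)
    (h_add : ∀ a b : A, nrm (a + b) ≤ nrm a + nrm b)
    (h_smul : ∀ (z : ℂ) (a : A), nrm (z • a) = ‖z‖ ^ p * nrm a)
    (h_mul : ∀ a b : A, nrm (a * b) ≤ nrm a * nrm b)
    (hcomm : ∀ x y : A, x * y = y * x) :
    ∀ (l : List A) (N : ℕ), 1 ≤ N →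
      nrm (l.sum ^ N) ≤ ((N : ℝ) + 1) ^ l.length *
        (((l.map fun b => nrm b ^ (1 / p)).sum) ^ p) ^ N := by
  intro l
  induction l with
  | nil =>
    intro N hN
    simp only [List.sum_nil, List.map_nil, List.length_nil, pow_zero, one_mul]
    rw [zero_pow (by omega : N ≠ 0), hnrm0, Real.zero_rpow hp0.ne',
      zero_pow (by omega : N ≠ 0)]
  | cons b l' ih =>
    intro N hN
    simp only [List.sum_cons, List.map_cons, List.length_cons]
    set s' := l'.sum with hs'
    set X' := (l'.map fun b => nrm b ^ (1 / p)).sum with hX'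
    set qb := nrm b ^ (1 / p) with hqb
    have hqbnn : 0 ≤ qb := Real.rpow_nonneg (hnn b) _
    have hX'nn : 0 ≤ X' := by
      rw [hX']
      apply List.sum_nonneg
      intro x hx
      obtain ⟨c, _, rfl⟩ := List.mem_map.mp hx
      exact Real.rpow_nonneg (hnn c) _
    have hqbp : qb ^ p = nrm b := aux_rpow_inv hp0 (hnn b)
    have hcom : Commute b s' := hcomm b s'
    rw [hcom.add_pow]
    refine le_trans (aux_nrm_finsum nrm hnrm0 h_add _ _) ?_
    -- termwise bound
    have hterm : ∀ j ∈ Finset.range (N + 1),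
        nrm (b ^ j * s' ^ (N - j) * ((N.choose j : ℕ) : A))
          ≤ ((N : ℝ) + 1) ^ l'.length *
            (((N.choose j : ℝ)) * qb ^ j * X' ^ (N - j)) ^ p := by
      intro j hj
      rw [Finset.mem_range] at hj
      have hchoosenn : (0 : ℝ) ≤ (N.choose j : ℝ) := Nat.cast_nonneg _
      have hrpoweq : (((N.choose j : ℝ)) * qb ^ j * X' ^ (N - j)) ^ p
          = (N.choose j : ℝ) ^ p * nrm b ^ j * (X' ^ p) ^ (N - j) := by
        rw [Real.mul_rpow (by positivity) (by positivity),
          Real.mul_rpow hchoosenn (by positivity),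
          powRpowSwap hqbnn p j, powRpowSwap hX'nn p (N - j), hqbp]
      have hcore : nrm (b ^ j * s' ^ (N - j))
          ≤ ((N : ℝ) + 1) ^ l'.length * nrm b ^ j * (X' ^ p) ^ (N - j) := by
        have hone : (1:ℝ) ≤ ((N : ℝ) + 1) ^ l'.length := by
          apply one_le_pow₀
          have : (0:ℝ) ≤ (N : ℝ) := Nat.cast_nonneg _
          linarith
        rcases Nat.eq_zero_or_pos j with hj0 | hjpos
        · subst hj0
          rw [pow_zero, one_mul, Nat.sub_zero, pow_zero, mul_one]
          calc nrm (s' ^ N) ≤ ((N : ℝ) + 1) ^ l'.length * (X' ^ p) ^ N := ih N hN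
          _ = ((N : ℝ) + 1) ^ l'.length * 1 * (X' ^ p) ^ N := by ring
          _ = _ := by ring
        · rcases Nat.eq_zero_or_pos (N - j) with hNj0 | hNjpos
          · rw [hNj0, pow_zero, mul_one, pow_zero, mul_one]
            calc nrm (b ^ j) ≤ nrm b ^ j := aux_powle nrm hnn h_mul b j (by omega)
            _ ≤ ((N : ℝ) + 1) ^ l'.length * nrm b ^ j := by
                nlinarith [pow_nonneg (hnn b) j]
          · have hNj1 : 1 ≤ N - j := hNjpos
            calc nrm (b ^ j * s' ^ (N - j)) ≤ nrm (b ^ j) * nrm (s' ^ (N - j)) := h_mul _ _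
            _ ≤ nrm b ^ j * nrm (s' ^ (N - j)) := by
                apply mul_le_mul_of_nonneg_right
                  (aux_powle nrm hnn h_mul b j (by omega)) (hnn _)
            _ ≤ nrm b ^ j * ((((N - j : ℕ) : ℝ) + 1) ^ l'.length * (X' ^ p) ^ (N - j)) := by
                apply mul_le_mul_of_nonneg_left (ih (N - j) hNj1)
                  (pow_nonneg (hnn b) j)
            _ ≤ nrm b ^ j * (((N : ℝ) + 1) ^ l'.length * (X' ^ p) ^ (N - j)) := by
                apply mul_le_mul_of_nonneg_left _ (pow_nonneg (hnn b) j)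
                apply mul_le_mul_of_nonneg_right _ (by positivity)
                apply pow_le_pow_left₀ (by positivity)
                have : (N - j : ℕ) ≤ N := Nat.sub_le _ _
                exact_mod_cast (by omega : N - j + 1 ≤ N + 1)
            _ = ((N : ℝ) + 1) ^ l'.length * nrm b ^ j * (X' ^ p) ^ (N - j) := by ring
      calc nrm (b ^ j * s' ^ (N - j) * ((N.choose j : ℕ) : A))
          = nrm ((b ^ j * s' ^ (N - j)) * ((N.choose j : ℕ) : A)) := rfl
      _ = ((N.choose j : ℕ) : ℝ) ^ p * nrm (b ^ j * s' ^ (N - j)) := by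
          rw [aux_nat_mul nrm h_smul]
      _ ≤ ((N.choose j : ℕ) : ℝ) ^ p *
          (((N : ℝ) + 1) ^ l'.length * nrm b ^ j * (X' ^ p) ^ (N - j)) := by
          apply mul_le_mul_of_nonneg_left hcore (Real.rpow_nonneg hchoosenn p)
      _ = ((N : ℝ) + 1) ^ l'.length *
          ((N.choose j : ℝ) ^ p * nrm b ^ j * (X' ^ p) ^ (N - j)) := by ring
      _ = ((N : ℝ) + 1) ^ l'.length *
          (((N.choose j : ℝ)) * qb ^ j * X' ^ (N - j)) ^ p := by rw [hrpoweq]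
    have hsum2 : ∑ j ∈ Finset.range (N + 1),
        ((N : ℝ) + 1) ^ l'.length * (((N.choose j : ℝ)) * qb ^ j * X' ^ (N - j)) ^ p
        ≤ ((N : ℝ) + 1) ^ l'.length * (((N : ℝ) + 1) * ((qb + X') ^ p) ^ N) := by
      rw [← Finset.mul_sum]
      apply mul_le_mul_of_nonneg_left _ (by positivity)
      have hzsum : ∑ j ∈ Finset.range (N + 1),
          ((N.choose j : ℝ)) * qb ^ j * X' ^ (N - j) = (qb + X') ^ N := by
        rw [add_pow]
        apply Finset.sum_congr rfl
        intro j _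
        ring
      have hzle : ∀ j ∈ Finset.range (N + 1),
          (((N.choose j : ℝ)) * qb ^ j * X' ^ (N - j)) ^ p ≤ ((qb + X') ^ p) ^ N := by
        intro j hj
        have h1 : ((N.choose j : ℝ)) * qb ^ j * X' ^ (N - j) ≤ (qb + X') ^ N := by
          rw [← hzsum]
          apply Finset.single_le_sum (f := fun j => ((N.choose j : ℝ)) * qb ^ j * X' ^ (N - j))
            (fun i _ => by positivity) hj
        calc (((N.choose j : ℝ)) * qb ^ j * X' ^ (N - j)) ^ p
            ≤ ((qb + X') ^ N) ^ p := Real.rpow_le_rpow (by positivity) h1 hp0.le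
        _ = ((qb + X') ^ p) ^ N := powRpowSwap (by positivity) p N
      calc ∑ j ∈ Finset.range (N + 1), (((N.choose j : ℝ)) * qb ^ j * X' ^ (N - j)) ^ p
          ≤ ∑ _j ∈ Finset.range (N + 1), ((qb + X') ^ p) ^ N := Finset.sum_le_sum hzle
      _ = ((N : ℝ) + 1) * ((qb + X') ^ p) ^ N := by
          rw [Finset.sum_const, Finset.card_range, nsmul_eq_mul]
          push_cast
          ring
    calc ∑ j ∈ Finset.range (N + 1), nrm (b ^ j * s' ^ (N - j) * ((N.choose j : ℕ) : A))
        ≤ ∑ j ∈ Finset.range (N + 1),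
          ((N : ℝ) + 1) ^ l'.length * (((N.choose j : ℝ)) * qb ^ j * X' ^ (N - j)) ^ p :=
          Finset.sum_le_sum hterm
    _ ≤ ((N : ℝ) + 1) ^ l'.length * (((N : ℝ) + 1) * ((qb + X') ^ p) ^ N) := hsum2
    _ = ((N : ℝ) + 1) ^ (l'.length + 1) * ((qb + X') ^ p) ^ N := by
        rw [pow_succ]
        ring
  
end Multin

section Star

variable {A : Type*} [Ring A] [Algebra ℂ A] {p m : ℝ}

lemma aux_star (hp0 : 0 < p) (nrm : A → ℝ) (hm : 0 < m) (hm1 : 1 ≤ m)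
    (hnn : ∀ z : A, 0 ≤ nrm z) (hnrm0 : nrm (0 : A) = 0)
    (h_add : ∀ a b : A, nrm (a + b) ≤ nrm a + nrm b)
    (h_smul : ∀ (z : ℂ) (a : A), nrm (z • a) = ‖z‖ ^ p * nrm a)
    (h_mul : ∀ a b : A, nrm (a * b) ≤ nrm a * nrm b)
    (h_zero : ∀ a : A, nrm a = 0 → a = 0)
    (h_sq : ∀ a : A, nrm a ^ 2 ≤ m * nrm (a ^ 2))
    (hcomm : ∀ x y : A, x * y = y * x) :
    ∀ l : List A, nrm l.sum ≤ m * ((l.map fun b => nrm b ^ (1 / p)).sum) ^ p := by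
  intro l
  set X := (l.map fun b => nrm b ^ (1 / p)).sum with hX
  have hXnn : 0 ≤ X := by
    rw [hX]
    apply List.sum_nonneg
    intro x hx
    obtain ⟨c, _, rfl⟩ := List.mem_map.mp hx
    exact Real.rpow_nonneg (hnn c) _
  by_cases hX0 : X = 0
  · have hall : ∀ b ∈ l, b = 0 := by
      intro b hb
      have hql : ∀ x ∈ l.map fun b => nrm b ^ (1 / p), 0 ≤ x := by
        intro x hx
        obtain ⟨c, _, rfl⟩ := List.mem_map.mp hx
        exact Real.rpow_nonneg (hnn c) _
      have hmem : nrm b ^ (1 / p) ∈ l.map fun b => nrm b ^ (1 / p) :=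
        List.mem_map.mpr ⟨b, hb, rfl⟩
      have hzero : nrm b ^ (1 / p) = 0 := by
        by_contra hne
        have hpos : 0 < nrm b ^ (1 / p) :=
          lt_of_le_of_ne (Real.rpow_nonneg (hnn b) _) (Ne.symm hne)
        have := List.single_le_sum hql _ hmem
        rw [← hX] at this
        linarith [hX0 ▸ this]
      have : nrm b = 0 := by
        have := congrArg (fun x : ℝ => x ^ p) hzero
        rwa [aux_rpow_inv hp0 (hnn b), Real.zero_rpow hp0.ne'] at this
      exact h_zero b this
    have hsum0 : l.sum = 0 := List.sum_eq_zero hall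
    rw [hsum0, hnrm0, hX0, Real.zero_rpow hp0.ne', mul_zero]
  · have hXpos : 0 < X := lt_of_le_of_ne hXnn (Ne.symm hX0)
    have hXp : 0 < X ^ p := Real.rpow_pos_of_pos hXpos p
    set t : ℝ := nrm l.sum / (m * X ^ p) with htdef
    have hden : 0 < m * X ^ p := by positivity
    have hkey : ∀ k : ℕ, 1 ≤ k → t ^ 2 ^ k ≤ 1 * ((2:ℝ) ^ k + 1) ^ l.length := by
      intro k _
      have h2k : 1 ≤ 2 ^ k := Nat.one_le_two_pow
      have hchain := aux_chain nrm hm hnn h_sq l.sum k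
      have hmult := aux_multin hp0 nrm hnn hnrm0 h_add h_smul h_mul hcomm l (2 ^ k) h2k
      have hcast : (((2:ℕ) ^ k : ℕ) : ℝ) + 1 = (2:ℝ) ^ k + 1 := by push_cast; ring
      rw [hcast] at hmult
      rw [one_mul, htdef, div_pow, div_le_iff₀ (by positivity)]
      have hstep : nrm l.sum ^ 2 ^ k
          ≤ m ^ (2 ^ k - 1) * (((2:ℝ) ^ k + 1) ^ l.length * (X ^ p) ^ 2 ^ k) := by
        calc nrm l.sum ^ 2 ^ k ≤ m ^ (2 ^ k - 1) * nrm (l.sum ^ 2 ^ k) := hchain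
        _ ≤ m ^ (2 ^ k - 1) * (((2:ℝ) ^ k + 1) ^ l.length * (X ^ p) ^ 2 ^ k) := by
            apply mul_le_mul_of_nonneg_left hmult (by positivity)
      calc nrm l.sum ^ 2 ^ k
          ≤ m ^ (2 ^ k - 1) * (((2:ℝ) ^ k + 1) ^ l.length * (X ^ p) ^ 2 ^ k) := hstep
      _ ≤ m ^ 2 ^ k * (((2:ℝ) ^ k + 1) ^ l.length * (X ^ p) ^ 2 ^ k) := by
          apply mul_le_mul_of_nonneg_right _ (by positivity)
          apply pow_le_pow_right₀ hm1
          omega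
      _ = ((2:ℝ) ^ k + 1) ^ l.length * (m * X ^ p) ^ 2 ^ k := by
          rw [mul_pow]
          ring
    have ht1 : t ≤ 1 := auxL0 l.length (div_nonneg (hnn _) hden.le) one_pos hkey
    rw [htdef, div_le_one hden] at ht1
    exact ht1

end Star

section PolyAux

open Polynomial

variable {A : Type*} [Ring A] [Algebra ℂ A]

noncomputable def auxEv (z : ℂ) (P : Polynomial A) : A :=
  Polynomial.eval₂ (RingHom.id A) (algebraMap ℂ A z) P

lemma auxEv_mul (z : ℂ) (P Q : Polynomial A) :
    auxEv z (P * Q) = auxEv z P * auxEv z Q :=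
  Polynomial.eval₂_mul_noncomm _ _ fun k => (Algebra.commutes z _).symm

lemma auxEv_sub (z : ℂ) (P Q : Polynomial A) :
    auxEv z (P - Q) = auxEv z P - auxEv z Q := by
  unfold auxEv
  exact Polynomial.eval₂_sub _

lemma auxEv_one (z : ℂ) : auxEv z (1 : Polynomial A) = 1 :=
  Polynomial.eval₂_one _ _

lemma auxEv_C (z : ℂ) (y : A) : auxEv z (Polynomial.C y) = y :=
  Polynomial.eval₂_C _ _

lemma auxEv_pow (z : ℂ) (P : Polynomial A) (N : ℕ) :
    auxEv z (P ^ N) = (auxEv z P) ^ N := by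
  induction N with
  | zero => simp [auxEv_one]
  | succ N ih => rw [pow_succ, auxEv_mul, ih, pow_succ]

lemma auxEv_eq_sum (z : ℂ) (P : Polynomial A) {n : ℕ} (hdeg : P.natDegree < n) :
    auxEv z P = ∑ j ∈ Finset.range n, (z ^ j) • P.coeff j := by
  unfold auxEv
  rw [Polynomial.eval₂_eq_sum_range' _ hdeg]
  apply Finset.sum_congr rfl
  intro j _
  rw [RingHom.id_apply, ← map_pow, ← Algebra.commutes, Algebra.smul_def]

lemma auxAvg (P : Polynomial A) (M N : ℕ) (R : ℝ)
    (hM : M ≠ 0) (hdeg : P.natDegree < M) (hN : N < M) :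
    ∑ l ∈ Finset.range M,
      ((Complex.exp (2 * Real.pi * Complex.I / M)) ^ ((M - N) * l)) •
        auxEv ((R : ℂ) * (Complex.exp (2 * Real.pi * Complex.I / M)) ^ l) P
      = (((M : ℂ)) * (R : ℂ) ^ N) • P.coeff N := by
  set ω : ℂ := Complex.exp (2 * Real.pi * Complex.I / M) with hωdef
  have hω : IsPrimitiveRoot ω M := Complex.isPrimitiveRoot_exp M hM
  have hstep1 : ∀ l : ℕ,
      (ω ^ ((M - N) * l)) • auxEv ((R : ℂ) * ω ^ l) P
        = ∑ j ∈ Finset.range M, ((R : ℂ) ^ j * (ω ^ (M - N + j)) ^ l) • P.coeff j := by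
    intro l
    rw [auxEv_eq_sum _ _ hdeg, Finset.smul_sum]
    apply Finset.sum_congr rfl
    intro j _
    rw [smul_smul]
    congr 1
    rw [mul_pow, ← pow_mul, ← pow_mul,
      show (M - N + j) * l = (M - N) * l + l * j from by ring, pow_add]
    ring
  rw [Finset.sum_congr rfl fun l _ => hstep1 l, Finset.sum_comm]
  have hinner : ∀ j ∈ Finset.range M,
      (∑ l ∈ Finset.range M, ((R : ℂ) ^ j * (ω ^ (M - N + j)) ^ l) • P.coeff j)
        = (if j = N then ((M : ℂ) * (R : ℂ) ^ N) else 0) • P.coeff j := by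
    intro j hj
    rw [Finset.mem_range] at hj
    rw [← Finset.sum_smul]
    congr 1
    rw [← Finset.mul_sum]
    by_cases hjN : j = N
    · rw [if_pos hjN, hjN]
      have hMN : M - N + N = M := by omega
      rw [hMN]
      have hones : ∀ l ∈ Finset.range M, (ω ^ M) ^ l = 1 := by
        intro l _
        rw [hω.pow_eq_one, one_pow]
      rw [Finset.sum_congr rfl hones, Finset.sum_const, Finset.card_range, nsmul_eq_mul,
        mul_one]
      ring
    · rw [if_neg hjN]
      have hζ : ω ^ (M - N + j) ≠ 1 := by
        intro hone
        rw [hω.pow_eq_one_iff_dvd] at hone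
        obtain ⟨c, hc⟩ := hone
        rcases c with _ | c
        · omega
        · rcases c with _ | c
          · omega
          · have hexp : M * (c + 1 + 1) = M * c + M + M := by ring
            omega
      have hgeom : ∑ l ∈ Finset.range M, (ω ^ (M - N + j)) ^ l
          = ((ω ^ (M - N + j)) ^ M - 1) / (ω ^ (M - N + j) - 1) := geom_sum_eq hζ M
      have hζM : (ω ^ (M - N + j)) ^ M = 1 := by
        rw [← pow_mul, mul_comm, pow_mul, hω.pow_eq_one, one_pow]
      rw [hgeom, hζM, sub_self, zero_div, mul_zero]
  rw [Finset.sum_congr rfl hinner]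
  have hpull : ∀ j ∈ Finset.range M,
      (if j = N then ((M : ℂ) * (R : ℂ) ^ N) else 0) • P.coeff j
        = if j = N then ((M : ℂ) * (R : ℂ) ^ N) • P.coeff j else 0 := by
    intro j _
    split <;> simp
  rw [Finset.sum_congr rfl hpull,
    Finset.sum_ite_eq' (Finset.range M) N (fun j => ((M : ℂ) * (R : ℂ) ^ N) • P.coeff j),
    if_pos (Finset.mem_range.mpr hN)]

end PolyAux

section EpAux

open Polynomial

variable {A : Type*} [Ring A] [Algebra ℂ A]

noncomputable def auxEp (x : A) (ε : ℂ) (T : ℕ) : Polynomial A :=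
  ∑ i ∈ Finset.range (T + 1), Polynomial.monomial i ((ε ^ i / (i.factorial : ℂ)) • x ^ i)

lemma auxEp_coeff (x : A) (ε : ℂ) (T j : ℕ) :
    (auxEp x ε T).coeff j = if j ≤ T then (ε ^ j / (j.factorial : ℂ)) • x ^ j else 0 := by
  unfold auxEp
  rw [Polynomial.finset_sum_coeff]
  simp only [Polynomial.coeff_monomial]
  rw [Finset.sum_ite_eq' (Finset.range (T + 1)) j
    (fun i => (ε ^ i / (i.factorial : ℂ)) • x ^ i)]
  simp [Nat.lt_succ_iff]

lemma auxEp_natDegree (x : A) (ε : ℂ) (T : ℕ) : (auxEp x ε T).natDegree ≤ T := by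
  apply Polynomial.natDegree_le_iff_coeff_eq_zero.mpr
  intro N hN
  rw [auxEp_coeff, if_neg (by omega)]

lemma auxChooseFact {K : Type*} [Field K] [CharZero K] {i j : ℕ} (h : i ≤ j) :
    ((j.choose i : ℕ) : K) / (j.factorial : K)
      = 1 / ((i.factorial : K) * ((j - i).factorial : K)) := by
  have hfac := Nat.choose_mul_factorial_mul_factorial h
  have h1 : ((j.choose i : ℕ) : K) * (i.factorial : K) * ((j - i).factorial : K)
      = (j.factorial : K) := by exact_mod_cast congrArg (fun n : ℕ => (n : K)) hfac
  have hi0 : (i.factorial : K) ≠ 0 := by exact_mod_cast i.factorial_ne_zero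
  have hji0 : ((j - i).factorial : K) ≠ 0 := by exact_mod_cast (j - i).factorial_ne_zero
  have hj0 : (j.factorial : K) ≠ 0 := by exact_mod_cast j.factorial_ne_zero
  field_simp
  linear_combination h1

lemma auxFactSumR (j : ℕ) :
    ∑ q ∈ Finset.HasAntidiagonal.antidiagonal j, (1:ℝ) / ((q.1.factorial : ℝ) * (q.2.factorial : ℝ))
      = 2 ^ j / (j.factorial : ℝ) := by
  rw [Finset.Nat.sum_antidiagonal_eq_sum_range_succ_mk]
  have hstep : ∀ i ∈ Finset.range (j + 1),
      (1:ℝ) / ((i.factorial : ℝ) * ((j - i).factorial : ℝ))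
        = ((j.choose i : ℕ) : ℝ) / (j.factorial : ℝ) := by
    intro i hi
    rw [Finset.mem_range, Nat.lt_succ_iff] at hi
    rw [auxChooseFact hi]
  rw [Finset.sum_congr rfl hstep, ← Finset.sum_div]
  congr 1
  rw [← Nat.cast_sum]
  rw [Nat.sum_range_choose]
  push_cast
  ring

lemma auxEpMul_coeff_low (x : A) (ε₁ ε₂ : ℂ) (T j : ℕ) (hj : j ≤ T) :
    (auxEp x ε₁ T * auxEp x ε₂ T).coeff j
      = (((ε₁ + ε₂) ^ j / (j.factorial : ℂ))) • x ^ j := by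
  rw [Polynomial.coeff_mul]
  have hterm : ∀ q ∈ Finset.HasAntidiagonal.antidiagonal j,
      (auxEp x ε₁ T).coeff q.1 * (auxEp x ε₂ T).coeff q.2
        = ((ε₁ ^ q.1 * ε₂ ^ q.2) / ((q.1.factorial : ℂ) * (q.2.factorial : ℂ))) • x ^ j := by
    intro q hq
    rw [Finset.HasAntidiagonal.mem_antidiagonal] at hq
    rw [auxEp_coeff, auxEp_coeff, if_pos (by omega), if_pos (by omega),
      smul_mul_smul_comm, ← pow_add, hq]
    congr 1
    field_simp
  rw [Finset.sum_congr rfl hterm, ← Finset.sum_smul]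
  congr 1
  rw [Finset.Nat.sum_antidiagonal_eq_sum_range_succ_mk, add_pow, Finset.sum_div]
  apply Finset.sum_congr rfl
  intro i hi
  rw [Finset.mem_range, Nat.lt_succ_iff] at hi
  have hi0 : (i.factorial : ℂ) ≠ 0 := by exact_mod_cast i.factorial_ne_zero
  have hji0 : ((j - i).factorial : ℂ) ≠ 0 := by exact_mod_cast (j - i).factorial_ne_zero
  have hj0 : (j.factorial : ℂ) ≠ 0 := by exact_mod_cast j.factorial_ne_zero
  have hcf2 : ((j.choose i : ℕ) : ℂ) * (i.factorial : ℂ) * ((j - i).factorial : ℂ)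
      = (j.factorial : ℂ) := by
    exact_mod_cast congrArg (fun n : ℕ => (n : ℂ)) (Nat.choose_mul_factorial_mul_factorial hi)
  rw [div_eq_div_iff (mul_ne_zero hi0 hji0) hj0]
  linear_combination (-(ε₁ ^ i * ε₂ ^ (j - i))) * hcf2

lemma auxEpMul_coeff_bound (x : A) (ε₁ ε₂ : ℂ)
    (hε₁ : ‖ε₁‖ = 1) (hε₂ : ‖ε₂‖ = 1) (T j : ℕ) :
    ∃ S : ℂ, (auxEp x ε₁ T * auxEp x ε₂ T).coeff j = S • x ^ j ∧
      ‖S‖ ≤ 2 ^ j / (j.factorial : ℝ) := by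
  refine ⟨∑ q ∈ Finset.HasAntidiagonal.antidiagonal j,
    (if q.1 ≤ T then ε₁ ^ q.1 / (q.1.factorial : ℂ) else 0) *
    (if q.2 ≤ T then ε₂ ^ q.2 / (q.2.factorial : ℂ) else 0), ?_, ?_⟩
  · rw [Polynomial.coeff_mul, Finset.sum_smul]
    apply Finset.sum_congr rfl
    intro q hq
    rw [Finset.HasAntidiagonal.mem_antidiagonal] at hq
    rw [auxEp_coeff, auxEp_coeff]
    by_cases h1 : q.1 ≤ T <;> by_cases h2 : q.2 ≤ T <;>
      simp only [if_pos, if_neg, h1, h2, if_true, if_false, zero_mul, mul_zero, zero_smul,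
        smul_mul_smul_comm, ← pow_add, hq]
  · refine le_trans (norm_sum_le _ _) ?_
    have hterm : ∀ q ∈ Finset.HasAntidiagonal.antidiagonal j,
        ‖(if q.1 ≤ T then ε₁ ^ q.1 / (q.1.factorial : ℂ) else 0) *
          (if q.2 ≤ T then ε₂ ^ q.2 / (q.2.factorial : ℂ) else 0)‖
          ≤ (1:ℝ) / ((q.1.factorial : ℝ) * (q.2.factorial : ℝ)) := by
      intro q _
      rw [norm_mul]
      have hb1 : ‖(if q.1 ≤ T then ε₁ ^ q.1 / (q.1.factorial : ℂ) else 0)‖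
          ≤ 1 / (q.1.factorial : ℝ) := by
        split
        · rw [norm_div, norm_pow, hε₁, one_pow]
          simp [Complex.norm_natCast]
        · simp only [norm_zero]
          positivity
      have hb2 : ‖(if q.2 ≤ T then ε₂ ^ q.2 / (q.2.factorial : ℂ) else 0)‖
          ≤ 1 / (q.2.factorial : ℝ) := by
        split
        · rw [norm_div, norm_pow, hε₂, one_pow]
          simp [Complex.norm_natCast]
        · simp only [norm_zero]
          positivity
      calc ‖_‖ * ‖_‖ ≤ (1 / (q.1.factorial : ℝ)) * (1 / (q.2.factorial : ℝ)) := by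
            apply mul_le_mul hb1 hb2 (norm_nonneg _) (by positivity)
      _ = 1 / ((q.1.factorial : ℝ) * (q.2.factorial : ℝ)) := by
            rw [div_mul_div_comm, one_mul]
    refine le_trans (Finset.sum_le_sum hterm) ?_
    rw [auxFactSumR j]

end EpAux

section Comm

open Polynomial

variable {A : Type*} [Ring A] [Algebra ℂ A] {p m : ℝ}

lemma aux_coeff_zero_pow (W : Polynomial A) (N : ℕ) : (W ^ N).coeff 0 = (W.coeff 0) ^ N := by
  induction N with
  | zero => simp
  | succ N ih => rw [pow_succ, Polynomial.mul_coeff_zero, ih, pow_succ]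

set_option maxHeartbeats 1000000 in
lemma aux_comm (hp0 : 0 < p) (nrm : A → ℝ) (hm : 0 < m) (hm1 : 1 ≤ m)
    (hnn : ∀ z : A, 0 ≤ nrm z) (hnrm0 : nrm (0 : A) = 0)
    (h_add : ∀ a b : A, nrm (a + b) ≤ nrm a + nrm b)
    (h_smul : ∀ (z : ℂ) (a : A), nrm (z • a) = ‖z‖ ^ p * nrm a)
    (h_mul : ∀ a b : A, nrm (a * b) ≤ nrm a * nrm b)
    (h_zero : ∀ a : A, nrm a = 0 → a = 0)
    (h_sq : ∀ a : A, nrm a ^ 2 ≤ m * nrm (a ^ 2)) :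
    ∀ x y : A, x * y = y * x := by
  intro x y
  set c := x * y - y * x with hc
  suffices hcz : nrm c = 0 by
    have h0 := h_zero c hcz
    rw [hc] at h0
    exact sub_eq_zero.mp h0
  set Bb : ℝ := 2 * (m + 1) * (nrm y + 1) with hBb
  have hBbpos : 0 < Bb := by nlinarith [hnn y, hm]
  have key : ∀ ρ : ℝ, 0 < ρ → nrm c * ρ ≤ m * Bb := by
    intro ρ hρ
    set R : ℝ := ρ ^ (1 / p) with hRdef
    have hRpos : 0 < R := Real.rpow_pos_of_pos hρ _
    have hRp : R ^ p = ρ := by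
      rw [hRdef, ← Real.rpow_mul hρ.le, one_div_mul_cancel hp0.ne', Real.rpow_one]
    set w : ℝ := ρ * 2 ^ p * nrm x with hw
    have hwnn : 0 ≤ w := by
      have h2p : (0:ℝ) ≤ (2:ℝ) ^ p := (Real.rpow_pos_of_pos two_pos p).le
      exact mul_nonneg (mul_nonneg hρ.le h2p) (hnn x)
    obtain ⟨T₀, hT₀1, hT₀⟩ := auxTail hwnn hp0
    have hδ : ∀ T : ℕ, T₀ ≤ T → ∀ z : ℂ, ‖z‖ = R →
        nrm (auxEv z (auxEp x (-1) T * auxEp x 1 T) - 1) ≤ 1 := by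
      intro T hT z hz
      set F := auxEp x (-1) T * auxEp x 1 T with hF
      have hdegF : (F - 1).natDegree < 2 * T + 1 := by
        have h1 : (F - 1).natDegree ≤ 2 * T := by
          apply le_trans (Polynomial.natDegree_sub_le _ _)
          apply max_le
          · refine le_trans Polynomial.natDegree_mul_le ?_
            have e1 := auxEp_natDegree x (-1) T
            have e2 := auxEp_natDegree x 1 T
            omega
          · simp
        omega
      have hrw : auxEv z F - 1 = auxEv z (F - 1) := by
        rw [auxEv_sub, auxEv_one]
      rw [hrw, auxEv_eq_sum z _ hdegF]
      refine le_trans (aux_nrm_finsum nrm hnrm0 h_add _ _) ?_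
      have hterm : ∀ j ∈ Finset.range (2 * T + 1),
          nrm ((z ^ j) • (F - 1).coeff j)
            ≤ if T < j then w ^ j / ((j.factorial : ℝ)) ^ p else 0 := by
        intro j hj
        rw [Finset.mem_range] at hj
        by_cases hjT : T < j
        · rw [if_pos hjT]
          obtain ⟨S, hS, hSb⟩ := auxEpMul_coeff_bound x (-1) 1 (by simp) (by simp) T j
          have hcoeff : (F - 1).coeff j = S • x ^ j := by
            rw [Polynomial.coeff_sub, hF, hS, Polynomial.coeff_one,
              if_neg (by omega : ¬ j = 0), sub_zero]
          rw [hcoeff, smul_smul, h_smul]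
          have habs : ‖z ^ j * S‖ ≤ R ^ j * (2 ^ j / (j.factorial : ℝ)) := by
            rw [norm_mul, norm_pow, hz]
            apply mul_le_mul_of_nonneg_left hSb (by positivity)
          have hxj : nrm (x ^ j) ≤ nrm x ^ j := aux_powle nrm hnn h_mul x j (by omega)
          calc ‖z ^ j * S‖ ^ p * nrm (x ^ j)
              ≤ (R ^ j * (2 ^ j / (j.factorial : ℝ))) ^ p * nrm x ^ j := by
                apply mul_le_mul (Real.rpow_le_rpow (norm_nonneg _) habs hp0.le)
                  hxj (hnn _) (by positivity)
          _ = w ^ j / ((j.factorial : ℝ)) ^ p := by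
              rw [show R ^ j * ((2:ℝ) ^ j / (j.factorial : ℝ))
                  = (R ^ j * 2 ^ j) / (j.factorial : ℝ) from by ring]
              rw [Real.div_rpow (by positivity) (by positivity),
                Real.mul_rpow (by positivity) (by positivity),
                powRpowSwap hRpos.le p j, powRpowSwap (by norm_num : (0:ℝ) ≤ 2) p j, hRp]
              rw [hw, mul_pow, mul_pow]
              ring
        · rw [if_neg hjT]
          push_neg at hjT
          have hcoeff0 : (F - 1).coeff j = 0 := by
            rw [Polynomial.coeff_sub, hF, auxEpMul_coeff_low x (-1) 1 T j hjT]
            rcases Nat.eq_zero_or_pos j with hj0 | hjpos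
            · subst hj0
              simp
            · rw [Polynomial.coeff_one, if_neg (by omega : ¬ j = 0),
                show ((-1:ℂ) + 1) = 0 from by ring, zero_pow (by omega : j ≠ 0)]
              simp
          rw [hcoeff0, smul_zero, hnrm0]
      refine le_trans (Finset.sum_le_sum hterm) ?_
      rw [← Finset.sum_filter]
      have hfilt : (Finset.range (2 * T + 1)).filter (fun j => T < j) = Finset.Ioc T (2 * T) := by
        ext j
        simp only [Finset.mem_filter, Finset.mem_range, Finset.mem_Ioc]
        omega
      rw [hfilt]
      exact hT₀ T hT
    have hkey : ∀ k : ℕ, 1 ≤ k →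
        (nrm c * ρ / (m * Bb)) ^ 2 ^ k ≤ (2 * (T₀:ℝ) + 3) * ((2:ℝ) ^ k + 1) ^ 2 := by
      intro k hk
      set N := 2 ^ k with hN
      have hN1 : 1 ≤ N := Nat.one_le_two_pow
      set T := T₀ + k with hT
      have hT1 : 1 ≤ T := by omega
      set M := 2 * T * N + 1 with hM
      have hM0 : M ≠ 0 := by omega
      set ω : ℂ := Complex.exp (2 * Real.pi * Complex.I / M) with hω
      have hωabs : ‖ω‖ = 1 := by
        rw [hω, show 2 * (Real.pi:ℂ) * Complex.I / (M:ℂ)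
          = ((2 * Real.pi / M : ℝ) : ℂ) * Complex.I from by push_cast; ring,
          Complex.norm_exp_ofReal_mul_I]
      set g : Polynomial A := auxEp x 1 T * Polynomial.C y * auxEp x (-1) T
        - Polynomial.C y with hg
      have hE1c0 : (auxEp x 1 T).coeff 0 = 1 := by
        rw [auxEp_coeff, if_pos (by omega : (0:ℕ) ≤ T)]
        simp
      have hE1c1 : (auxEp x 1 T).coeff 1 = x := by
        rw [auxEp_coeff, if_pos (by omega : (1:ℕ) ≤ T)]
        simp
      have hE2c0 : (auxEp x (-1) T).coeff 0 = 1 := by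
        rw [auxEp_coeff, if_pos (by omega : (0:ℕ) ≤ T)]
        simp
      have hE2c1 : (auxEp x (-1) T).coeff 1 = -x := by
        rw [auxEp_coeff, if_pos (by omega : (1:ℕ) ≤ T)]
        simp
      have hg0 : g.coeff 0 = 0 := by
        rw [hg, Polynomial.coeff_sub, Polynomial.mul_coeff_zero, Polynomial.mul_coeff_zero,
          hE1c0, Polynomial.coeff_C_zero, hE2c0]
        simp
      have hg1 : g.coeff 1 = c := by
        rw [hg, Polynomial.coeff_sub, Polynomial.coeff_C, if_neg (by omega : ¬ (1:ℕ) = 0),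
          Polynomial.coeff_mul, Finset.Nat.sum_antidiagonal_eq_sum_range_succ_mk,
          Finset.sum_range_succ, Finset.sum_range_succ, Finset.sum_range_zero,
          Polynomial.coeff_mul_C, Polynomial.coeff_mul_C, hE1c0, hE1c1, hE2c0, hE2c1, hc]
        simp only [zero_add, Nat.sub_zero, Nat.sub_self]
        rw [mul_neg, one_mul, mul_one]
        abel
      have hdegg : g.natDegree ≤ 2 * T := by
        rw [hg]
        apply le_trans (Polynomial.natDegree_sub_le _ _)
        apply max_le
        · refine le_trans Polynomial.natDegree_mul_le ?_
          have h1 : (auxEp x 1 T * Polynomial.C y).natDegree ≤ T := by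
            refine le_trans Polynomial.natDegree_mul_le ?_
            have := auxEp_natDegree x 1 T
            rw [Polynomial.natDegree_C]
            omega
          have := auxEp_natDegree x (-1) T
          omega
        · rw [Polynomial.natDegree_C]
          omega
      have hgX : g = Polynomial.X * g.divX := by
        conv_lhs => rw [← Polynomial.X_mul_divX_add g]
        rw [hg0, map_zero, add_zero]
      have hcoeffN : (g ^ N).coeff N = c ^ N := by
        conv_lhs => rw [hgX]
        rw [(Polynomial.commute_X g.divX).mul_pow]
        have hXc := Polynomial.coeff_X_pow_mul (g.divX ^ N) N 0
        rw [zero_add] at hXc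
        rw [hXc, aux_coeff_zero_pow, Polynomial.coeff_divX, zero_add, hg1]
      have heval : ∀ z : ℂ, ‖z‖ = R → nrm (auxEv z g) ≤ Bb := by
        intro z hz
        have hev : auxEv z g
            = (auxEv z (auxEp x 1 T)) * (y * auxEv z (auxEp x (-1) T)) - y := by
          rw [hg, auxEv_sub, auxEv_mul, auxEv_mul, auxEv_C, mul_assoc]
        rw [hev]
        have htri : nrm (auxEv z (auxEp x 1 T) * (y * auxEv z (auxEp x (-1) T)) - y)
            ≤ nrm (auxEv z (auxEp x 1 T) * (y * auxEv z (auxEp x (-1) T))) + nrm y := by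
          rw [sub_eq_add_neg]
          refine le_trans (h_add _ _) ?_
          rw [aux_nrm_neg hp0 nrm h_smul]
        refine le_trans htri ?_
        have hrot := aux_rot nrm hm hm1 hnn h_mul h_zero hnrm0 h_sq
          (auxEv z (auxEp x 1 T)) (y * auxEv z (auxEp x (-1) T))
        have hre : (y * auxEv z (auxEp x (-1) T)) * auxEv z (auxEp x 1 T)
            = y * auxEv z (auxEp x (-1) T * auxEp x 1 T) := by
          rw [auxEv_mul, mul_assoc]
        rw [hre] at hrot
        set d := auxEv z (auxEp x (-1) T * auxEp x 1 T) - 1 with hd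
        have hyd : y * auxEv z (auxEp x (-1) T * auxEp x 1 T) = y + y * d := by
          rw [hd]
          noncomm_ring
        have hdb : nrm d ≤ 1 := hδ T (by omega) z hz
        have h2 : nrm (y * auxEv z (auxEp x (-1) T * auxEp x 1 T)) ≤ 2 * nrm y := by
          rw [hyd]
          refine le_trans (h_add _ _) ?_
          have h3 := le_trans (h_mul y d) (mul_le_mul_of_nonneg_left hdb (hnn y))
          linarith
        have h4 := le_trans hrot (mul_le_mul_of_nonneg_left h2 hm.le)
        have hfin : m * (2 * nrm y) + nrm y ≤ Bb := by
          rw [hBb]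
          nlinarith [hnn y, hm]
        linarith
      have hdegP : (g ^ N).natDegree < M := by
        apply lt_of_le_of_lt (Polynomial.natDegree_pow_le)
        have h1 : N * g.natDegree ≤ N * (2 * T) := Nat.mul_le_mul_left N hdegg
        have h2 : N * (2 * T) = 2 * T * N := by ring
        omega
      have hNM : N < M := by
        have h1 : 1 * N ≤ (2 * T) * N := Nat.mul_le_mul_right N (by omega)
        omega
      have havgid := auxAvg (g ^ N) M N R hM0 hdegP hNM
      rw [hcoeffN] at havgid
      have hLHS : nrm (((M : ℂ) * (R:ℂ) ^ N) • c ^ N) = ((M:ℝ) * R ^ N) ^ p * nrm (c ^ N) := by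
        rw [h_smul]
        congr 2
        rw [norm_mul, norm_pow, Complex.norm_natCast, Complex.norm_of_nonneg hRpos.le]
      have hRHS : nrm (∑ l ∈ Finset.range M, (ω ^ ((M - N) * l)) • auxEv ((R:ℂ) * ω ^ l) (g ^ N))
          ≤ (M : ℝ) * Bb ^ N := by
        refine le_trans (aux_nrm_finsum nrm hnrm0 h_add _ _) ?_
        have hterm2 : ∀ l ∈ Finset.range M,
            nrm ((ω ^ ((M - N) * l)) • auxEv ((R:ℂ) * ω ^ l) (g ^ N)) ≤ Bb ^ N := by
          intro l _
          rw [h_smul]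
          have h1 : ‖ω ^ ((M - N) * l)‖ = 1 := by
            rw [norm_pow, hωabs, one_pow]
          rw [h1, Real.one_rpow, one_mul, auxEv_pow]
          have habsz : ‖(R:ℂ) * ω ^ l‖ = R := by
            rw [norm_mul, norm_pow, hωabs, one_pow, mul_one, Complex.norm_of_nonneg hRpos.le]
          calc nrm ((auxEv ((R:ℂ) * ω ^ l) g) ^ N) ≤ nrm (auxEv ((R:ℂ) * ω ^ l) g) ^ N :=
              aux_powle nrm hnn h_mul _ N hN1
          _ ≤ Bb ^ N := pow_le_pow_left₀ (hnn _) (heval _ habsz) N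
        refine le_trans (Finset.sum_le_sum hterm2) ?_
        rw [Finset.sum_const, Finset.card_range, nsmul_eq_mul]
      rw [havgid, hLHS] at hRHS
      have hchain := aux_chain nrm hm hnn h_sq c k
      have hMp : (1:ℝ) ≤ ((M:ℝ)) ^ p := by
        rw [← Real.one_rpow p]
        apply Real.rpow_le_rpow (by norm_num) _ hp0.le
        exact_mod_cast Nat.one_le_iff_ne_zero.mpr hM0
      have hsplit : ((M:ℝ) * R ^ N) ^ p = (M:ℝ) ^ p * ρ ^ N := by
        rw [Real.mul_rpow (by positivity) (by positivity), powRpowSwap hRpos.le p N, hRp]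
      have hmain : ρ ^ N * nrm (c ^ N) ≤ (M:ℝ) * Bb ^ N := by
        have h1 : ρ ^ N * nrm (c ^ N) ≤ (M:ℝ)^p * ρ^N * nrm (c ^ N) := by
          nlinarith [pow_nonneg hρ.le N, hnn (c ^ N),
            mul_nonneg (pow_nonneg hρ.le N) (hnn (c ^ N))]
        calc ρ ^ N * nrm (c ^ N) ≤ (M:ℝ)^p * ρ^N * nrm (c ^ N) := h1
        _ = ((M:ℝ) * R ^ N) ^ p * nrm (c ^ N) := by rw [hsplit]
        _ ≤ (M:ℝ) * Bb ^ N := hRHS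
      have htN : (nrm c * ρ / (m * Bb)) ^ N ≤ (M : ℝ) := by
        rw [div_pow, mul_pow (nrm c) ρ, mul_pow m Bb, div_le_iff₀ (by positivity)]
        calc nrm c ^ N * ρ ^ N
            ≤ (m ^ (N - 1) * nrm (c ^ N)) * ρ ^ N := by
              apply mul_le_mul_of_nonneg_right hchain (by positivity)
        _ = m ^ (N-1) * (ρ ^ N * nrm (c ^ N)) := by ring
        _ ≤ m ^ (N-1) * ((M:ℝ) * Bb ^ N) := by
            apply mul_le_mul_of_nonneg_left hmain (by positivity)
        _ ≤ m ^ N * ((M:ℝ) * Bb ^ N) := by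
            apply mul_le_mul_of_nonneg_right _ (by positivity)
            apply pow_le_pow_right₀ hm1
            omega
        _ = (M:ℝ) * (m ^ N * Bb ^ N) := by ring
      refine le_trans htN ?_
      have hk2 : (k:ℝ) ≤ 2 ^ k := by exact_mod_cast (Nat.lt_two_pow_self (n := k)).le
      have hT₀c : (1:ℝ) ≤ (T₀:ℝ) := by exact_mod_cast hT₀1
      set P : ℝ := (2:ℝ) ^ k with hP
      have hPpos : 0 < P := by positivity
      have hsq : P ^ 2 ≤ (P + 1) ^ 2 := by nlinarith
      have h1 : P ≤ (P + 1) ^ 2 := by nlinarith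
      have h2 : (k:ℝ) * P ≤ (P + 1) ^ 2 := by nlinarith [hk2]
      have h3 : (1:ℝ) ≤ (P + 1) ^ 2 := by nlinarith
      have h4 : 2 * (T₀:ℝ) * P ≤ 2 * (T₀:ℝ) * (P + 1) ^ 2 := by
        apply mul_le_mul_of_nonneg_left h1 (by positivity)
      have hMcast : (M:ℝ) = 2 * ((T₀:ℝ) + (k:ℝ)) * P + 1 := by
        rw [hM, hT, hN, hP]
        push_cast
        ring
      rw [hMcast]
      nlinarith [h4, h2, h3]
    have htnn : 0 ≤ nrm c * ρ / (m * Bb) :=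
      div_nonneg (mul_nonneg (hnn c) hρ.le) (by positivity)
    have ht := auxL0 2 htnn (by positivity : (0:ℝ) < 2 * (T₀:ℝ) + 3) hkey
    rw [div_le_one (by positivity)] at ht
    exact ht
  by_contra hne
  have hpos : 0 < nrm c := lt_of_le_of_ne (hnn c) (Ne.symm hne)
  have hk := key ((m * Bb + 1) / nrm c) (by positivity)
  rw [mul_comm (nrm c), div_mul_cancel₀ _ hne] at hk
  linarith

end Comm

/-- If ‖a‖² ≤ m‖a²‖ on a complex p-normed algebra, then |a|² ≤ m^(2/p)·|a²| for the
support seminorm |·|. -/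
theorem stmt12 {A : Type*} [Ring A] [Algebra ℂ A]
    {p : ℝ} (hp0 : 0 < p) (hp1 : p ≤ 1)
    (nrm : A → ℝ)
    (h_add : ∀ a b : A, nrm (a + b) ≤ nrm a + nrm b)
    (h_smul : ∀ (z : ℂ) (a : A), nrm (z • a) = ‖z‖ ^ p * nrm a)
    (h_mul : ∀ a b : A, nrm (a * b) ≤ nrm a * nrm b)
    (h_zero : ∀ a : A, nrm a = 0 → a = 0)
    {m : ℝ} (hm : 0 < m)
    (h_sq : ∀ a : A, nrm a ^ 2 ≤ m * nrm (a ^ 2)) :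
    ∀ a : A, suppSeminorm p nrm a ^ 2 ≤ m ^ (2 / p) * suppSeminorm p nrm (a ^ 2) := by
  intro a
  classical
  have hnrm0 : nrm (0 : A) = 0 := aux_nrm0 hp0 nrm h_smul
  have hnn : ∀ z : A, 0 ≤ nrm z := aux_nrm_nonneg hp0 nrm h_add h_smul
  by_cases htriv : ∀ z : A, nrm z = 0
  · have hset : ∀ b : A, {s : ℝ | ∃ l : List A, l ≠ [] ∧ l.sum = b ∧
        s = (l.map fun x => nrm x ^ (1 / p)).sum} = {0} := by
      intro b
      ext s
      simp only [Set.mem_setOf_eq, Set.mem_singleton_iff]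
      constructor
      · rintro ⟨l, hl, hsum, rfl⟩
        apply List.sum_eq_zero
        intro u hu
        obtain ⟨cu, _, rfl⟩ := List.mem_map.mp hu
        rw [htriv cu, Real.zero_rpow (one_div_ne_zero hp0.ne')]
      · rintro rfl
        refine ⟨[b], by simp, by simp, ?_⟩
        simp [htriv b, Real.zero_rpow (one_div_ne_zero hp0.ne'),
          Real.zero_rpow (inv_ne_zero hp0.ne')]
    unfold suppSeminorm
    rw [hset a, hset (a ^ 2), csInf_singleton]
    norm_num
  · push_neg at htriv
    obtain ⟨z₀, hz₀⟩ := htriv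
    have hm1 : 1 ≤ m := by
      have h1 := h_sq z₀
      have h2 : nrm (z₀ ^ 2) ≤ nrm z₀ * nrm z₀ := by
        rw [pow_two]
        exact h_mul z₀ z₀
      have h3 : 0 < nrm z₀ := lt_of_le_of_ne (hnn z₀) (Ne.symm hz₀)
      have h4 : m * nrm (z₀ ^ 2) ≤ m * (nrm z₀ * nrm z₀) :=
        mul_le_mul_of_nonneg_left h2 hm.le
      rw [pow_two] at h1
      nlinarith [h1, h4, h3, mul_pos h3 h3]
    have hcomm := aux_comm hp0 nrm hm hm1 hnn hnrm0 h_add h_smul h_mul h_zero h_sq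
    have hstar := aux_star hp0 nrm hm hm1 hnn hnrm0 h_add h_smul h_mul h_zero h_sq hcomm
    have hlnn : ∀ (l : List A), 0 ≤ (l.map fun x => nrm x ^ (1 / p)).sum := by
      intro l
      apply List.sum_nonneg
      intro u hu
      obtain ⟨cu, _, rfl⟩ := List.mem_map.mp hu
      exact Real.rpow_nonneg (hnn cu) _
    set S1 := {s : ℝ | ∃ l : List A, l ≠ [] ∧ l.sum = a ∧
      s = (l.map fun x => nrm x ^ (1 / p)).sum} with hS1
    set S2 := {s : ℝ | ∃ l : List A, l ≠ [] ∧ l.sum = a ^ 2 ∧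
      s = (l.map fun x => nrm x ^ (1 / p)).sum} with hS2
    have hsupp1 : suppSeminorm p nrm a = sInf S1 := rfl
    have hsupp2 : suppSeminorm p nrm (a ^ 2) = sInf S2 := rfl
    have hS2ne : S2.Nonempty := ⟨([a ^ 2].map fun x => nrm x ^ (1 / p)).sum,
      [a ^ 2], by simp, by simp, rfl⟩
    have hS1nonneg : ∀ s ∈ S1, (0:ℝ) ≤ s := by
      rintro s ⟨l, _, _, rfl⟩
      exact hlnn l
    have hbdd1 : BddBelow S1 := ⟨0, fun s hs => hS1nonneg s hs⟩
    have hI1 : suppSeminorm p nrm a ≤ nrm a ^ (1 / p) := by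
      rw [hsupp1]
      apply csInf_le hbdd1
      exact ⟨[a], by simp, by simp, by simp⟩
    have hI0 : 0 ≤ suppSeminorm p nrm a := by
      rw [hsupp1]
      exact Real.sInf_nonneg hS1nonneg
    have hK : (0:ℝ) < m ^ (2 / p) := Real.rpow_pos_of_pos hm _
    have hmain : ∀ s ∈ S2, suppSeminorm p nrm a ^ 2 ≤ m ^ (2 / p) * s := by
      rintro s ⟨l, hlne, hlsum, rfl⟩
      set X := (l.map fun x => nrm x ^ (1 / p)).sum with hX
      have hXnn : 0 ≤ X := hlnn l
      have h1 : suppSeminorm p nrm a ^ 2 ≤ (nrm a ^ (1 / p)) ^ 2 :=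
        pow_le_pow_left₀ hI0 hI1 2
      have h2 : (nrm a ^ (1 / p)) ^ 2 = (nrm a ^ 2 : ℝ) ^ (1 / p) :=
        (powRpowSwap (hnn a) (1 / p) 2).symm
      have h3 : (nrm a ^ 2 : ℝ) ^ (1 / p) ≤ (m * nrm (a ^ 2)) ^ (1 / p) :=
        Real.rpow_le_rpow (pow_nonneg (hnn a) 2) (h_sq a) (one_div_nonneg.mpr hp0.le)
      have h5 : nrm (a ^ 2) ≤ m * X ^ p := by
        rw [← hlsum]
        exact hstar l
      have h6 : (m * nrm (a ^ 2)) ^ (1 / p) ≤ (m * (m * X ^ p)) ^ (1 / p) := by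
        apply Real.rpow_le_rpow (mul_nonneg hm.le (hnn _))
          (mul_le_mul_of_nonneg_left h5 hm.le) (one_div_nonneg.mpr hp0.le)
      have h7 : (m * (m * X ^ p)) ^ (1 / p) = m ^ (1 / p) * m ^ (1 / p) * X := by
        rw [show m * (m * X ^ p) = (m * m) * X ^ p from by ring,
          Real.mul_rpow (mul_nonneg hm.le hm.le) (Real.rpow_nonneg hXnn p),
          Real.mul_rpow hm.le hm.le,
          ← Real.rpow_mul hXnn, mul_one_div, div_self hp0.ne', Real.rpow_one]
      have h8 : m ^ (1 / p) * m ^ (1 / p) = m ^ (2 / p) := by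
        rw [← Real.rpow_add hm]
        congr 1
        ring
      calc suppSeminorm p nrm a ^ 2 ≤ (nrm a ^ (1 / p)) ^ 2 := h1
      _ = (nrm a ^ 2 : ℝ) ^ (1 / p) := h2
      _ ≤ (m * nrm (a ^ 2)) ^ (1 / p) := h3
      _ ≤ (m * (m * X ^ p)) ^ (1 / p) := h6
      _ = m ^ (1 / p) * m ^ (1 / p) * X := h7
      _ = m ^ (2 / p) * X := by rw [h8]
    have hlow : suppSeminorm p nrm a ^ 2 / m ^ (2 / p) ≤ sInf S2 := by
      apply le_csInf hS2ne
      intro s hs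
      rw [div_le_iff₀ hK]
      calc suppSeminorm p nrm a ^ 2 ≤ m ^ (2 / p) * s := hmain s hs
      _ = s * m ^ (2 / p) := mul_comm _ _
    rw [div_le_iff₀ hK] at hlow
    rw [hsupp2]
    linarith [hlow]
end

section
/- Let (A, ‖·‖) be a complex uniform p-normed algebra, i.e. a complex p-normed algebra with ‖a²‖ = ‖a‖² for all a ∈ A, and let |·| be the support seminorm of ‖·‖. Then |a| = ‖a‖^(1/p) for all a ∈ A. -/
open Polynomial Finset

structure PNA {A : Type*} [Ring A] [Algebra ℂ A] (p : ℝ) (nrm : A → ℝ) : Prop where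
  hp0 : 0 < p
  hp1 : p ≤ 1
  add : ∀ a b : A, nrm (a + b) ≤ nrm a + nrm b
  smul : ∀ (z : ℂ) (a : A), nrm (z • a) = ‖z‖ ^ p * nrm a
  mul : ∀ a b : A, nrm (a * b) ≤ nrm a * nrm b
  zero : ∀ a : A, nrm a = 0 → a = 0
  sq : ∀ a : A, nrm (a ^ 2) = nrm a ^ 2
  one : nrm 1 = 1

namespace PNA

variable {A : Type*} [Ring A] [Algebra ℂ A] {p : ℝ} {nrm : A → ℝ}

theorem nrm_zero (h : PNA p nrm) : nrm 0 = 0 := by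
  have := h.smul 0 0
  simpa [Real.zero_rpow h.hp0.ne'] using this

theorem nrm_neg (h : PNA p nrm) (a : A) : nrm (-a) = nrm a := by
  have := h.smul (-1) a
  simpa using this

theorem nonneg (h : PNA p nrm) (a : A) : 0 ≤ nrm a := by
  have h0 : nrm (0:A) ≤ nrm a + nrm (-a) := by
    simpa using h.add a (-a)
  rw [h.nrm_zero, h.nrm_neg] at h0
  linarith

theorem nrm_smul_nat (h : PNA p nrm) (n : ℕ) (a : A) :
    nrm (n • a) = (n:ℝ) ^ p * nrm a := by
  have e1 : (n:ℕ) • a = (n : ℂ) • a := by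
    simp [Nat.cast_smul_eq_nsmul]
  rw [e1, h.smul]
  simp

theorem pow_le (h : PNA p nrm) (a : A) (n : ℕ) : nrm (a ^ n) ≤ nrm a ^ n := by
  induction n with
  | zero => simp [h.one]
  | succ k ih =>
      calc nrm (a ^ (k+1)) = nrm (a ^ k * a) := by rw [pow_succ]
      _ ≤ nrm (a ^ k) * nrm a := h.mul _ _
      _ ≤ nrm a ^ k * nrm a := by
          nlinarith [h.nonneg a, h.nonneg (a ^ k)]
      _ = nrm a ^ (k+1) := by rw [pow_succ]

theorem pow_two_pow (h : PNA p nrm) (a : A) (k : ℕ) :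
    nrm (a ^ (2 ^ k)) = nrm a ^ (2 ^ k) := by
  induction k with
  | zero => simp
  | succ m ih =>
      have e : a ^ (2 ^ (m+1)) = (a ^ (2 ^ m)) ^ 2 := by
        rw [← pow_mul, pow_succ]
      rw [e, h.sq, ih, ← pow_mul, ← pow_succ]

theorem sum_le (h : PNA p nrm) {ι : Type*} (s : Finset ι) (f : ι → A) :
    nrm (∑ i ∈ s, f i) ≤ ∑ i ∈ s, nrm (f i) := by
  classical
  induction s using Finset.cons_induction with
  | empty => simp [h.nrm_zero]
  | cons i s his ih =>
      rw [Finset.sum_cons, Finset.sum_cons]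
      exact le_trans (h.add _ _) (by linarith)

end PNA

/-- Key limiting lemma: if `x ^ 2^k ≤ 2^k * c * y ^ 2^k` for all `k`, then `x ≤ y`. -/
theorem le_of_forall_two_pow_le {x y c : ℝ} (hx : 0 ≤ x) (hy : 0 ≤ y) (hc : 1 ≤ c)
    (H : ∀ k : ℕ, x ^ (2 ^ k) ≤ 2 ^ k * c * y ^ (2 ^ k)) : x ≤ y := by
  by_contra hxy
  push_neg at hxy
  rcases eq_or_lt_of_le hy with hy0 | hy0
  · have hx0 : 0 < x := lt_of_le_of_lt hy hxy
    have := H 0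
    simp [← hy0] at this
    nlinarith
  · set ρ := x / y with hρdef
    have hρ : 1 < ρ := (one_lt_div hy0).2 hxy
    have Hρ : ∀ k : ℕ, ρ ^ (2 ^ k) ≤ 2 ^ k * c := by
      intro k
      have hyk : 0 < y ^ (2 ^ k) := pow_pos hy0 _
      rw [hρdef, div_pow, div_le_iff₀ hyk]
      exact H k
    obtain ⟨m, hm⟩ := pow_unbounded_of_one_lt (4:ℝ) hρ
    have hj : (4:ℝ) ≤ ρ ^ (2 ^ m) :=
      hm.le.trans (pow_le_pow_right₀ hρ.le (Nat.lt_two_pow_self (n := m)).le)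
    have key : ∀ i : ℕ, (4:ℝ) * 2 ^ i ≤ 2 ^ m * c := by
      intro i
      have h1 : ρ ^ (2 ^ (m + i)) = (ρ ^ (2 ^ m)) ^ (2 ^ i) := by
        rw [← pow_mul, ← pow_add]
      have h2 : (4:ℝ) ^ (2 ^ i) ≤ (ρ ^ (2 ^ m)) ^ (2 ^ i) :=
        pow_le_pow_left₀ (by norm_num) hj _
      have h3 : (4:ℝ) ^ (i + 1) ≤ (4:ℝ) ^ (2 ^ i) :=
        pow_le_pow_right₀ (by norm_num) (Nat.lt_two_pow_self (n := i))
      have h4 := Hρ (m + i)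
      rw [h1] at h4
      have h5 : (4:ℝ) ^ (i+1) ≤ 2 ^ (m+i) * c := le_trans (le_trans h3 h2) h4
      have h6 : (4:ℝ) ^ (i+1) = 4 * 4 ^ i := by ring
      have h7 : (2:ℝ) ^ (m+i) = 2 ^ m * 2 ^ i := by rw [pow_add]
      rw [h6, h7] at h5
      have h2i : (0:ℝ) < 2 ^ i := pow_pos (by norm_num) i
      have h44 : (4:ℝ) ^ i = 2^i * 2^i := by
        rw [← mul_pow]; norm_num
      rw [h44] at h5
      calc (4:ℝ) * 2 ^ i = (4 * (2^i * 2^i)) / 2^i := by field_simp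
      _ ≤ (2 ^ m * 2^i * c) / 2^i := by
          exact (div_le_div_iff_of_pos_right h2i).2 h5
      _ = 2 ^ m * c := by field_simp
    obtain ⟨i, hi⟩ := pow_unbounded_of_one_lt ((2:ℝ) ^ m * c) (by norm_num : (1:ℝ) < 2)
    have := key i
    nlinarith [pow_pos (by norm_num : (0:ℝ) < 2) i]

noncomputable def evp {A : Type*} [Ring A] [Algebra ℂ A] (z : ℂ) (P : A[X]) : A :=
  P.eval₂ (RingHom.id A) (z • 1)

section EV
variable {A : Type*} [Ring A] [Algebra ℂ A] (z : ℂ)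

theorem smul_one_central (a : A) : Commute a (z • (1:A)) := by
  rw [← Algebra.algebraMap_eq_smul_one]
  exact (Algebra.commutes z a).symm

theorem evp_mul (P Q : A[X]) : evp z (P * Q) = evp z P * evp z Q :=
  eval₂_mul_noncomm _ _ (fun k => smul_one_central z _)

theorem evp_add (P Q : A[X]) : evp z (P + Q) = evp z P + evp z Q :=
  eval₂_add _ _

theorem evp_C (b : A) : evp z (C b) = b := eval₂_C _ _

theorem evp_X : evp z (X : A[X]) = z • 1 := eval₂_X _ _

theorem evp_one : evp z (1 : A[X]) = 1 := eval₂_one _ _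

theorem evp_pow (P : A[X]) (n : ℕ) : evp z (P ^ n) = evp z P ^ n := by
  induction n with
  | zero => simp [evp_one]
  | succ m ih => rw [pow_succ, evp_mul, ih, pow_succ]

theorem mul_smul_one_pow (a : A) (i : ℕ) : a * (z • (1:A)) ^ i = z ^ i • a := by
  rw [_root_.smul_pow, one_pow, mul_smul_comm, mul_one]

theorem evp_eq_sum {P : A[X]} {M : ℕ} (hM : P.natDegree < M) :
    evp z P = ∑ i ∈ range M, z ^ i • P.coeff i := by
  rw [evp, eval₂_eq_sum_range' _ hM]
  exact Finset.sum_congr rfl fun i _ => mul_smul_one_pow z _ i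

theorem coeff_zero_pow (P : A[X]) (n : ℕ) : (P ^ n).coeff 0 = P.coeff 0 ^ n := by
  induction n with
  | zero => simp
  | succ m ih => rw [pow_succ, mul_coeff_zero, ih, pow_succ]

/-- Finite Fourier inversion for the constant coefficient. -/
theorem fourier_c0 {M : ℕ} (hM0 : M ≠ 0) {ζ : ℂ} (hζ : IsPrimitiveRoot ζ M)
    (R : ℝ) (Q : A[X]) (hdeg : Q.natDegree < M) :
    (M : ℂ) • Q.coeff 0 = ∑ j ∈ range M, evp ((R:ℂ) * ζ ^ j) Q := by
  have e1 : ∀ j, evp ((R:ℂ) * ζ ^ j) Q = ∑ i ∈ range M, ((R:ℂ) * ζ ^ j) ^ i • Q.coeff i :=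
    fun j => evp_eq_sum _ hdeg
  rw [Finset.sum_congr rfl fun j _ => e1 j, Finset.sum_comm]
  have e2 : ∀ i, (∑ j ∈ range M, ((R:ℂ) * ζ ^ j) ^ i • Q.coeff i)
      = ((R:ℂ) ^ i * ∑ j ∈ range M, (ζ ^ i) ^ j) • Q.coeff i := by
    intro i
    rw [← Finset.sum_smul]
    congr 1
    rw [Finset.mul_sum]
    exact Finset.sum_congr rfl fun j _ => by
      rw [mul_pow, ← pow_mul, ← pow_mul, Nat.mul_comm]
  rw [Finset.sum_congr rfl fun i _ => e2 i]
  rw [Finset.sum_eq_single_of_mem 0 (Finset.mem_range.2 (Nat.pos_of_ne_zero hM0))]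
  · simp
  · intro i hi hi0
    have hilt : i < M := Finset.mem_range.1 hi
    have hne : ζ ^ i ≠ 1 := hζ.pow_ne_one_of_pos_of_lt hi0 hilt
    have : ∑ j ∈ range M, (ζ ^ i) ^ j = 0 := by
      rw [geom_sum_eq hne, ← pow_mul, Nat.mul_comm, pow_mul, hζ.pow_eq_one]
      simp
    rw [this, mul_zero, zero_smul]

end EV

namespace PNA
variable {A : Type*} [Ring A] [Algebra ℂ A] {p : ℝ} {nrm : A → ℝ}

/-- ‖xy‖ ≤ ‖yx‖. -/
theorem trace_le (h : PNA p nrm) (x y : A) : nrm (x * y) ≤ nrm (y * x) := by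
  have hxyp : ∀ n : ℕ, (x * y) ^ (n + 1) = x * (y * x) ^ n * y := by
    intro n
    induction n with
    | zero => simp [pow_succ]
    | succ m ih =>
        rw [pow_succ, ih, pow_succ]
        noncomm_ring
  have key : ∀ k : ℕ, nrm (x*y) ^ (2 ^ k) ≤ nrm x * nrm (y*x) ^ (2 ^ k - 1) * nrm y := by
    intro k
    have h1 : (2:ℕ) ^ k - 1 + 1 = 2 ^ k := Nat.succ_pred_eq_of_pos (Nat.pow_pos (by norm_num))
    have h2 : nrm (x*y) ^ (2^k) = nrm ((x*y) ^ (2^k - 1 + 1)) := by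
      rw [h1, h.pow_two_pow]
    rw [h2, hxyp]
    have h3 : nrm (x * (y*x) ^ (2^k-1) * y) ≤ nrm (x * (y*x) ^ (2^k-1)) * nrm y := h.mul _ _
    have h4 : nrm (x * (y*x) ^ (2^k-1)) ≤ nrm x * nrm ((y*x) ^ (2^k-1)) := h.mul _ _
    have h5 : nrm ((y*x) ^ (2^k-1)) ≤ nrm (y*x) ^ (2^k-1) := h.pow_le _ _
    have n1 := h.nonneg x
    have n2 := h.nonneg y
    have n3 := h.nonneg (x * (y*x) ^ (2^k-1))
    have n4 := h.nonneg ((y*x) ^ (2^k-1))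
    calc nrm (x * (y*x) ^ (2^k-1) * y) ≤ nrm (x * (y*x) ^ (2^k-1)) * nrm y := h3
    _ ≤ (nrm x * nrm ((y*x) ^ (2^k-1))) * nrm y := mul_le_mul_of_nonneg_right h4 n2
    _ ≤ (nrm x * nrm (y*x) ^ (2^k-1)) * nrm y :=
        mul_le_mul_of_nonneg_right (mul_le_mul_of_nonneg_left h5 n1) n2
  by_contra hc
  push_neg at hc
  rcases eq_or_lt_of_le (h.nonneg (y*x)) with hM0 | hM0
  · have h2 := key 1
    rw [← hM0] at h2
    norm_num at h2
    have hL : 0 < nrm (x*y) := lt_of_le_of_lt (hM0 ▸ le_refl _) hc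
    nlinarith
  · obtain ⟨n, hn⟩ := pow_unbounded_of_one_lt ((nrm x * nrm y) / nrm (y*x))
      ((one_lt_div hM0).2 hc)
    have h2 := key n
    have hρn : (nrm (x*y) / nrm (y*x)) ^ (2^n) ≤ (nrm x * nrm y) / nrm (y*x) := by
      rw [div_pow, div_le_div_iff₀ (by positivity) hM0]
      have h6 : nrm (y*x) ^ (2^n - 1) * nrm (y*x) = nrm (y*x) ^ (2^n) := by
        rw [← pow_succ]
        congr 1
        exact Nat.succ_pred_eq_of_pos (Nat.pow_pos (by norm_num))
      calc nrm (x*y) ^ 2^n * nrm (y*x) ≤ (nrm x * nrm (y*x) ^ (2^n - 1) * nrm y) * nrm (y*x) := by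
            nlinarith [h.nonneg (y*x)]
      _ = nrm x * nrm y * (nrm (y*x) ^ (2^n - 1) * nrm (y*x)) := by ring
      _ = nrm x * nrm y * nrm (y*x) ^ 2^n := by rw [h6]
    have h7 : (nrm (x*y) / nrm (y*x)) ^ n ≤ (nrm (x*y) / nrm (y*x)) ^ (2 ^ n) :=
      pow_le_pow_right₀ ((one_lt_div hM0).2 hc).le (Nat.lt_two_pow_self (n := n)).le
    nlinarith

theorem trace (h : PNA p nrm) (x y : A) : nrm (x * y) = nrm (y * x) :=
  le_antisymm (h.trace_le x y) (h.trace_le y x)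

end PNA

namespace PNA
variable {A : Type*} [Ring A] [Algebra ℂ A] {p : ℝ} {nrm : A → ℝ}

theorem evp_bound (h : PNA p nrm) (z : ℂ) (Q : Polynomial A) {M : ℕ}
    (hM : Q.natDegree < M) :
    nrm (evp z Q) ≤ ∑ i ∈ Finset.range M, (‖z‖ ^ i) ^ p * nrm (Q.coeff i) := by
  rw [evp_eq_sum z hM]
  refine le_trans (h.sum_le _ _) (Finset.sum_le_sum fun i _ => ?_)
  rw [h.smul, norm_pow]

/-- Maximum principle: the constant coefficient is controlled by the sup on a circle. -/
theorem max_principle (h : PNA p nrm) (P : Polynomial A) {R : ℝ} (hR : 0 < R) {B : ℝ}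
    (hB : ∀ z : ℂ, ‖z‖ = R → nrm (evp z P) ≤ B) : nrm (P.coeff 0) ≤ B := by
  have habsR : ‖(R:ℂ)‖ = R := by
    rw [Complex.norm_real, Real.norm_eq_abs, abs_of_pos hR]
  have hB0 : 0 ≤ B := le_trans (h.nonneg _) (hB (R:ℂ) habsR)
  have hD1 : (1:ℝ) ≤ (P.natDegree + 1 : ℝ) := by
    have : (0:ℝ) ≤ (P.natDegree : ℝ) := Nat.cast_nonneg _
    linarith
  apply le_of_forall_two_pow_le (h.nonneg _) hB0 hD1
  intro k
  set N := 2 ^ k with hN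
  set D := P.natDegree with hD
  set M := N * D + 1 with hMdef
  have hM0 : M ≠ 0 := Nat.succ_ne_zero _
  set ζ : ℂ := Complex.exp (2 * Real.pi * Complex.I / M) with hζdef
  have hζ : IsPrimitiveRoot ζ M := Complex.isPrimitiveRoot_exp M hM0
  have habsζ : ‖ζ‖ = 1 := by
    have e : (2 * ↑Real.pi * Complex.I / (M:ℂ)) = ((2 * Real.pi / M : ℝ) : ℂ) * Complex.I := by
      push_cast
      ring
    rw [hζdef, e, Complex.norm_exp_ofReal_mul_I]
  have hdeg : (P ^ N).natDegree < M :=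
    Nat.lt_succ_of_le Polynomial.natDegree_pow_le
  have hFI := fourier_c0 hM0 hζ R (P ^ N) hdeg
  rw [coeff_zero_pow] at hFI
  have hL : nrm ((M:ℂ) • (P.coeff 0) ^ N) = (M:ℝ) ^ p * nrm (P.coeff 0) ^ N := by
    rw [h.smul, Complex.norm_natCast, h.pow_two_pow]
  have hRHS : nrm (∑ j ∈ Finset.range M, evp ((R:ℂ) * ζ ^ j) (P ^ N)) ≤ M * B ^ N := by
    refine le_trans (h.sum_le _ _) ?_
    have hterm : ∀ j ∈ Finset.range M, nrm (evp ((R:ℂ) * ζ ^ j) (P ^ N)) ≤ B ^ N := by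
      intro j _
      rw [evp_pow, h.pow_two_pow]
      refine pow_le_pow_left₀ (h.nonneg _) (hB _ ?_) _
      rw [norm_mul, norm_pow, habsζ, one_pow, mul_one, habsR]
    calc ∑ j ∈ Finset.range M, nrm (evp ((R:ℂ) * ζ ^ j) (P ^ N))
        ≤ ∑ _j ∈ Finset.range M, B ^ N := Finset.sum_le_sum hterm
    _ = M * B ^ N := by
        rw [Finset.sum_const, Finset.card_range, nsmul_eq_mul]
  have h1p : (1:ℝ) ≤ (M:ℝ) ^ p := by
    refine Real.one_le_rpow ?_ h.hp0.le
    exact_mod_cast Nat.one_le_iff_ne_zero.2 hM0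
  have hcomb : (M:ℝ) ^ p * nrm (P.coeff 0) ^ N ≤ M * B ^ N := by
    rw [← hL, hFI]
    exact hRHS
  have hMle : (M:ℝ) ≤ 2 ^ k * (D + 1 : ℝ) := by
    rw [hMdef]
    push_cast [hN]
    have h1 : (1:ℝ) ≤ 2 ^ k := one_le_pow₀ (by norm_num)
    linarith
  have hpos : (0:ℝ) ≤ B ^ N := pow_nonneg hB0 _
  have hc0N : (0:ℝ) ≤ nrm (P.coeff 0) ^ N := pow_nonneg (h.nonneg _) _
  calc nrm (P.coeff 0) ^ 2 ^ k = nrm (P.coeff 0) ^ N := by rw [hN]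
  _ ≤ (M:ℝ) ^ p * nrm (P.coeff 0) ^ N := by nlinarith
  _ ≤ (M:ℝ) * B ^ N := hcomb
  _ ≤ (2 ^ k * (D + 1 : ℝ)) * B ^ N := mul_le_mul_of_nonneg_right hMle hpos
  _ = 2 ^ k * (↑P.natDegree + 1) * B ^ 2 ^ k := by rw [hN, hD]

/-- Cauchy estimate for the linear coefficient. -/
theorem coeff_one_bound (h : PNA p nrm) (P : Polynomial A) {R : ℝ} (hR : 0 < R) {B : ℝ}
    (hB : ∀ z : ℂ, ‖z‖ = R → nrm (evp z P) ≤ B) :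
    nrm (P.coeff 1) ≤ 2 * B / R ^ p := by
  have habsR : ‖(R:ℂ)‖ = R := by
    rw [Complex.norm_real, Real.norm_eq_abs, abs_of_pos hR]
  have hc0 : nrm (P.coeff 0) ≤ B := h.max_principle P hR hB
  have hRp : (0:ℝ) < R ^ p := Real.rpow_pos_of_pos hR p
  have hdiv : ∀ z : ℂ, ‖z‖ = R → nrm (evp z P.divX) ≤ 2 * B / R ^ p := by
    intro z hz
    have e1 : (z • (1:A)) * evp z P.divX + P.coeff 0 = evp z P := by
      have e := congrArg (evp z) (Polynomial.X_mul_divX_add P)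
      rw [evp_add, evp_mul, evp_X, evp_C] at e
      exact e
    have e2 : nrm ((z • (1:A)) * evp z P.divX) = R ^ p * nrm (evp z P.divX) := by
      have e : (z • (1:A)) * evp z P.divX = z • evp z P.divX := by
        rw [smul_mul_assoc, one_mul]
      rw [e, h.smul, hz]
    have e3 : nrm ((z • (1:A)) * evp z P.divX) ≤ B + B := by
      have e4 : (z • (1:A)) * evp z P.divX = evp z P + (- P.coeff 0) := by
        rw [← e1]
        abel
      rw [e4]
      refine le_trans (h.add _ _) ?_
      rw [h.nrm_neg]
      exact add_le_add (hB z hz) hc0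
    rw [e2] at e3
    rw [le_div_iff₀ hRp]
    linarith
  rw [← Polynomial.coeff_divX]
  exact h.max_principle P.divX hR hdiv

end PNA

/-- Truncated exponential with scaling `1/n` and sign `s`. -/
noncomputable def epol (n k : ℕ) (s : ℂ) : Polynomial ℂ :=
  ∑ j ∈ Finset.range (k+1), Polynomial.C (s ^ j / (j.factorial * n ^ j)) * Polynomial.X ^ j

theorem epol_coeff (n k : ℕ) (s : ℂ) (m : ℕ) :
    (epol n k s).coeff m = if m ≤ k then s ^ m / (m.factorial * n ^ m) else 0 := by
  rw [epol, finset_sum_coeff]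
  simp only [coeff_C_mul, coeff_X_pow, mul_ite, mul_one, mul_zero]
  rw [Finset.sum_ite_eq (Finset.range (k+1)) m (fun j => s ^ j / (j.factorial * n ^ j))]
  simp [Nat.lt_succ_iff]

theorem epol_natDegree_le (n k : ℕ) (s : ℂ) : (epol n k s).natDegree ≤ k := by
  refine Polynomial.natDegree_sum_le_of_forall_le _ _ fun j hj => ?_
  refine le_trans (Polynomial.natDegree_C_mul_le _ _) ?_
  simpa using Nat.lt_succ_iff.1 (Finset.mem_range.1 hj)

theorem epol_coeff_abs (n k : ℕ) (hn : 1 ≤ n) {s : ℂ} (hs : ‖s‖ = 1) (m : ℕ) :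
    ‖(epol n k s).coeff m‖ ≤ 1 / (n:ℝ) ^ m := by
  have hn0 : (0:ℝ) < (n:ℝ) ^ m := by positivity
  rw [epol_coeff]
  by_cases hm : m ≤ k
  · rw [if_pos hm, norm_div, norm_pow, hs, one_pow, norm_mul, norm_pow,
      Complex.norm_natCast, Complex.norm_natCast]
    rw [div_le_div_iff₀ (by positivity) hn0]
    have h1 : (1:ℝ) ≤ (m.factorial : ℝ) := by exact_mod_cast Nat.one_le_iff_ne_zero.2 m.factorial_ne_zero
    nlinarith
  · rw [if_neg hm]
    simp only [norm_zero]
    positivity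

theorem g_coeff_zero (n k : ℕ) :
    (epol n k (-1) * epol n k 1).coeff 0 = 1 := by
  rw [Polynomial.mul_coeff_zero, epol_coeff, epol_coeff]
  simp

theorem g_coeff_low (n k : ℕ) (hn : 1 ≤ n) {m : ℕ} (hm1 : 1 ≤ m) (hmk : m ≤ k) :
    (epol n k (-1) * epol n k 1).coeff m = 0 := by
  have hn0 : (n:ℂ) ≠ 0 := by exact_mod_cast Nat.one_le_iff_ne_zero.1 hn
  rw [Polynomial.coeff_mul, Finset.Nat.sum_antidiagonal_eq_sum_range_succ_mk]
  have key : ∀ i ∈ Finset.range (m+1),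
      (epol n k (-1)).coeff i * (epol n k 1).coeff (m - i)
        = ((-1:ℂ)^i * (m.choose i)) * (1 / (m.factorial * (n:ℂ)^m)) := by
    intro i hi
    have him : i ≤ m := Nat.lt_succ_iff.1 (Finset.mem_range.1 hi)
    rw [epol_coeff, epol_coeff, if_pos (him.trans hmk), if_pos ((Nat.sub_le m i).trans hmk)]
    have hfact : ((m.choose i : ℂ)) * (i.factorial) * ((m-i).factorial) = (m.factorial) := by
      exact_mod_cast congrArg (Nat.cast : ℕ → ℂ) (Nat.choose_mul_factorial_mul_factorial him)
    have hnm : (n:ℂ)^i * (n:ℂ)^(m-i) = (n:ℂ)^m := by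
      rw [← pow_add]
      congr 1
      omega
    have hif : (i.factorial : ℂ) ≠ 0 := by exact_mod_cast i.factorial_ne_zero
    have hmf : ((m-i).factorial : ℂ) ≠ 0 := by exact_mod_cast (m-i).factorial_ne_zero
    have hmf2 : (m.factorial : ℂ) ≠ 0 := by exact_mod_cast m.factorial_ne_zero
    field_simp
    rw [← hfact, ← hnm]
    ring
  rw [Finset.sum_congr rfl key, ← Finset.sum_mul]
  have hz : (∑ i ∈ Finset.range (m+1), (-1:ℂ)^i * (m.choose i)) = 0 := by
    have h0 := @Int.alternating_sum_range_choose m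
    rw [if_neg (by omega)] at h0
    exact_mod_cast h0
  rw [hz, zero_mul]

theorem g_coeff_abs (n k : ℕ) (hn : 1 ≤ n) (m : ℕ) :
    ‖(epol n k (-1) * epol n k 1).coeff m‖ ≤ ((m:ℝ)+1) / (n:ℝ)^m := by
  rw [Polynomial.coeff_mul, Finset.Nat.sum_antidiagonal_eq_sum_range_succ_mk]
  refine le_trans (norm_sum_le _ _) ?_
  have key : ∀ i ∈ Finset.range (m+1),
      ‖(epol n k (-1)).coeff (i, m-i).1 * (epol n k 1).coeff (i, m-i).2‖
        ≤ 1 / (n:ℝ)^m := by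
    intro i hi
    have him : i ≤ m := Nat.lt_succ_iff.1 (Finset.mem_range.1 hi)
    rw [norm_mul]
    have h1 := epol_coeff_abs n k hn (by simp : ‖(-1:ℂ)‖ = 1) i
    have h2 := epol_coeff_abs n k hn (by simp : ‖(1:ℂ)‖ = 1) (m - i)
    have hmm : (n:ℝ)^i * (n:ℝ)^(m-i) = (n:ℝ)^m := by
      rw [← pow_add]; congr 1; omega
    calc ‖(epol n k (-1)).coeff i‖ * ‖(epol n k 1).coeff (m-i)‖
        ≤ (1/(n:ℝ)^i) * (1/(n:ℝ)^(m-i)) := by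
          refine mul_le_mul h1 h2 (norm_nonneg _) (by positivity)
    _ = 1 / (n:ℝ)^m := by rw [div_mul_div_comm, one_mul, hmm]
  refine le_trans (Finset.sum_le_sum key) ?_
  rw [Finset.sum_const, Finset.card_range, nsmul_eq_mul]
  push_cast
  rw [mul_one_div]

theorem g_natDegree (n k : ℕ) : (epol n k (-1) * epol n k 1).natDegree ≤ 2 * k := by
  refine le_trans Polynomial.natDegree_mul_le ?_
  have := epol_natDegree_le n k (-1)
  have := epol_natDegree_le n k 1
  omega

section Phi
variable {A : Type*} [Ring A] [Algebra ℂ A]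

/-- Substitution `X ↦ a·X` as an algebra map `ℂ[X] → A[X]`. -/
noncomputable def phiA (a : A) : Polynomial ℂ →ₐ[ℂ] Polynomial A :=
  Polynomial.aeval (Polynomial.C a * Polynomial.X)

theorem phiA_coeff (a : A) (f : Polynomial ℂ) (m : ℕ) :
    ((phiA a) f).coeff m = f.coeff m • a ^ m := by
  induction f using Polynomial.induction_on' with
  | add f g hf hg =>
      rw [map_add, Polynomial.coeff_add, hf, hg, Polynomial.coeff_add, add_smul]
  | monomial j c =>
      rw [phiA, Polynomial.aeval_monomial]
      have hcomm : Commute (Polynomial.C a) (Polynomial.X (R := A)) := (Polynomial.X_mul_C a).symm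
      rw [hcomm.mul_pow, ← Polynomial.C_pow]
      have halg : (algebraMap ℂ (Polynomial A)) c = Polynomial.C ((algebraMap ℂ A) c) := by
        simp [Polynomial.algebraMap_apply]
      rw [halg, ← mul_assoc, ← Polynomial.C_mul, Polynomial.coeff_monomial]
      rw [Polynomial.coeff_C_mul, Polynomial.coeff_X_pow]
      by_cases hjm : j = m
      · subst hjm
        rw [if_pos rfl, if_pos rfl, mul_one, ← Algebra.smul_def]
      · rw [if_neg hjm, if_neg (fun hh => hjm hh.symm), mul_zero, zero_smul]

theorem coeff_one_mul' (U V : Polynomial A) :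
    (U * V).coeff 1 = U.coeff 0 * V.coeff 1 + U.coeff 1 * V.coeff 0 := by
  rw [Polynomial.coeff_mul, Finset.Nat.sum_antidiagonal_eq_sum_range_succ_mk]
  rw [Finset.sum_range_succ, Finset.sum_range_succ]
  simp

theorem coeff_zero_pow' (P : Polynomial A) (n : ℕ) : (P ^ n).coeff 0 = P.coeff 0 ^ n := by
  induction n with
  | zero => simp
  | succ m ih => rw [pow_succ, Polynomial.mul_coeff_zero, ih, pow_succ]

theorem coeff_one_pow (U : Polynomial A) (hU : U.coeff 0 = 1) (n : ℕ) :
    (U ^ n).coeff 1 = n • U.coeff 1 := by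
  induction n with
  | zero => simp [Polynomial.coeff_one]
  | succ m ih =>
      rw [pow_succ, coeff_one_mul', ih, coeff_zero_pow', hU, one_pow, one_mul, mul_one,
        succ_nsmul, add_comm]

end Phi

namespace PNA
variable {A : Type*} [Ring A] [Algebra ℂ A] {p : ℝ} {nrm : A → ℝ}

theorem bin_bound (h : PNA p nrm) {x y : A} (hxy : Commute x y) (n : ℕ) :
    nrm ((x + y) ^ n) ≤ ∑ m ∈ Finset.range (n+1),
      ((n.choose m : ℝ)) ^ p * (nrm x ^ m * nrm y ^ (n - m)) := by
  rw [hxy.add_pow]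
  refine le_trans (h.sum_le _ _) (Finset.sum_le_sum fun m _ => ?_)
  have e1 : x ^ m * y ^ (n-m) * ((n.choose m : ℕ) : A) = (n.choose m) • (x^m * y^(n-m)) := by
    rw [← (Nat.cast_commute (n.choose m) (x ^ m * y ^ (n - m))).eq, nsmul_eq_mul]
  rw [e1, h.nrm_smul_nat]
  refine mul_le_mul_of_nonneg_left ?_ (Real.rpow_nonneg (Nat.cast_nonneg _) p)
  refine le_trans (h.mul _ _) ?_
  exact mul_le_mul (h.pow_le x m) (h.pow_le y (n-m)) (h.nonneg _)
    (pow_nonneg (h.nonneg x) m)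

theorem one_add_pow_le (h : PNA p nrm) (w : A) (n : ℕ) :
    nrm ((1 + w) ^ n) ≤ (1 + nrm w) ^ n := by
  refine le_trans (h.bin_bound (Commute.one_left w) n) ?_
  rw [add_pow]
  refine Finset.sum_le_sum fun m hm => ?_
  simp only [h.one, one_pow, one_mul]
  have hC1 : (1:ℝ) ≤ (n.choose m : ℝ) := by
    exact_mod_cast Nat.succ_le_of_lt (Nat.choose_pos (Nat.lt_succ_iff.1 (Finset.mem_range.1 hm)))
  have hCp : ((n.choose m : ℝ)) ^ p ≤ (n.choose m : ℝ) := by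
    have := Real.rpow_le_rpow_of_exponent_le hC1 h.hp1
    rwa [Real.rpow_one] at this
  have hw0 : (0:ℝ) ≤ nrm w ^ (n - m) := pow_nonneg (h.nonneg w) _
  calc ((n.choose m : ℝ))^p * nrm w ^ (n-m) ≤ (n.choose m : ℝ) * nrm w ^ (n-m) :=
        mul_le_mul_of_nonneg_right hCp hw0
  _ = nrm w ^ (n-m) * (n.choose m : ℝ) := by ring

/-- Commutativity of a uniform p-normed algebra. -/
theorem comm (h : PNA p nrm) (a b : A) : a * b = b * a := by
  have main : ∀ ε : ℝ, 0 < ε → nrm (a*b - b*a) ≤ ε := by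
    intro ε hε
    -- the truncation order
    obtain ⟨k, hk1, hkp⟩ : ∃ k : ℕ, 1 ≤ k ∧ 1 ≤ (k:ℝ) * p := by
      refine ⟨max 1 ⌈1/p⌉₊, le_max_left _ _, ?_⟩
      have h1 : 1/p ≤ ((max 1 ⌈1/p⌉₊ : ℕ) : ℝ) := by
        refine le_trans (Nat.le_ceil _) ?_
        exact_mod_cast le_max_right 1 ⌈1/p⌉₊
      calc (1:ℝ) = 1/p * p := (div_mul_cancel₀ 1 h.hp0.ne').symm
      _ ≤ _ := mul_le_mul_of_nonneg_right h1 h.hp0.le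
    -- the radius
    have hb0 := h.nonneg b
    set MR : ℝ := 2 * Real.exp 1 * (nrm b + 1) / ε with hMRdef
    have hMR0 : 0 ≤ MR := by positivity
    clear_value MR
    obtain ⟨R, hR1, hRp⟩ : ∃ R : ℝ, 1 ≤ R ∧ MR ≤ R ^ p := by
      refine ⟨MR ^ (1/p) + 1, le_add_of_nonneg_left (Real.rpow_nonneg hMR0 _), ?_⟩
      have e : MR = (MR ^ (1/p)) ^ p := by
        rw [← Real.rpow_mul hMR0, one_div_mul_cancel h.hp0.ne', Real.rpow_one]
      calc MR = (MR ^ (1/p)) ^ p := e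
      _ ≤ (MR ^ (1/p) + 1) ^ p :=
        Real.rpow_le_rpow (Real.rpow_nonneg hMR0 _) (by linarith) h.hp0.le
    have hR0 : (0:ℝ) < R := by linarith
    -- the constant
    have hna := h.nonneg a
    set C0 : ℝ := ∑ i ∈ Finset.range (2*k+1),
        (R^i)^p * ((2*(k:ℝ)+1)^p * nrm a^i) with hC0def
    have hC00 : 0 ≤ C0 := by
      rw [hC0def]
      refine Finset.sum_nonneg fun i _ => ?_
      positivity
    -- the degree of approximation
    obtain ⟨n, hn1, hnp⟩ : ∃ n : ℕ, 1 ≤ n ∧ C0 + 1 ≤ (n:ℝ) ^ p := by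
      refine ⟨max 1 ⌈(C0+1) ^ (1/p)⌉₊, le_max_left _ _, ?_⟩
      have h1 : (C0+1)^(1/p) ≤ ((max 1 ⌈(C0+1) ^ (1/p)⌉₊ : ℕ) : ℝ) := by
        refine le_trans (Nat.le_ceil _) ?_
        exact_mod_cast le_max_right 1 ⌈(C0+1)^(1/p)⌉₊
      have e : C0 + 1 = ((C0+1)^(1/p))^p := by
        rw [← Real.rpow_mul (by linarith), one_div_mul_cancel h.hp0.ne', Real.rpow_one]
      exact e.trans_le (Real.rpow_le_rpow (Real.rpow_nonneg (by linarith) _) h1 h.hp0.le)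
    clear_value C0
    have hnpos : (0:ℝ) < (n:ℝ) := by exact_mod_cast Nat.lt_of_lt_of_le Nat.zero_lt_one hn1
    have hnC : (n:ℂ) ≠ 0 := by
      exact_mod_cast (by exact_mod_cast hnpos : (0:ℝ) < ((n:ℕ):ℝ)).ne'
    -- the rescaled truncated exponentials
    set E := (phiA a) (epol n k 1) with hEdef
    set F := (phiA a) (epol n k (-1)) with hFdef
    set P := E ^ n * (Polynomial.C b * F ^ n) with hPdef
    have hE0 : E.coeff 0 = 1 := by
      rw [hEdef, phiA_coeff, epol_coeff]
      simp
    have hF0 : F.coeff 0 = 1 := by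
      rw [hFdef, phiA_coeff, epol_coeff]
      simp
    have hE1 : (E^n).coeff 1 = a := by
      rw [coeff_one_pow E hE0 n, hEdef, phiA_coeff, epol_coeff, if_pos hk1]
      rw [← Nat.cast_smul_eq_nsmul ℂ, smul_smul]
      simp [Nat.factorial, hnC]
    have hF1 : (F^n).coeff 1 = -a := by
      rw [coeff_one_pow F hF0 n, hFdef, phiA_coeff, epol_coeff, if_pos hk1]
      rw [← Nat.cast_smul_eq_nsmul ℂ, smul_smul]
      have e : (n:ℂ) * ((-1)^1 / ((Nat.factorial 1 : ℕ) * (n:ℂ)^1)) = -1 := by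
        rw [Nat.factorial]
        field_simp
        norm_num [Nat.factorial]
      rw [e]
      simp
    have hPc1 : P.coeff 1 = a*b - b*a := by
      rw [hPdef, coeff_one_mul', coeff_zero_pow', hE0, one_pow, one_mul, hE1]
      rw [Polynomial.coeff_C_mul, Polynomial.mul_coeff_zero, Polynomial.coeff_C_zero,
        coeff_zero_pow', hF0, one_pow, mul_one, hF1]
      rw [mul_neg]
      abel
    -- bound on the circle of radius R
    have hsup : ∀ z : ℂ, ‖z‖ = R → nrm (evp z P) ≤ nrm b * Real.exp 1 := by
      intro z hz
      set g1 := epol n k (-1) * epol n k 1 with hg1def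
      set w := evp z ((phiA a) (g1 - 1)) with hwdef
      have hw0 := h.nonneg w
      have e1 : evp z P = evp z (E^n) * (b * evp z (F^n)) := by
        rw [hPdef, evp_mul, evp_mul, evp_C]
      have e2 : nrm (evp z P) = nrm (b * (evp z (F^n) * evp z (E^n))) := by
        rw [e1, h.trace, mul_assoc]
      have e3 : evp z (F^n) * evp z (E^n) = (1 + w) ^ n := by
        have hcomm : Commute F E := by
          rw [hEdef, hFdef]
          exact (Commute.all (epol n k (-1)) (epol n k 1)).map (phiA a)
        have e4 : F ^ n * E ^ n = ((phiA a) g1) ^ n := by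
          rw [← hcomm.mul_pow, hg1def, hEdef, hFdef, map_mul]
        have e5 : (phiA a) g1 = 1 + (phiA a) (g1 - 1) := by
          rw [map_sub, map_one]
          abel
        rw [← evp_mul, e4, evp_pow, e5, evp_add, evp_one, hwdef]
      -- bound nrm w
      have hwb : nrm w ≤ C0 / (((n:ℝ)^(k+1))^p) := by
        have hdegg : (g1 - 1).natDegree ≤ 2*k := by
          refine le_trans (Polynomial.natDegree_sub_le _ _) ?_
          simp [hg1def, g_natDegree n k]
        have hdeg : ((phiA a) (g1-1)).natDegree < 2*k+1 := by
          refine Nat.lt_succ_of_le (Polynomial.natDegree_le_iff_coeff_eq_zero.2 fun N hN => ?_)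
          rw [phiA_coeff, Polynomial.coeff_eq_zero_of_natDegree_lt (lt_of_le_of_lt hdegg hN),
            zero_smul]
        rw [hwdef]
        refine le_trans (h.evp_bound z _ hdeg) ?_
        have hterm : ∀ i ∈ Finset.range (2*k+1),
            (‖z‖ ^ i)^p * nrm (((phiA a) (g1-1)).coeff i)
              ≤ ((R^i)^p * ((2*(k:ℝ)+1)^p * nrm a^i)) / (((n:ℝ)^(k+1))^p) := by
          intro i hi
          have hi2k : i ≤ 2*k := Nat.lt_succ_iff.1 (Finset.mem_range.1 hi)
          rw [phiA_coeff]
          by_cases hik : i ≤ k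
          · -- coefficient vanishes
            have hz0 : (g1 - 1).coeff i = 0 := by
              rcases Nat.eq_zero_or_pos i with hi0 | hi0
              · subst hi0
                rw [Polynomial.coeff_sub, Polynomial.coeff_one, hg1def, g_coeff_zero]
                simp
              · rw [Polynomial.coeff_sub, Polynomial.coeff_one, hg1def,
                  g_coeff_low n k hn1 hi0 hik]
                simp [Nat.pos_iff_ne_zero.1 hi0]
            rw [hz0, zero_smul, h.nrm_zero, mul_zero]
            positivity
          · -- tail coefficient
            push_neg at hik
            have habs : ‖(g1-1).coeff i‖ ≤ (2*(k:ℝ)+1) / (n:ℝ)^(k+1) := by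
              have e6 : (g1-1).coeff i = g1.coeff i := by
                rw [Polynomial.coeff_sub, Polynomial.coeff_one, if_neg (by omega)]
                ring
              rw [e6, hg1def]
              refine le_trans (g_coeff_abs n k hn1 i) ?_
              have hn1R : (1:ℝ) ≤ (n:ℝ) := by exact_mod_cast hn1
              have hd1 : ((i:ℝ)+1) ≤ 2*(k:ℝ)+1 := by
                have : (i:ℝ) ≤ 2*(k:ℝ) := by exact_mod_cast hi2k
                linarith
              have hd2 : (n:ℝ)^(k+1) ≤ (n:ℝ)^i := pow_le_pow_right₀ hn1R (by omega)
              have hq1 : (0:ℝ) < (n:ℝ)^(k+1) := by positivity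
              have hq2 : (0:ℝ) < (n:ℝ)^i := by positivity
              rw [div_le_div_iff₀ hq2 hq1]
              nlinarith
            have hnrm : nrm ((g1-1).coeff i • a^i)
                ≤ ((2*(k:ℝ)+1) / (n:ℝ)^(k+1))^p * nrm a^i := by
              rw [h.smul]
              refine mul_le_mul ?_ (h.pow_le a i) (h.nonneg _)
                (Real.rpow_nonneg (by positivity) _)
              exact Real.rpow_le_rpow (norm_nonneg _) habs h.hp0.le
            calc (‖z‖ ^ i)^p * nrm ((g1-1).coeff i • a^i)
                ≤ (R^i)^p * (((2*(k:ℝ)+1) / (n:ℝ)^(k+1))^p * nrm a^i) := by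
                  rw [hz]
                  exact mul_le_mul_of_nonneg_left hnrm (Real.rpow_nonneg (by positivity) _)
            _ = ((R^i)^p * ((2*(k:ℝ)+1)^p * nrm a^i)) / (((n:ℝ)^(k+1))^p) := by
                  rw [Real.div_rpow (by positivity) (by positivity)]
                  ring
        refine le_trans (Finset.sum_le_sum hterm) ?_
        rw [← Finset.sum_div, hC0def]
      -- numeric bound: n * nrm w ≤ 1
      have hnum : (n:ℝ) * nrm w ≤ 1 := by
        have hq1 : (0:ℝ) < ((n:ℝ)^(k+1))^p := by positivity
        have h1 : (n:ℝ) * (n:ℝ)^p ≤ ((n:ℝ)^(k+1))^p := by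
          have e : ((n:ℝ)^(k+1))^p = (n:ℝ) ^ (((k:ℝ)+1) * p) := by
            rw [← Real.rpow_natCast (n:ℝ) (k+1), ← Real.rpow_mul hnpos.le]
            push_cast
            ring_nf
          have e2 : (n:ℝ) * (n:ℝ)^p = (n:ℝ) ^ (1 + p) := by
            rw [Real.rpow_add hnpos, Real.rpow_one]
          rw [e, e2]
          refine Real.rpow_le_rpow_of_exponent_le (by exact_mod_cast hn1) ?_
          nlinarith [h.hp0.le]
        have h2 : nrm w * ((n:ℝ) * (n:ℝ)^p) ≤ C0 := by
          calc nrm w * ((n:ℝ)*(n:ℝ)^p) ≤ (C0/(((n:ℝ)^(k+1))^p)) * ((n:ℝ)^(k+1))^p :=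
                mul_le_mul hwb h1 (by positivity) (by positivity)
          _ = C0 := div_mul_cancel₀ _ hq1.ne'
        have hnp0 : (0:ℝ) < (n:ℝ)^p := Real.rpow_pos_of_pos hnpos p
        have h3 : (n:ℝ) * nrm w ≤ C0 / (n:ℝ)^p := by
          rw [le_div_iff₀ hnp0]
          nlinarith
        refine le_trans h3 ?_
        rw [div_le_one hnp0]
        linarith
      -- assemble
      rw [e2, e3]
      refine le_trans (h.mul _ _) ?_
      refine mul_le_mul_of_nonneg_left ?_ hb0
      refine le_trans (h.one_add_pow_le w n) ?_
      calc (1 + nrm w)^n ≤ (Real.exp (nrm w))^n :=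
            pow_le_pow_left₀ (by linarith) (by linarith [Real.add_one_le_exp (nrm w)]) n
      _ = Real.exp ((n:ℝ) * nrm w) := (Real.exp_nat_mul _ n).symm
      _ ≤ Real.exp 1 := Real.exp_le_exp.2 hnum
    -- Cauchy estimate
    have hce := h.coeff_one_bound P hR0 hsup
    rw [hPc1] at hce
    refine le_trans hce ?_
    rw [div_le_iff₀ (Real.rpow_pos_of_pos hR0 p)]
    have hMRe : MR * ε = 2 * Real.exp 1 * (nrm b + 1) := by
      rw [hMRdef]
      field_simp
    have he1 : (0:ℝ) < Real.exp 1 := Real.exp_pos 1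
    calc 2 * (nrm b * Real.exp 1) ≤ MR * ε := by
          rw [hMRe]
          nlinarith
    _ ≤ R^p * ε := mul_le_mul_of_nonneg_right hRp hε.le
    _ = ε * R^p := by ring
  -- conclude
  have h0 : nrm (a*b - b*a) = 0 := by
    by_contra hne
    have hpos : 0 < nrm (a*b - b*a) := lt_of_le_of_ne (h.nonneg _) (Ne.symm hne)
    have := main (nrm (a*b - b*a) / 2) (by linarith)
    linarith
  exact sub_eq_zero.1 (h.zero _ h0)

theorem rpow_pow_comm {x : ℝ} (hx : 0 ≤ x) (q : ℝ) (m : ℕ) : (x ^ q) ^ m = (x ^ m) ^ q := by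
  rw [← Real.rpow_natCast (x ^ q) m, ← Real.rpow_mul hx, mul_comm,
    Real.rpow_mul hx, Real.rpow_natCast]

theorem add_le_rpow (h : PNA p nrm) (x y : A) :
    nrm (x + y) ≤ (nrm x ^ (1/p) + nrm y ^ (1/p)) ^ p := by
  have hu0 : 0 ≤ nrm x ^ (1/p) := Real.rpow_nonneg (h.nonneg x) _
  have hv0 : 0 ≤ nrm y ^ (1/p) := Real.rpow_nonneg (h.nonneg y) _
  have huv0 : 0 ≤ nrm x ^ (1/p) + nrm y ^ (1/p) := by linarith
  refine le_of_forall_two_pow_le (h.nonneg _) (Real.rpow_nonneg huv0 p) one_le_two fun k => ?_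
  have hbin := h.bin_bound (h.comm x y : Commute x y) (2^k)
  have hterm : ∀ m ∈ Finset.range (2^k+1),
      ((2^k).choose m : ℝ)^p * (nrm x ^ m * nrm y ^ (2^k-m))
        ≤ ((nrm x ^ (1/p) + nrm y ^ (1/p)) ^ (2^k)) ^ p := by
    intro m hm
    have hxm : ((nrm x ^ (1/p)) ^ m) ^ p = nrm x ^ m := by
      rw [rpow_pow_comm (h.nonneg x), ← Real.rpow_mul (pow_nonneg (h.nonneg x) m),
        one_div_mul_cancel h.hp0.ne', Real.rpow_one]
    have hym : ((nrm y ^ (1/p)) ^ (2^k - m)) ^ p = nrm y ^ (2^k - m) := by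
      rw [rpow_pow_comm (h.nonneg y), ← Real.rpow_mul (pow_nonneg (h.nonneg y) _),
        one_div_mul_cancel h.hp0.ne', Real.rpow_one]
    have e1 : (((2^k).choose m : ℝ) * ((nrm x ^ (1/p)) ^ m * (nrm y ^ (1/p)) ^ (2^k-m))) ^ p
        = ((2^k).choose m : ℝ)^p * (nrm x ^ m * nrm y ^ (2^k-m)) := by
      rw [Real.mul_rpow (Nat.cast_nonneg _) (by positivity),
        Real.mul_rpow (by positivity) (by positivity), hxm, hym]
    have e2 : ((2^k).choose m : ℝ) * ((nrm x ^ (1/p)) ^ m * (nrm y ^ (1/p)) ^ (2^k-m))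
        ≤ (nrm x ^ (1/p) + nrm y ^ (1/p)) ^ (2^k) := by
      rw [add_pow]
      have hmem : m ∈ Finset.range (2^k+1) := hm
      have := Finset.single_le_sum (f := fun i =>
          (nrm x ^ (1/p)) ^ i * (nrm y ^ (1/p)) ^ (2^k - i) * ((2^k).choose i : ℝ))
        (fun i _ => by positivity) hmem
      calc ((2^k).choose m : ℝ) * ((nrm x ^ (1/p)) ^ m * (nrm y ^ (1/p)) ^ (2^k-m))
          = (nrm x ^ (1/p)) ^ m * (nrm y ^ (1/p)) ^ (2^k - m) * ((2^k).choose m : ℝ) := by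
            ring
      _ ≤ _ := this
    rw [← e1]
    exact Real.rpow_le_rpow (by positivity) e2 h.hp0.le
  calc nrm (x+y) ^ 2^k = nrm ((x+y)^(2^k)) := (h.pow_two_pow _ k).symm
  _ ≤ ∑ m ∈ Finset.range (2^k+1), ((2^k).choose m : ℝ)^p * (nrm x ^ m * nrm y ^ (2^k-m)) :=
      hbin
  _ ≤ ∑ _m ∈ Finset.range (2^k+1),
        ((nrm x ^ (1/p) + nrm y ^ (1/p)) ^ (2^k)) ^ p := Finset.sum_le_sum hterm
  _ = ((2^k:ℕ):ℝ) * (((nrm x ^ (1/p) + nrm y ^ (1/p)) ^ (2^k)) ^ p)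
        + (((nrm x ^ (1/p) + nrm y ^ (1/p)) ^ (2^k)) ^ p) := by
      rw [Finset.sum_const, Finset.card_range, nsmul_eq_mul]
      push_cast
      ring
  _ ≤ 2^k * 2 * ((nrm x ^ (1/p) + nrm y ^ (1/p)) ^ p) ^ (2^k) := by
      rw [← rpow_pow_comm huv0]
      have h1 : (1:ℝ) ≤ 2^k := one_le_pow₀ (by norm_num)
      have h2 : (0:ℝ) ≤ (((nrm x ^ (1/p) + nrm y ^ (1/p)) ^ p) ^ (2^k)) := by positivity
      have h3 : ((2^k:ℕ):ℝ) = (2:ℝ)^k := by push_cast; ring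
      rw [h3]
      nlinarith

theorem q_add (h : PNA p nrm) (x y : A) :
    nrm (x + y) ^ (1/p) ≤ nrm x ^ (1/p) + nrm y ^ (1/p) := by
  have huv0 : 0 ≤ nrm x ^ (1/p) + nrm y ^ (1/p) := by
    have := Real.rpow_nonneg (h.nonneg x) (1/p)
    have := Real.rpow_nonneg (h.nonneg y) (1/p)
    linarith
  have h1 := Real.rpow_le_rpow (h.nonneg _) (h.add_le_rpow x y) (one_div_nonneg.2 h.hp0.le)
  rwa [← Real.rpow_mul huv0, mul_one_div, div_self h.hp0.ne', Real.rpow_one] at h1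

theorem q_list (h : PNA p nrm) (l : List A) :
    nrm l.sum ^ (1/p) ≤ (l.map fun x => nrm x ^ (1/p)).sum := by
  induction l with
  | nil =>
      rw [List.sum_nil, List.map_nil, List.sum_nil, h.nrm_zero,
        Real.zero_rpow (one_div_ne_zero h.hp0.ne')]
  | cons x t ih =>
      rw [List.sum_cons, List.map_cons, List.sum_cons]
      exact le_trans (h.q_add x t.sum) (by linarith)

end PNA

/-- On a complex uniform p-normed algebra, the support seminorm satisfies |a| = ‖a‖^(1/p). -/
theorem stmt13 {A : Type*} [Ring A] [Algebra ℂ A]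
    {p : ℝ} (hp0 : 0 < p) (hp1 : p ≤ 1)
    (nrm : A → ℝ)
    (h_add : ∀ a b : A, nrm (a + b) ≤ nrm a + nrm b)
    (h_smul : ∀ (z : ℂ) (a : A), nrm (z • a) = ‖z‖ ^ p * nrm a)
    (h_mul : ∀ a b : A, nrm (a * b) ≤ nrm a * nrm b)
    (h_zero : ∀ a : A, nrm a = 0 → a = 0)
    (h_sq : ∀ a : A, nrm (a ^ 2) = nrm a ^ 2) :
    ∀ a : A, suppSeminorm p nrm a = nrm a ^ (1 / p) := by
  -- nonnegativity, valid in all cases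
  have hzero : nrm 0 = 0 := by
    have := h_smul 0 0
    simpa [Real.zero_rpow hp0.ne'] using this
  have hnonneg : ∀ x : A, 0 ≤ nrm x := by
    intro x
    have h1 : nrm (-x) = nrm x := by
      have := h_smul (-1) x
      simpa using this
    have h2 : nrm (0:A) ≤ nrm x + nrm (-x) := by
      simpa using h_add x (-x)
    rw [hzero, h1] at h2
    linarith
  intro a
  set S := {s : ℝ | ∃ l : List A, l ≠ [] ∧ l.sum = a ∧
    s = (l.map fun x => nrm x ^ (1 / p)).sum} with hSdef
  have hlb : ∀ s ∈ S, 0 ≤ s := by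
    rintro s ⟨l, -, -, rfl⟩
    refine List.sum_nonneg fun r hr => ?_
    obtain ⟨x, -, rfl⟩ := List.mem_map.1 hr
    exact Real.rpow_nonneg (hnonneg x) _
  have hmem : (nrm a ^ (1/p)) ∈ S := by
    refine ⟨[a], by simp, by simp, by simp⟩
  have hbdd : BddBelow S := ⟨0, hlb⟩
  have hupper : suppSeminorm p nrm a ≤ nrm a ^ (1/p) := csInf_le hbdd hmem
  by_cases htriv : nrm 1 = 0
  · -- degenerate algebra: everything is zero
    have hall : ∀ x : A, nrm x = 0 := by
      intro x
      have h1 : nrm x ≤ nrm x * nrm 1 := by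
        have := h_mul x 1
        simpa using this
      rw [htriv, mul_zero] at h1
      exact le_antisymm h1 (hnonneg x)
    have ha0 : nrm a ^ (1/p) = 0 := by
      rw [hall a, Real.zero_rpow (one_div_ne_zero hp0.ne')]
    rw [ha0]
    refine le_antisymm (ha0 ▸ hupper) (le_csInf ⟨_, hmem⟩ hlb)
  · -- the nondegenerate case
    have hone : nrm 1 = 1 := by
      have h1 : nrm ((1:A)^2) = nrm 1 ^ 2 := h_sq 1
      rw [one_pow] at h1
      have h2 : nrm 1 * (nrm 1 - 1) = 0 := by nlinarith
      rcases mul_eq_zero.1 h2 with h3 | h3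
      · exact absurd h3 htriv
      · linarith
    have h : PNA p nrm := ⟨hp0, hp1, h_add, h_smul, h_mul, h_zero, h_sq, hone⟩
    refine le_antisymm hupper (le_csInf ⟨_, hmem⟩ ?_)
    rintro s ⟨l, -, hsum, rfl⟩
    rw [← hsum]
    exact h.q_list l
end

section
/- Let A be an associative algebra (ring) and let q : A → ℝ be a nonnegative submultiplicative function (q(ab) ≤ q(a)q(b) for all a, b) satisfying the identity q(a)² = m·q(a²) for all a ∈ A, where m > 0 is a constant. Then for every a ∈ A, the sequence n ↦ q(aⁿ)^(1/n) converges to q(a)/m as n → ∞. -/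
open Filter Topology

private lemma aux_le19 {m X Y : ℝ} (hm : 0 < m) (hX : 0 ≤ X) (hY : 0 ≤ Y)
    (h : ∀ t : ℕ, X ^ (2^t) ≤ m * Y ^ (2^t)) : X ≤ Y := by
  have hroot : ∀ t : ℕ, X ≤ m ^ ((((2:ℕ)^t : ℕ) : ℝ))⁻¹ * Y := by
    intro t
    have hn : (0:ℝ) < (((2:ℕ)^t : ℕ) : ℝ) := by positivity
    have h1 : (X ^ ((2:ℕ)^t)) ^ ((((2:ℕ)^t : ℕ):ℝ))⁻¹
        ≤ (m * Y ^ ((2:ℕ)^t)) ^ ((((2:ℕ)^t : ℕ):ℝ))⁻¹ :=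
      Real.rpow_le_rpow (by positivity) (h t) (by positivity)
    rwa [← Real.rpow_natCast X ((2:ℕ)^t), ← Real.rpow_mul hX, mul_inv_cancel₀ hn.ne',
      Real.rpow_one, Real.mul_rpow hm.le (by positivity),
      ← Real.rpow_natCast Y ((2:ℕ)^t), ← Real.rpow_mul hY,
      mul_inv_cancel₀ hn.ne', Real.rpow_one] at h1
  have hexp : Tendsto (fun t : ℕ => ((((2:ℕ)^t : ℕ)):ℝ)⁻¹) atTop (𝓝 0) :=
    tendsto_inv_atTop_zero.comp
      (tendsto_natCast_atTop_atTop.comp (tendsto_pow_atTop_atTop_of_one_lt (one_lt_two : 1 < (2:ℕ))))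
  have hT : Tendsto (fun t : ℕ => m ^ ((((2:ℕ)^t : ℕ)):ℝ)⁻¹ * Y) atTop (𝓝 (1 * Y)) := by
    have := (Filter.Tendsto.rpow
      (tendsto_const_nhds : Tendsto (fun _ : ℕ => m) atTop (𝓝 m))
      hexp (Or.inl hm.ne')).mul_const Y
    simpa [Real.rpow_zero] using this
  have := ge_of_tendsto' hT hroot
  linarith

/-- If q ≥ 0 is submultiplicative and satisfies q(a)² = m·q(a²), then
q(aⁿ)^(1/n) → q(a)/m as n → ∞. -/
theorem stmt19 {A : Type*} [Ring A]
    (q : A → ℝ) (h_nonneg : ∀ a : A, 0 ≤ q a)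
    (h_mul : ∀ a b : A, q (a * b) ≤ q a * q b)
    {m : ℝ} (hm : 0 < m)
    (h_sq : ∀ a : A, q a ^ 2 = m * q (a ^ 2)) :
    ∀ a : A, Filter.Tendsto (fun n : ℕ => q (a ^ n) ^ ((n : ℝ)⁻¹))
      Filter.atTop (nhds (q a / m)) := by
  intro a
  set c : ℕ → ℝ := fun n => q (a ^ n) with hc
  have hc0 : ∀ n, 0 ≤ c n := fun n => h_nonneg _
  have hcsub : ∀ j k, c (j + k) ≤ c j * c k := by
    intro j k
    simpa [hc, pow_add] using h_mul (a ^ j) (a ^ k)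
  have hcsq : ∀ n, c n ^ 2 = m * c (n * 2) := by
    intro n
    have := h_sq (a ^ n)
    rwa [← pow_mul] at this
  -- the key strengthened inequality, by iteration
  have P : ∀ t j k, (m * c (j + k)) ^ (2 ^ t) ≤ m * (c j * c k) ^ (2 ^ t) := by
    intro t
    induction t with
    | zero =>
      intro j k
      simpa using mul_le_mul_of_nonneg_left (hcsub j k) hm.le
    | succ t ih =>
      intro j k
      have e1 : (m * c (j + k)) ^ 2 = m ^ 2 * (m * c ((j + k) * 2)) := by
        rw [mul_pow, hcsq (j + k)]
      have h1 : (m * c (j + k)) ^ 2 ^ (t + 1)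
          = (m ^ 2) ^ 2 ^ t * (m * c ((j + k) * 2)) ^ 2 ^ t := by
        rw [pow_succ, pow_mul', e1, mul_pow]
      have h2 : (m ^ 2) ^ 2 ^ t * (m * c (j * 2 + k * 2)) ^ 2 ^ t
          ≤ (m ^ 2) ^ 2 ^ t * (m * (c (j * 2) * c (k * 2)) ^ 2 ^ t) :=
        mul_le_mul_of_nonneg_left (ih (j * 2) (k * 2)) (by positivity)
      have h3 : (m ^ 2) ^ 2 ^ t * (m * (c (j * 2) * c (k * 2)) ^ 2 ^ t)
          = m * (c j * c k) ^ 2 ^ (t + 1) := by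
        have e : (c j * c k) ^ 2 = m ^ 2 * (c (j * 2) * c (k * 2)) := by
          rw [mul_pow, hcsq j, hcsq k]; ring
        calc (m ^ 2) ^ 2 ^ t * (m * (c (j * 2) * c (k * 2)) ^ 2 ^ t)
            = m * ((m ^ 2 * (c (j * 2) * c (k * 2))) ^ 2 ^ t) := by rw [mul_pow]; ring
          _ = m * ((c j * c k) ^ 2) ^ 2 ^ t := by rw [e]
          _ = m * (c j * c k) ^ 2 ^ (t + 1) := by rw [← pow_mul', ← pow_succ]
      calc (m * c (j + k)) ^ 2 ^ (t + 1)
          = (m ^ 2) ^ 2 ^ t * (m * c (j * 2 + k * 2)) ^ 2 ^ t := by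
            rw [h1, add_mul]
        _ ≤ (m ^ 2) ^ 2 ^ t * (m * (c (j * 2) * c (k * 2)) ^ 2 ^ t) := h2
        _ = m * (c j * c k) ^ 2 ^ (t + 1) := h3
  have key : ∀ j k, m * c (j + k) ≤ c j * c k := by
    intro j k
    exact aux_le19 hm (mul_nonneg hm.le (hc0 (j + k))) (mul_nonneg (hc0 j) (hc0 k)) (fun t => P t j k)
  set r : ℝ := q a / m with hr
  have hr0 : 0 ≤ r := div_nonneg (h_nonneg a) hm.le
  have hc1 : c 1 = m * r := by
    rw [hr, hc]; simp only [pow_one]; field_simp [hm.ne']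
  -- upper bound
  have hup : ∀ n, 1 ≤ n → c n ≤ m * r ^ n := by
    intro n hn
    induction n with
    | zero => omega
    | succ n ih =>
      rcases Nat.eq_or_lt_of_le hn with h | h
      · simp [← h, hc1]
      · have hn1 : 1 ≤ n := by omega
        have h1 := key n 1
        have h2 : c n * c 1 ≤ (m * r ^ n) * (m * r) := by
          rw [hc1]
          exact mul_le_mul_of_nonneg_right (ih hn1) (by positivity)
        have : m * c (n + 1) ≤ m * (m * r ^ (n + 1)) := by
          calc m * c (n + 1) ≤ c n * c 1 := h1
            _ ≤ (m * r ^ n) * (m * r) := h2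
            _ = m * (m * r ^ (n + 1)) := by ring
        exact le_of_mul_le_mul_left this hm
  -- exact value at powers of two
  have hpow2 : ∀ t : ℕ, c (2 ^ t) = m * r ^ (2 ^ t) := by
    intro t
    induction t with
    | zero => simpa using hc1
    | succ t ih =>
      have h1 := hcsq (2 ^ t)
      rw [ih] at h1
      have : m * c (2 ^ t * 2) = m * (m * r ^ (2 ^ t * 2)) := by
        rw [← h1]; rw [pow_mul]; ring_nf
      have h2 := mul_left_cancel₀ hm.ne' this
      rwa [← pow_succ] at h2
  -- lower bound and the exact formula
  have hcn : ∀ n, 1 ≤ n → c n = m * r ^ n := by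
    intro n hn
    rcases eq_or_lt_of_le hr0 with h0 | hrpos
    · have hub := hup n hn
      rw [← h0] at hub ⊢
      rw [zero_pow (by omega), mul_zero] at hub ⊢
      exact le_antisymm hub (hc0 n)
    · refine le_antisymm (hup n hn) ?_
      have hlt : n < 2 ^ n := (Nat.lt_two_pow_self (n := n))
      set s : ℕ := 2 ^ n - n with hs
      have hns : n + s = 2 ^ n := by omega
      have hs1 : 1 ≤ s := by omega
      have h1 : (m * r ^ n) * (m * r ^ s) ≤ c n * (m * r ^ s) := by
        have h2 : m * c (n + s) ≤ c n * c s := key n s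
        have h3 : c n * c s ≤ c n * (m * r ^ s) :=
          mul_le_mul_of_nonneg_left (hup s hs1) (hc0 n)
        calc (m * r ^ n) * (m * r ^ s) = m * (m * r ^ (n + s)) := by rw [pow_add]; ring
          _ = m * c (n + s) := by rw [hns, hpow2 n]
          _ ≤ c n * c s := h2
          _ ≤ c n * (m * r ^ s) := h3
      exact le_of_mul_le_mul_right h1 (by positivity)
  -- conclude the limit
  have hfinal : (fun n : ℕ => m ^ ((n : ℝ)⁻¹) * r)
      =ᶠ[atTop] (fun n : ℕ => q (a ^ n) ^ ((n : ℝ)⁻¹)) := by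
    filter_upwards [eventually_ge_atTop 1] with n hn
    have hne : ((n : ℝ)) ≠ 0 := by exact_mod_cast Nat.one_le_iff_ne_zero.mp hn
    have h1 : q (a ^ n) = m * r ^ n := hcn n hn
    rw [h1, Real.mul_rpow hm.le (pow_nonneg hr0 n), ← Real.rpow_natCast r n,
      ← Real.rpow_mul hr0, mul_inv_cancel₀ hne, Real.rpow_one]
  have hexp : Tendsto (fun n : ℕ => ((n : ℝ))⁻¹) atTop (𝓝 0) :=
    tendsto_inv_atTop_zero.comp tendsto_natCast_atTop_atTop
  have hT : Tendsto (fun n : ℕ => m ^ ((n : ℝ)⁻¹) * r) atTop (𝓝 (1 * r)) := by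
    have := (Filter.Tendsto.rpow
      (tendsto_const_nhds : Tendsto (fun _ : ℕ => m) atTop (𝓝 m))
      hexp (Or.inl hm.ne')).mul_const r
    simpa [Real.rpow_zero] using this
  rw [one_mul] at hT
  exact hT.congr' hfinal
end
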